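/- arXiv:2203.15740 — 5 statements merged into one kernel-verified Lean document; each statement's English description precedes it below -/
import Mathlib

section
/- Let θ₁, θ₂ ∈ (0,1] and let K be a CZX kernel on ℝ² with constant C_K. Then there is a constant C, depending only on C_K and θ₂, such that for every x = (x¹,x²) ∈ ℝ² and every y² ∈ ℝ with y² ≠ x², one has ∫_ℝ |K(x,(y¹,y²))| dy¹ ≤ C / |x²−y²|. -/
open MeasureTheory Real Set Filter
open scoped ENNReal NNReal

noncomputable section

/-- The decay factor `D_θ(x,y)` appearing in the definition of CZX kernels. -/
def Dfac (θ : ℝ) (x y : ℝ × ℝ) : ℝ :=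
  (|x.1 - y.1| / |x.2 - y.2| + |x.2 - y.2| / |x.1 - y.1|) ^ (-θ)

/-- A CZX kernel on `ℝ²` with Hölder exponent `θ₁`, decay exponent `θ₂` and constant `C`. -/
structure IsCZXKernel (θ₁ θ₂ C : ℝ) (K : ℝ × ℝ → ℝ × ℝ → ℂ) : Prop where
  meas : Measurable fun p : (ℝ × ℝ) × (ℝ × ℝ) => K p.1 p.2
  size : ∀ x y : ℝ × ℝ, x.1 ≠ y.1 → x.2 ≠ y.2 →
    ‖K x y‖ ≤ C * (1 / |x.1 - y.1|) * (1 / |x.2 - y.2|) * Dfac θ₂ x y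
  holder_x1 : ∀ x y : ℝ × ℝ, ∀ w : ℝ, x.1 ≠ y.1 → x.2 ≠ y.2 → |x.1 - w| ≤ |x.1 - y.1| / 2 →
    ‖K x y - K (w, x.2) y‖ ≤
      C * (|x.1 - w| ^ θ₁ / |x.1 - y.1| ^ (1 + θ₁)) * (1 / |x.2 - y.2|) * Dfac θ₂ x y
  holder_x2 : ∀ x y : ℝ × ℝ, ∀ w : ℝ, x.1 ≠ y.1 → x.2 ≠ y.2 → |x.2 - w| ≤ |x.2 - y.2| / 2 →
    ‖K x y - K (x.1, w) y‖ ≤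
      C * (1 / |x.1 - y.1|) * (|x.2 - w| ^ θ₁ / |x.2 - y.2| ^ (1 + θ₁)) * Dfac θ₂ x y
  holder_y1 : ∀ x y : ℝ × ℝ, ∀ w : ℝ, x.1 ≠ y.1 → x.2 ≠ y.2 → |y.1 - w| ≤ |x.1 - y.1| / 2 →
    ‖K x y - K x (w, y.2)‖ ≤
      C * (|y.1 - w| ^ θ₁ / |x.1 - y.1| ^ (1 + θ₁)) * (1 / |x.2 - y.2|) * Dfac θ₂ x y
  holder_y2 : ∀ x y : ℝ × ℝ, ∀ w : ℝ, x.1 ≠ y.1 → x.2 ≠ y.2 → |y.2 - w| ≤ |x.2 - y.2| / 2 →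
    ‖K x y - K x (y.1, w)‖ ≤
      C * (1 / |x.1 - y.1|) * (|y.2 - w| ^ θ₁ / |x.2 - y.2| ^ (1 + θ₁)) * Dfac θ₂ x y

/-- The axes-parallel square with centre `c` and side length `ℓ`. -/
def sqr (c : ℝ × ℝ) (ℓ : ℝ) : Set (ℝ × ℝ) :=
  Icc (c.1 - ℓ / 2) (c.1 + ℓ / 2) ×ˢ Icc (c.2 - ℓ / 2) (c.2 + ℓ / 2)

/-- Reflection/translation: integrating `f ∘ |c - ·|` over `ℝ` gives twice the
integral of `f` over `(0,∞)`. -/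
lemma lintegral_abs_sub_eq (f : ℝ → ℝ≥0∞) (hf : Measurable f) (c : ℝ) :
    ∫⁻ t : ℝ, f |c - t| = 2 * ∫⁻ s in Ioi (0:ℝ), f s := by
  have habs : Measurable fun s : ℝ => f |s| := hf.comp measurable_abs
  have h1 : ∫⁻ t : ℝ, f |c - t| = ∫⁻ s : ℝ, f |s| :=
    (Measure.measurePreserving_sub_left volume c).lintegral_comp habs
  have h2 : ∫⁻ s : ℝ, f |s| = (∫⁻ s in Iio (0:ℝ), f |s|) + ∫⁻ s in Ici (0:ℝ), f |s| := by
    rw [← lintegral_add_compl (fun s : ℝ => f |s|) measurableSet_Iio, compl_Iio]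
  have h3 : ∫⁻ s in Ici (0:ℝ), f |s| = ∫⁻ s in Ioi (0:ℝ), f s := by
    rw [← setLIntegral_congr (Ioi_ae_eq_Ici (a := (0:ℝ)))]
    refine setLIntegral_congr_fun measurableSet_Ioi ?_
    intro s hs; simp only [abs_of_pos (mem_Ioi.mp hs)]
  have h4 : ∫⁻ s in Iio (0:ℝ), f |s| = ∫⁻ s in Ioi (0:ℝ), f s := by
    have hneg : MeasurePreserving (fun s : ℝ => -s) volume volume :=
      Measure.measurePreserving_neg volume
    have hemb : MeasurableEmbedding (fun s : ℝ => -s) :=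
      (Homeomorph.neg ℝ).measurableEmbedding
    have hpre : (fun s : ℝ => -s) ⁻¹' (Ioi 0) = Iio 0 := by ext s; simp
    calc ∫⁻ s in Iio (0:ℝ), f |s|
        = ∫⁻ s in (fun s : ℝ => -s) ⁻¹' (Ioi 0), f |(-s)| := by
          rw [hpre]
          exact setLIntegral_congr_fun measurableSet_Iio
            (fun s _ => by simp only [abs_neg])
      _ = ∫⁻ u in Ioi (0:ℝ), f |u| :=
          hneg.setLIntegral_comp_preimage_emb hemb (fun u => f |u|) (Ioi 0)
      _ = ∫⁻ u in Ioi (0:ℝ), f u :=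
          setLIntegral_congr_fun measurableSet_Ioi
            (fun u hu => by simp only [abs_of_pos (mem_Ioi.mp hu)])
  rw [h1, h2, h3, h4, two_mul]

lemma lint_Ioc_rpow (b θ c : ℝ) (hb : 0 < b) (hθ : 0 < θ) (hθ1 : θ ≤ 1) (hc : 0 ≤ c) :
    ∫⁻ a in Ioc (0:ℝ) b, ENNReal.ofReal (c * a ^ (θ - 1)) =
      ENNReal.ofReal (c * (b ^ θ / θ)) := by
  have hInt : IntegrableOn (fun a : ℝ => a ^ (θ - 1)) (Ioc 0 b) :=
    (intervalIntegral.intervalIntegrable_rpow' (a := 0) (b := b) (by linarith)).1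
  have hInt' : IntegrableOn (fun a : ℝ => c * a ^ (θ - 1)) (Ioc 0 b) := hInt.const_mul c
  rw [← ofReal_integral_eq_lintegral_ofReal hInt'
      (ae_restrict_of_forall_mem measurableSet_Ioc fun a ha =>
        mul_nonneg hc (Real.rpow_nonneg ha.1.le _))]
  congr 1
  rw [integral_const_mul]
  have : ∫ a in Ioc (0:ℝ) b, a ^ (θ - 1) = b ^ θ / θ := by
    rw [← intervalIntegral.integral_of_le hb.le,
      integral_rpow (Or.inl (by linarith : (-1:ℝ) < θ - 1))]
    have : θ - 1 + 1 = θ := by ring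
    rw [this, Real.zero_rpow hθ.ne']
    ring
  rw [this]

lemma lint_Ioi_rpow (b θ c : ℝ) (hb : 0 < b) (hθ : 0 < θ) (hc : 0 ≤ c) :
    ∫⁻ a in Ioi b, ENNReal.ofReal (c * a ^ (-1 - θ)) =
      ENNReal.ofReal (c * (b ^ (-θ) / θ)) := by
  have hlt : (-1 - θ : ℝ) < -1 := by linarith
  have hInt : IntegrableOn (fun a : ℝ => a ^ (-1 - θ)) (Ioi b) :=
    integrableOn_Ioi_rpow_of_lt hlt hb
  have hInt' : IntegrableOn (fun a : ℝ => c * a ^ (-1 - θ)) (Ioi b) := hInt.const_mul c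
  rw [← ofReal_integral_eq_lintegral_ofReal hInt'
      (ae_restrict_of_forall_mem measurableSet_Ioi fun a ha =>
        mul_nonneg hc (Real.rpow_nonneg (hb.trans ha).le _))]
  congr 1
  rw [integral_const_mul, integral_Ioi_rpow_of_lt hlt hb]
  congr 1
  have h1 : (-1 - θ + 1 : ℝ) = -θ := by ring
  rw [h1]
  field_simp

/-- Pointwise bound on the decay factor. -/
lemma Dfac_min_bound (θ : ℝ) (hθ : 0 < θ) {a b : ℝ} (ha : 0 < a) (hb : 0 < b) :
    1 / a * (a / b + b / a) ^ (-θ) ≤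
      min (b ^ (-θ) * a ^ (θ - 1)) (b ^ θ * a ^ (-1 - θ)) := by
  have haθ : (0:ℝ) < a ^ θ := Real.rpow_pos_of_pos ha θ
  have hbθ : (0:ℝ) < b ^ θ := Real.rpow_pos_of_pos hb θ
  refine le_min ?_ ?_
  · have h1 : (a / b + b / a) ^ (-θ) ≤ (b / a) ^ (-θ) :=
      Real.rpow_le_rpow_of_nonpos (by positivity)
        (le_add_of_nonneg_left (by positivity)) (by linarith)
    have h2 : 1 / a * (b / a) ^ (-θ) = b ^ (-θ) * a ^ (θ - 1) := by
      have e1 : a ^ (θ - 1) = a ^ θ / a := by rw [Real.rpow_sub ha, Real.rpow_one]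
      rw [Real.div_rpow hb.le ha.le, Real.rpow_neg ha.le, Real.rpow_neg hb.le, e1]
      field_simp
    calc 1 / a * (a / b + b / a) ^ (-θ) ≤ 1 / a * (b / a) ^ (-θ) :=
          mul_le_mul_of_nonneg_left h1 (by positivity)
      _ = b ^ (-θ) * a ^ (θ - 1) := h2
  · have h1 : (a / b + b / a) ^ (-θ) ≤ (a / b) ^ (-θ) :=
      Real.rpow_le_rpow_of_nonpos (by positivity)
        (le_add_of_nonneg_right (by positivity)) (by linarith)
    have h2 : 1 / a * (a / b) ^ (-θ) = b ^ θ * a ^ (-1 - θ) := by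
      have hs : (-1 - θ : ℝ) = -(1 + θ) := by ring
      have e1 : a ^ (-1 - θ) = (a * a ^ θ)⁻¹ := by
        rw [hs, Real.rpow_neg ha.le, Real.rpow_add ha, Real.rpow_one]
      rw [Real.div_rpow ha.le hb.le, Real.rpow_neg ha.le, Real.rpow_neg hb.le, e1]
      field_simp
    calc 1 / a * (a / b + b / a) ^ (-θ) ≤ 1 / a * (a / b) ^ (-θ) :=
          mul_le_mul_of_nonneg_left h1 (by positivity)
      _ = b ^ θ * a ^ (-1 - θ) := h2


/-- for a CZX kernel, `∫_ℝ |K(x,(y¹,y²))| dy¹ ≤ C / |x²−y²|`,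
with `C` depending only on `C_K` and `θ₂`. -/
theorem statement0 (θ₂ : ℝ) (hθ₂ : θ₂ ∈ Ioc (0:ℝ) 1) (CK : ℝ) (hCK : 0 < CK) :
    ∃ C : ℝ, 0 < C ∧ ∀ θ₁ : ℝ, θ₁ ∈ Ioc (0:ℝ) 1 →
      ∀ K : ℝ × ℝ → ℝ × ℝ → ℂ, IsCZXKernel θ₁ θ₂ CK K →
      ∀ x : ℝ × ℝ, ∀ y₂ : ℝ, y₂ ≠ x.2 →
        ∫⁻ y₁ : ℝ, (‖K x (y₁, y₂)‖₊ : ℝ≥0∞) ≤ ENNReal.ofReal (C / |x.2 - y₂|) := by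
  refine ⟨4 * CK / θ₂, div_pos (by positivity) hθ₂.1, ?_⟩
  intro θ₁ hθ₁ K hK x y₂ hy₂
  set b := |x.2 - y₂| with hbdef
  have hb : 0 < b := abs_pos.mpr (sub_ne_zero.mpr (Ne.symm hy₂))
  have hf : Measurable (fun a : ℝ =>
      ENNReal.ofReal (CK * b⁻¹ * min (b ^ (-θ₂) * a ^ (θ₂ - 1)) (b ^ θ₂ * a ^ (-1 - θ₂)))) := by
    measurability
  have step1 : ∫⁻ y₁ : ℝ, (‖K x (y₁, y₂)‖₊ : ℝ≥0∞) ≤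
      ∫⁻ y₁ : ℝ, ENNReal.ofReal (CK * b⁻¹ *
        min (b ^ (-θ₂) * |x.1 - y₁| ^ (θ₂ - 1)) (b ^ θ₂ * |x.1 - y₁| ^ (-1 - θ₂))) := by
    refine lintegral_mono_ae ?_
    have h0 : ∀ᵐ y₁ : ℝ, y₁ ≠ x.1 := by
      have hs : {a : ℝ | ¬ a ≠ x.1} = {x.1} := by ext a; simp
      rw [ae_iff, hs]; exact measure_singleton _
    filter_upwards [h0] with y₁ hy₁
    have ha : 0 < |x.1 - y₁| := abs_pos.mpr (sub_ne_zero.mpr (Ne.symm hy₁))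
    have hsz := hK.size x (y₁, y₂) (Ne.symm hy₁) (Ne.symm hy₂)
    rw [← ENNReal.ofReal_coe_nnreal, coe_nnnorm]
    refine ENNReal.ofReal_le_ofReal (le_trans hsz ?_)
    show CK * (1 / |x.1 - y₁|) * (1 / |x.2 - y₂|) *
        ((|x.1 - y₁| / |x.2 - y₂| + |x.2 - y₂| / |x.1 - y₁|) ^ (-θ₂)) ≤
      CK * b⁻¹ * min (b ^ (-θ₂) * |x.1 - y₁| ^ (θ₂ - 1)) (b ^ θ₂ * |x.1 - y₁| ^ (-1 - θ₂))
    rw [← hbdef]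
    calc CK * (1 / |x.1 - y₁|) * (1 / b) * ((|x.1 - y₁| / b + b / |x.1 - y₁|) ^ (-θ₂))
        = CK * b⁻¹ * (1 / |x.1 - y₁| * (|x.1 - y₁| / b + b / |x.1 - y₁|) ^ (-θ₂)) := by
          ring
      _ ≤ CK * b⁻¹ *
          min (b ^ (-θ₂) * |x.1 - y₁| ^ (θ₂ - 1)) (b ^ θ₂ * |x.1 - y₁| ^ (-1 - θ₂)) :=
          mul_le_mul_of_nonneg_left (Dfac_min_bound θ₂ hθ₂.1 ha hb) (by positivity)
  have step2 : ∫⁻ y₁ : ℝ, ENNReal.ofReal (CK * b⁻¹ *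
        min (b ^ (-θ₂) * |x.1 - y₁| ^ (θ₂ - 1)) (b ^ θ₂ * |x.1 - y₁| ^ (-1 - θ₂))) =
      2 * ∫⁻ s in Ioi (0:ℝ), ENNReal.ofReal (CK * b⁻¹ *
        min (b ^ (-θ₂) * s ^ (θ₂ - 1)) (b ^ θ₂ * s ^ (-1 - θ₂))) :=
    lintegral_abs_sub_eq (fun a : ℝ => ENNReal.ofReal (CK * b⁻¹ *
      min (b ^ (-θ₂) * a ^ (θ₂ - 1)) (b ^ θ₂ * a ^ (-1 - θ₂)))) hf x.1
  have hc0 : (0:ℝ) ≤ CK * b⁻¹ := by positivity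
  have hbθ : (0:ℝ) < b ^ θ₂ := Real.rpow_pos_of_pos hb _
  have hkey : ∫⁻ s in Ioi (0:ℝ), ENNReal.ofReal (CK * b⁻¹ *
        min (b ^ (-θ₂) * s ^ (θ₂ - 1)) (b ^ θ₂ * s ^ (-1 - θ₂))) ≤
      ENNReal.ofReal (CK / (θ₂ * b)) + ENNReal.ofReal (CK / (θ₂ * b)) := by
    have hsplit : ∫⁻ s in Ioi (0:ℝ), ENNReal.ofReal (CK * b⁻¹ *
          min (b ^ (-θ₂) * s ^ (θ₂ - 1)) (b ^ θ₂ * s ^ (-1 - θ₂))) ≤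
        (∫⁻ s in Ioc (0:ℝ) b, ENNReal.ofReal (CK * b⁻¹ *
          min (b ^ (-θ₂) * s ^ (θ₂ - 1)) (b ^ θ₂ * s ^ (-1 - θ₂)))) +
        ∫⁻ s in Ioi b, ENNReal.ofReal (CK * b⁻¹ *
          min (b ^ (-θ₂) * s ^ (θ₂ - 1)) (b ^ θ₂ * s ^ (-1 - θ₂))) := by
      rw [← Ioc_union_Ioi_eq_Ioi hb.le]
      exact lintegral_union_le _ _ _
    refine hsplit.trans (add_le_add ?_ ?_)
    · have hle : ∫⁻ s in Ioc (0:ℝ) b, ENNReal.ofReal (CK * b⁻¹ *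
            min (b ^ (-θ₂) * s ^ (θ₂ - 1)) (b ^ θ₂ * s ^ (-1 - θ₂))) ≤
          ∫⁻ s in Ioc (0:ℝ) b, ENNReal.ofReal (CK * b⁻¹ * b ^ (-θ₂) * s ^ (θ₂ - 1)) := by
        refine lintegral_mono fun s => ENNReal.ofReal_le_ofReal ?_
        calc CK * b⁻¹ * min (b ^ (-θ₂) * s ^ (θ₂ - 1)) (b ^ θ₂ * s ^ (-1 - θ₂))
            ≤ CK * b⁻¹ * (b ^ (-θ₂) * s ^ (θ₂ - 1)) :=
              mul_le_mul_of_nonneg_left (min_le_left _ _) hc0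
          _ = CK * b⁻¹ * b ^ (-θ₂) * s ^ (θ₂ - 1) := by ring
      refine hle.trans ?_
      rw [lint_Ioc_rpow b θ₂ _ hb hθ₂.1 hθ₂.2 (by positivity)]
      refine ENNReal.ofReal_le_ofReal (le_of_eq ?_)
      rw [Real.rpow_neg hb.le]
      field_simp [hbθ.ne']
    · have hle : ∫⁻ s in Ioi b, ENNReal.ofReal (CK * b⁻¹ *
            min (b ^ (-θ₂) * s ^ (θ₂ - 1)) (b ^ θ₂ * s ^ (-1 - θ₂))) ≤
          ∫⁻ s in Ioi b, ENNReal.ofReal (CK * b⁻¹ * b ^ θ₂ * s ^ (-1 - θ₂)) := by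
        refine lintegral_mono fun s => ENNReal.ofReal_le_ofReal ?_
        calc CK * b⁻¹ * min (b ^ (-θ₂) * s ^ (θ₂ - 1)) (b ^ θ₂ * s ^ (-1 - θ₂))
            ≤ CK * b⁻¹ * (b ^ θ₂ * s ^ (-1 - θ₂)) :=
              mul_le_mul_of_nonneg_left (min_le_right _ _) hc0
          _ = CK * b⁻¹ * b ^ θ₂ * s ^ (-1 - θ₂) := by ring
      refine hle.trans ?_
      rw [lint_Ioi_rpow b θ₂ _ hb hθ₂.1 (by positivity)]
      refine ENNReal.ofReal_le_ofReal (le_of_eq ?_)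
      rw [Real.rpow_neg hb.le]
      field_simp [hbθ.ne']
  calc ∫⁻ y₁ : ℝ, (‖K x (y₁, y₂)‖₊ : ℝ≥0∞)
      ≤ 2 * ∫⁻ s in Ioi (0:ℝ), ENNReal.ofReal (CK * b⁻¹ *
          min (b ^ (-θ₂) * s ^ (θ₂ - 1)) (b ^ θ₂ * s ^ (-1 - θ₂))) := by
        rw [← step2]; exact step1
    _ ≤ 2 * (ENNReal.ofReal (CK / (θ₂ * b)) + ENNReal.ofReal (CK / (θ₂ * b))) :=
        mul_le_mul_right hkey 2
    _ = ENNReal.ofReal (4 * CK / θ₂ / b) := by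
        rw [← ENNReal.ofReal_add (div_nonneg hCK.le (mul_nonneg hθ₂.1.le hb.le)) (div_nonneg hCK.le (mul_nonneg hθ₂.1.le hb.le))]
        rw [show (2 : ℝ≥0∞) = ENNReal.ofReal (2:ℝ) by norm_num]
        rw [← ENNReal.ofReal_mul (by norm_num)]
        congr 1
        field_simp [hθ₂.1.ne']
        ring
end
end

section
/- Let θ₁, θ₂ ∈ (0,1] and let K be a CZX kernel on ℝ² with constant C_K. Let J = J¹×J² ⊂ ℝ² be an axes-parallel square with side length ℓ(J) and centre c_J = (c_{J¹}, c_{J²}). Then there is a constant C, depending only on C_K, θ₁ and θ₂, such that for all x ∈ J and all y = (y¹,y²) with y¹ ∉ 3J¹ and y² ∉ 3J², |K(x,y) − K(c_J,y)| ≤ C · [1/(dist(y¹,J¹)·dist(y²,J²))] · ℓ(J)^{θ₁} · (min_{i=1,2} dist(y^i,J^i))^{θ₂−θ₁} / (max_{i=1,2} dist(y^i,J^i))^{θ₂}. In particular, with θ := (1/2)·min(θ₁,θ₂), |K(x,y) − K(c_J,y)| ≤ C · ∏_{i=1,2} ℓ(J)^{θ} / dist(y^i,J^i)^{1+θ}.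 -/
open MeasureTheory Real Set Filter
open scoped ENNReal NNReal

noncomputable section


lemma distf (c ℓ y t : ℝ) (hℓ : 0 < ℓ) (ht : t ∈ Icc (c - ℓ/2) (c + ℓ/2))
    (hy : y ∉ Icc (c - 3*ℓ/2) (c + 3*ℓ/2)) :
    ℓ ≤ Metric.infDist y (Icc (c - ℓ/2) (c + ℓ/2)) ∧
    Metric.infDist y (Icc (c - ℓ/2) (c + ℓ/2)) ≤ |t - y| ∧
    |t - y| ≤ 2 * Metric.infDist y (Icc (c - ℓ/2) (c + ℓ/2)) := by
  set d := Metric.infDist y (Icc (c - ℓ/2) (c + ℓ/2)) with hd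
  have hne : (Icc (c - ℓ/2) (c + ℓ/2)).Nonempty := ⟨c, by constructor <;> linarith⟩
  have hyc : 3*ℓ/2 ≤ |y - c| := by
    simp only [mem_Icc, not_and_or, not_le] at hy
    rcases hy with h | h <;> rcases abs_cases (y - c) with ⟨he, hs⟩ | ⟨he, hs⟩ <;> linarith
  have hlow : |y - c| - ℓ/2 ≤ d := by
    by_contra hcon
    push_neg at hcon
    rw [hd, Metric.infDist_lt_iff hne] at hcon
    obtain ⟨z, hz, hz2⟩ := hcon
    rw [Real.dist_eq] at hz2
    have h1 : |y - c| ≤ |y - z| + |z - c| := abs_sub_le _ _ _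
    have h2 : |z - c| ≤ ℓ/2 := by
      rcases abs_cases (z - c) with ⟨he, hs⟩ | ⟨he, hs⟩ <;>
        · obtain ⟨hz1, hz3⟩ := hz; linarith
    linarith
  have hub : d ≤ |t - y| := by
    have := Metric.infDist_le_dist_of_mem (x := y) ht
    rw [Real.dist_eq, abs_sub_comm] at this
    exact this
  have htc : |t - c| ≤ ℓ/2 := by
    rcases abs_cases (t - c) with ⟨he, hs⟩ | ⟨he, hs⟩ <;>
      · obtain ⟨ht1, ht2⟩ := ht; linarith
  have hty : |t - y| ≤ |t - c| + |c - y| := abs_sub_le _ _ _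
  have hcy : |c - y| = |y - c| := abs_sub_comm _ _
  refine ⟨by linarith, hub, by linarith⟩

lemma key (θ₁ θ₂ : ℝ) (hθ₁ : θ₁ ∈ Ioc (0:ℝ) 1) (hθ₂ : θ₂ ∈ Ioc (0:ℝ) 1)
    (ℓ d₁ d₂ a b s : ℝ) (hℓ : 0 < ℓ) (h1 : ℓ ≤ d₁) (h2 : ℓ ≤ d₂)
    (ha1 : d₁ ≤ a) (ha2 : a ≤ 2*d₁) (hb1 : d₂ ≤ b) (hb2 : b ≤ 2*d₂)
    (hs : 0 ≤ s) (hs2 : s ≤ ℓ) :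
    s^θ₁ / a^(1+θ₁) * (1/b) * (a/b + b/a)^(-θ₂) ≤
      4 * ((1/(d₁*d₂)) * (ℓ^θ₁ * (min d₁ d₂)^(θ₂-θ₁) / (max d₁ d₂)^θ₂)) := by
  obtain ⟨hθ₁0, hθ₁1⟩ := hθ₁
  obtain ⟨hθ₂0, hθ₂1⟩ := hθ₂
  have hd₁ : 0 < d₁ := hℓ.trans_le h1
  have hd₂ : 0 < d₂ := hℓ.trans_le h2
  have ha0 : 0 < a := hd₁.trans_le ha1
  have hb0 : 0 < b := hd₂.trans_le hb1
  set m := min d₁ d₂ with hm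
  set M := max d₁ d₂ with hM
  have hm0 : 0 < m := lt_min hd₁ hd₂
  have hM0 : 0 < M := lt_of_lt_of_le hd₁ (le_max_left _ _)
  have hmM : m ≤ M := min_le_max
  have ht : M/(2*m) ≤ a/b + b/a := by
    rcases le_total d₁ d₂ with h | h
    · have hm' : m = d₁ := min_eq_left h
      have hM' : M = d₂ := max_eq_right h
      have h3 : d₂/(2*d₁) ≤ b/a := div_le_div₀ hb0.le hb1 (by linarith) ha2
      have hab : 0 ≤ a/b := by positivity
      rw [hm', hM']; linarith
    · have hm' : m = d₂ := min_eq_right h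
      have hM' : M = d₁ := max_eq_left h
      have h3 : d₁/(2*d₂) ≤ a/b := div_le_div₀ ha0.le ha1 (by linarith) hb2
      have hba : 0 ≤ b/a := by positivity
      rw [hm', hM']; linarith
  have hq0 : 0 < M/(2*m) := by positivity
  have hD : (a/b + b/a)^(-θ₂) ≤ (M/(2*m))^(-θ₂) :=
    rpow_le_rpow_of_nonpos hq0 ht (by linarith)
  have hD2 : (M/(2*m))^(-θ₂) = 2^θ₂ * m^θ₂ / M^θ₂ := by
    rw [Real.rpow_neg hq0.le, ← Real.inv_rpow hq0.le, inv_div,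
      Real.div_rpow (by positivity) hM0.le, Real.mul_rpow (by norm_num) hm0.le]
  have h2θ : (2:ℝ)^θ₂ ≤ 2 := by
    calc (2:ℝ)^θ₂ ≤ (2:ℝ)^(1:ℝ) := Real.rpow_le_rpow_of_exponent_le one_le_two hθ₂1
    _ = 2 := Real.rpow_one 2
  have hDfin : (a/b + b/a)^(-θ₂) ≤ 2 * (m^θ₂ / M^θ₂) := by
    rw [hD2] at hD
    calc (a/b + b/a)^(-θ₂) ≤ 2^θ₂ * m^θ₂ / M^θ₂ := hD
    _ = 2^θ₂ * (m^θ₂ / M^θ₂) := by ring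
    _ ≤ 2 * (m^θ₂ / M^θ₂) := mul_le_mul_of_nonneg_right h2θ (by positivity)
  have hmain : s^θ₁/a^(1+θ₁) * (1/b) * (a/b + b/a)^(-θ₂) ≤
      ℓ^θ₁/d₁^(1+θ₁) * (1/d₂) * (2 * (m^θ₂/M^θ₂)) := by
    have hDnn : 0 ≤ (a/b + b/a)^(-θ₂) := Real.rpow_nonneg (by positivity) _
    apply mul_le_mul _ hDfin hDnn (by positivity)
    apply mul_le_mul _ _ (by positivity) (by positivity)
    · exact div_le_div₀ (by positivity) (Real.rpow_le_rpow hs hs2 hθ₁0.le)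
        (by positivity) (Real.rpow_le_rpow hd₁.le ha1 (by linarith))
    · exact one_div_le_one_div_of_le hd₂ hb1
  have hid : ℓ^θ₁/d₁^(1+θ₁) * (1/d₂) * (2 * (m^θ₂/M^θ₂)) =
      2 * ((1/(d₁*d₂)) * (ℓ^θ₁ * m^(θ₂-θ₁) / M^θ₂)) * (m^θ₁/d₁^θ₁) := by
    have e1 : d₁^(1+θ₁) = d₁ * d₁^θ₁ := by
      rw [Real.rpow_add hd₁, Real.rpow_one]
    have e2 : m^θ₂ = m^(θ₂-θ₁) * m^θ₁ := by
      rw [← Real.rpow_add hm0]; congr 1; ring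
    rw [e1, e2]
    have h1' : d₁^θ₁ ≠ 0 := by positivity
    have h2' : M^θ₂ ≠ 0 := by positivity
    field_simp
  have hfrac : m^θ₁/d₁^θ₁ ≤ 1 := by
    rw [div_le_one (by positivity)]
    exact Real.rpow_le_rpow hm0.le (min_le_left _ _) hθ₁0.le
  have hA : (0:ℝ) ≤ 2 * ((1/(d₁*d₂)) * (ℓ^θ₁ * m^(θ₂-θ₁) / M^θ₂)) := by positivity
  calc s^θ₁/a^(1+θ₁) * (1/b) * (a/b + b/a)^(-θ₂)
      ≤ ℓ^θ₁/d₁^(1+θ₁) * (1/d₂) * (2 * (m^θ₂/M^θ₂)) := hmain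
    _ = 2 * ((1/(d₁*d₂)) * (ℓ^θ₁ * m^(θ₂-θ₁) / M^θ₂)) * (m^θ₁/d₁^θ₁) := hid
    _ ≤ 2 * ((1/(d₁*d₂)) * (ℓ^θ₁ * m^(θ₂-θ₁) / M^θ₂)) * 1 :=
        mul_le_mul_of_nonneg_left hfrac hA
    _ ≤ 4 * ((1/(d₁*d₂)) * (ℓ^θ₁ * m^(θ₂-θ₁) / M^θ₂)) := by
        rw [mul_one]; nlinarith
  
lemma key2 (θ₁ θ₂ : ℝ) (hθ₁ : θ₁ ∈ Ioc (0:ℝ) 1) (hθ₂ : θ₂ ∈ Ioc (0:ℝ) 1)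
    (ℓ d₁ d₂ : ℝ) (hℓ : 0 < ℓ) (h1 : ℓ ≤ d₁) (h2 : ℓ ≤ d₂) :
    (1/(d₁*d₂)) * (ℓ^θ₁ * (min d₁ d₂)^(θ₂-θ₁) / (max d₁ d₂)^θ₂) ≤
      (ℓ^(min θ₁ θ₂/2)/d₁^(1+min θ₁ θ₂/2)) * (ℓ^(min θ₁ θ₂/2)/d₂^(1+min θ₁ θ₂/2)) := by
  obtain ⟨hθ₁0, hθ₁1⟩ := hθ₁
  obtain ⟨hθ₂0, hθ₂1⟩ := hθ₂
  set μ := min θ₁ θ₂ with hμdef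
  set θ := μ/2 with hθdef
  have hμ0 : 0 < μ := lt_min hθ₁0 hθ₂0
  have hθ0 : 0 < θ := by positivity
  have hμθ₁ : μ ≤ θ₁ := min_le_left _ _
  have hμθ₂ : μ ≤ θ₂ := min_le_right _ _
  have hd₁ : 0 < d₁ := hℓ.trans_le h1
  have hd₂ : 0 < d₂ := hℓ.trans_le h2
  set m := min d₁ d₂ with hm
  set M := max d₁ d₂ with hM
  have hm0 : 0 < m := lt_min hd₁ hd₂
  have hM0 : 0 < M := lt_of_lt_of_le hd₁ (le_max_left _ _)
  have hmM : m ≤ M := min_le_max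
  have hℓm : ℓ ≤ m := le_min h1 h2
  -- numerator bound
  have hnum : ℓ^θ₁ * m^(θ₂-θ₁) ≤ ℓ^μ * M^(θ₂-μ) := by
    have e1 : ℓ^θ₁ = ℓ^μ * ℓ^(θ₁-μ) := by
      rw [← Real.rpow_add hℓ]; congr 1; ring
    have e2 : m^(θ₁-μ) * m^(θ₂-θ₁) = m^(θ₂-μ) := by
      rw [← Real.rpow_add hm0]; congr 1; ring
    calc ℓ^θ₁ * m^(θ₂-θ₁) = ℓ^μ * (ℓ^(θ₁-μ) * m^(θ₂-θ₁)) := by rw [e1]; ring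
      _ ≤ ℓ^μ * (m^(θ₁-μ) * m^(θ₂-θ₁)) := by
          apply mul_le_mul_of_nonneg_left _ (by positivity)
          exact mul_le_mul_of_nonneg_right
            (Real.rpow_le_rpow hℓ.le hℓm (by linarith)) (by positivity)
      _ = ℓ^μ * m^(θ₂-μ) := by rw [e2]
      _ ≤ ℓ^μ * M^(θ₂-μ) := by
          apply mul_le_mul_of_nonneg_left _ (by positivity)
          exact Real.rpow_le_rpow hm0.le hmM (by linarith)
  have hMsplit : M^θ₂ = M^(θ₂-μ) * M^μ := by
    rw [← Real.rpow_add hM0]; congr 1; ring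
  have hMμ : d₁^θ * d₂^θ ≤ M^μ := by
    have e : M^μ = M^θ * M^θ := by
      rw [← Real.rpow_add hM0]; congr 1; rw [hθdef]; ring
    rw [e]
    exact mul_le_mul (Real.rpow_le_rpow hd₁.le (le_max_left _ _) hθ0.le)
      (Real.rpow_le_rpow hd₂.le (le_max_right _ _) hθ0.le) (by positivity) (by positivity)
  have step1 : (1/(d₁*d₂)) * (ℓ^θ₁ * m^(θ₂-θ₁) / M^θ₂) ≤
      (1/(d₁*d₂)) * (ℓ^μ * M^(θ₂-μ) / M^θ₂) := by
    apply mul_le_mul_of_nonneg_left _ (by positivity)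
    exact div_le_div₀ (by positivity) hnum (by positivity) le_rfl
  have step2 : (1/(d₁*d₂)) * (ℓ^μ * M^(θ₂-μ) / M^θ₂) = (1/(d₁*d₂)) * (ℓ^μ / M^μ) := by
    rw [hMsplit]
    have hne1 : M^(θ₂-μ) ≠ 0 := by positivity
    field_simp
  have step3 : (1/(d₁*d₂)) * (ℓ^μ / M^μ) ≤ (1/(d₁*d₂)) * (ℓ^μ / (d₁^θ * d₂^θ)) := by
    apply mul_le_mul_of_nonneg_left _ (by positivity)
    exact div_le_div₀ (by positivity) le_rfl (by positivity) hMμ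
  have step4 : (1/(d₁*d₂)) * (ℓ^μ / (d₁^θ * d₂^θ)) = (ℓ^θ/d₁^(1+θ)) * (ℓ^θ/d₂^(1+θ)) := by
    have e1 : ℓ^μ = ℓ^θ * ℓ^θ := by
      rw [← Real.rpow_add hℓ]; congr 1; rw [hθdef]; ring
    have e2 : d₁^(1+θ) = d₁ * d₁^θ := by rw [Real.rpow_add hd₁, Real.rpow_one]
    have e3 : d₂^(1+θ) = d₂ * d₂^θ := by rw [Real.rpow_add hd₂, Real.rpow_one]
    rw [e1, e2, e3]
    have h1' : d₁^θ ≠ 0 := by positivity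
    have h2' : d₂^θ ≠ 0 := by positivity
    field_simp
  calc (1/(d₁*d₂)) * (ℓ^θ₁ * m^(θ₂-θ₁) / M^θ₂)
      ≤ (1/(d₁*d₂)) * (ℓ^μ * M^(θ₂-μ) / M^θ₂) := step1
    _ = (1/(d₁*d₂)) * (ℓ^μ / M^μ) := step2
    _ ≤ (1/(d₁*d₂)) * (ℓ^μ / (d₁^θ * d₂^θ)) := step3
    _ = (ℓ^θ/d₁^(1+θ)) * (ℓ^θ/d₂^(1+θ)) := step4



/-- Lemma 2.3, the Hölder-type estimate away from a square `J`,
in terms of the distances of `y¹, y²` to the component intervals of `J`. -/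
theorem statement2 (θ₁ θ₂ : ℝ) (hθ₁ : θ₁ ∈ Ioc (0:ℝ) 1) (hθ₂ : θ₂ ∈ Ioc (0:ℝ) 1)
    (CK : ℝ) (hCK : 0 < CK) :
    ∃ C : ℝ, 0 < C ∧ ∀ K : ℝ × ℝ → ℝ × ℝ → ℂ, IsCZXKernel θ₁ θ₂ CK K →
      ∀ (c : ℝ × ℝ) (ℓ : ℝ), 0 < ℓ → ∀ x ∈ sqr c ℓ, ∀ y : ℝ × ℝ,
        y.1 ∉ Icc (c.1 - 3 * ℓ / 2) (c.1 + 3 * ℓ / 2) →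
        y.2 ∉ Icc (c.2 - 3 * ℓ / 2) (c.2 + 3 * ℓ / 2) →
        (let d₁ : ℝ := Metric.infDist y.1 (Icc (c.1 - ℓ / 2) (c.1 + ℓ / 2));
         let d₂ : ℝ := Metric.infDist y.2 (Icc (c.2 - ℓ / 2) (c.2 + ℓ / 2));
         let θ : ℝ := min θ₁ θ₂ / 2;
         ‖K x y - K c y‖ ≤
            C * (1 / (d₁ * d₂)) * (ℓ ^ θ₁ * (min d₁ d₂) ^ (θ₂ - θ₁) / (max d₁ d₂) ^ θ₂) ∧
         ‖K x y - K c y‖ ≤ C * (ℓ ^ θ / d₁ ^ (1 + θ)) * (ℓ ^ θ / d₂ ^ (1 + θ))) := by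

  refine ⟨8 * CK, by positivity, ?_⟩
  intro K hK c ℓ hℓ x hx y hy1 hy2
  obtain ⟨hx1, hx2⟩ := hx
  have hc1 : c.1 ∈ Icc (c.1 - ℓ/2) (c.1 + ℓ/2) := by constructor <;> linarith
  have hc2 : c.2 ∈ Icc (c.2 - ℓ/2) (c.2 + ℓ/2) := by constructor <;> linarith
  obtain ⟨hd1ℓ, hd1x, hd1x2⟩ := distf c.1 ℓ y.1 x.1 hℓ hx1 hy1
  obtain ⟨-, hd1c, hd1c2⟩ := distf c.1 ℓ y.1 c.1 hℓ hc1 hy1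
  obtain ⟨hd2ℓ, hd2x, hd2x2⟩ := distf c.2 ℓ y.2 x.2 hℓ hx2 hy2
  obtain ⟨-, hd2c, hd2c2⟩ := distf c.2 ℓ y.2 c.2 hℓ hc2 hy2
  set d₁ := Metric.infDist y.1 (Icc (c.1 - ℓ/2) (c.1 + ℓ/2)) with hd₁def
  set d₂ := Metric.infDist y.2 (Icc (c.2 - ℓ/2) (c.2 + ℓ/2)) with hd₂def
  have hd₁0 : 0 < d₁ := hℓ.trans_le hd1ℓ
  have hd₂0 : 0 < d₂ := hℓ.trans_le hd2ℓ
  have hxc1 : |x.1 - c.1| ≤ ℓ/2 := by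
    rcases abs_cases (x.1 - c.1) with ⟨he, hs⟩ | ⟨he, hs⟩ <;>
      · obtain ⟨h1, h2⟩ := hx1; linarith
  have hxc2 : |x.2 - c.2| ≤ ℓ/2 := by
    rcases abs_cases (x.2 - c.2) with ⟨he, hs⟩ | ⟨he, hs⟩ <;>
      · obtain ⟨h1, h2⟩ := hx2; linarith
  have hxy1pos : 0 < |x.1 - y.1| := hd₁0.trans_le hd1x
  have hxy2pos : 0 < |x.2 - y.2| := hd₂0.trans_le hd2x
  have hcy1pos : 0 < |c.1 - y.1| := hd₁0.trans_le hd1c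
  have hxy1 : x.1 ≠ y.1 := sub_ne_zero.mp (abs_pos.mp hxy1pos)
  have hxy2 : x.2 ≠ y.2 := sub_ne_zero.mp (abs_pos.mp hxy2pos)
  have hcy1 : c.1 ≠ y.1 := sub_ne_zero.mp (abs_pos.mp hcy1pos)
  have T1 := hK.holder_x1 x y c.1 hxy1 hxy2 (by
    have : ℓ ≤ |x.1 - y.1| := hd1ℓ.trans hd1x
    linarith)
  have T2 := hK.holder_x2 (c.1, x.2) y c.2 hcy1 hxy2 (by
    have : ℓ ≤ |x.2 - y.2| := hd2ℓ.trans hd2x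
    simpa using by linarith : |(c.1, x.2).2 - c.2| ≤ |(c.1, x.2).2 - y.2| / 2)
  simp only [Dfac] at T1 T2
  rw [Prod.mk.eta] at T2
  set target : ℝ := (1/(d₁*d₂)) * (ℓ^θ₁ * (min d₁ d₂)^(θ₂-θ₁) / (max d₁ d₂)^θ₂) with htarget
  have htarget0 : 0 ≤ target := by positivity
  have B1 : ‖K x y - K (c.1, x.2) y‖ ≤ CK * (4 * target) := by
    calc ‖K x y - K (c.1, x.2) y‖
        ≤ CK * (|x.1 - c.1|^θ₁ / |x.1 - y.1|^(1+θ₁)) * (1/|x.2 - y.2|) *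
          (|x.1 - y.1|/|x.2 - y.2| + |x.2 - y.2|/|x.1 - y.1|)^(-θ₂) := T1
      _ = CK * ((|x.1 - c.1|^θ₁ / |x.1 - y.1|^(1+θ₁)) * (1/|x.2 - y.2|) *
          ((|x.1 - y.1|/|x.2 - y.2| + |x.2 - y.2|/|x.1 - y.1|)^(-θ₂))) := by ring
      _ ≤ CK * (4 * target) := by
          apply mul_le_mul_of_nonneg_left _ hCK.le
          exact key θ₁ θ₂ hθ₁ hθ₂ ℓ d₁ d₂ _ _ _ hℓ hd1ℓ hd2ℓ hd1x hd1x2 hd2x hd2x2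
            (abs_nonneg _) (by linarith)
  have B2 : ‖K (c.1, x.2) y - K c y‖ ≤ CK * (4 * target) := by
    have hkey := key θ₁ θ₂ hθ₁ hθ₂ ℓ d₂ d₁ |x.2 - y.2| |c.1 - y.1| |x.2 - c.2|
      hℓ hd2ℓ hd1ℓ hd2x hd2x2 hd1c hd1c2 (abs_nonneg _) (by linarith)
    rw [min_comm d₂ d₁, max_comm d₂ d₁, mul_comm d₂ d₁] at hkey
    calc ‖K (c.1, x.2) y - K c y‖
        ≤ CK * (1/|c.1 - y.1|) * (|x.2 - c.2|^θ₁ / |x.2 - y.2|^(1+θ₁)) *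
          (|c.1 - y.1|/|x.2 - y.2| + |x.2 - y.2|/|c.1 - y.1|)^(-θ₂) := T2
      _ = CK * ((|x.2 - c.2|^θ₁ / |x.2 - y.2|^(1+θ₁)) * (1/|c.1 - y.1|) *
          ((|x.2 - y.2|/|c.1 - y.1| + |c.1 - y.1|/|x.2 - y.2|)^(-θ₂))) := by
          rw [add_comm (|c.1 - y.1|/|x.2 - y.2|)]; ring
      _ ≤ CK * (4 * target) := mul_le_mul_of_nonneg_left hkey hCK.le
  have tri : ‖K x y - K c y‖ ≤ ‖K x y - K (c.1, x.2) y‖ + ‖K (c.1, x.2) y - K c y‖ := by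
    have h := dist_triangle (K x y) (K (c.1, x.2) y) (K c y)
    simpa [dist_eq_norm] using h
  have main1 : ‖K x y - K c y‖ ≤ 8 * CK * target := by
    have : CK * (4 * target) + CK * (4 * target) = 8 * CK * target := by ring
    linarith
  refine ⟨?_, ?_⟩
  · calc ‖K x y - K c y‖ ≤ 8 * CK * target := main1
      _ = 8 * CK * (1/(d₁*d₂)) * (ℓ^θ₁ * (min d₁ d₂)^(θ₂-θ₁) / (max d₁ d₂)^θ₂) := by
          rw [htarget]; ring
  · have h2 := key2 θ₁ θ₂ hθ₁ hθ₂ ℓ d₁ d₂ hℓ hd1ℓ hd2ℓ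
    calc ‖K x y - K c y‖ ≤ 8 * CK * target := main1
      _ ≤ 8 * CK * ((ℓ^(min θ₁ θ₂/2)/d₁^(1+min θ₁ θ₂/2)) * (ℓ^(min θ₁ θ₂/2)/d₂^(1+min θ₁ θ₂/2))) :=
          mul_le_mul_of_nonneg_left h2 (by positivity)
      _ = 8 * CK * (ℓ^(min θ₁ θ₂/2)/d₁^(1+min θ₁ θ₂/2)) * (ℓ^(min θ₁ θ₂/2)/d₂^(1+min θ₁ θ₂/2)) := by
          ring
end
end

section
/- Let θ₁, θ₂ ∈ (0,1] and let K be a CZX kernel on ℝ² with constant C_K. Then there is a constant C, depending only on C_K, θ₁ and θ₂, such that for every axes-parallel square J ⊂ ℝ² with centre c_J and every x ∈ J, the Hörmander integral condition ∫_{(3J)^c} |K(x,y) − K(c_J,y)| dy ≤ C holds. -/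
open MeasureTheory Real Set Filter
open scoped ENNReal NNReal

noncomputable section

namespace CZX

lemma lintegral_abs_sub (f : ℝ → ℝ≥0∞) (p : ℝ) :
    ∫⁻ u, f |p - u| = 2 * ∫⁻ t in Ioi (0:ℝ), f t := by
  have h1 : ∫⁻ u, f |p - u| = ∫⁻ u, f |u| := by
    have := lintegral_add_left_eq_self (μ := volume) (fun v => f |v|) (-p)
    rw [← this]
    congr 1
    ext u
    congr 1
    rw [abs_sub_comm]
    ring_nf
  rw [h1, ← lintegral_add_compl (fun u => f |u|) (measurableSet_Iio (a := (0:ℝ)))]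
  have hneg : ∫⁻ u in Iio (0:ℝ), f |u| = ∫⁻ u in Ioi (0:ℝ), f |u| := by
    rw [← lintegral_indicator measurableSet_Iio, ← lintegral_indicator measurableSet_Ioi]
    have := (Measure.measurePreserving_neg (volume : Measure ℝ)).lintegral_comp_emb
      (MeasurableEquiv.neg ℝ).measurableEmbedding
      ((Iio (0:ℝ)).indicator (fun u => f |u|))
    rw [← this]
    congr 1
    ext u
    simp only [Set.indicator_apply, mem_Iio, mem_Ioi, neg_lt_zero, abs_neg]
  have hpos : ∫⁻ u in Ioi (0:ℝ), f |u| = ∫⁻ u in Ioi (0:ℝ), f u := by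
    apply setLIntegral_congr_fun measurableSet_Ioi
    intro u hu; show f |u| = f u
    rw [abs_of_pos hu]
  have hIic : ∫⁻ u in compl (Iio (0:ℝ)), f |u| = ∫⁻ u in Ioi (0:ℝ), f u := by
    rw [compl_Iio]
    rw [← Measure.restrict_congr_set Ioi_ae_eq_Ici, hpos]
  rw [hneg, hpos, hIic, two_mul]

lemma lint_Ioi_rpow (r θ : ℝ) (hr : 0 < r) (hθ : 0 < θ) :
    ∫⁻ t in Ioi r, ENNReal.ofReal (t ^ (-(1+θ))) = ENNReal.ofReal (r ^ (-θ) / θ) := by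
  rw [← ofReal_integral_eq_lintegral_ofReal (integrableOn_Ioi_rpow_of_lt (by linarith) hr)
    (Filter.eventually_of_mem (self_mem_ae_restrict measurableSet_Ioi)
      (fun t ht => rpow_nonneg (le_of_lt (hr.trans ht)) _))]
  rw [integral_Ioi_rpow_of_lt (by linarith) hr]
  congr 1
  rw [show -(1+θ)+1 = -θ by ring]
  rw [div_neg, neg_div, neg_neg]

lemma lint_Ioc_rpow (r θ : ℝ) (hr : 0 < r) (hθ : 0 < θ) :
    ∫⁻ t in Ioc 0 r, ENNReal.ofReal (t ^ (θ-1)) = ENNReal.ofReal (r ^ θ / θ) := by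
  rw [← ofReal_integral_eq_lintegral_ofReal
    ((intervalIntegrable_iff_integrableOn_Ioc_of_le hr.le).1
      (intervalIntegral.intervalIntegrable_rpow' (by linarith)))
    (Filter.eventually_of_mem (self_mem_ae_restrict measurableSet_Ioc)
      (fun t ht => rpow_nonneg ht.1.le _))]
  rw [← intervalIntegral.integral_of_le hr.le]
  rw [integral_rpow (Or.inl (by linarith))]
  rw [show θ-1+1 = θ by ring, Real.zero_rpow hθ.ne', sub_zero]

lemma far_bound (p r θ : ℝ) (hr : 0 < r) (hθ : 0 < θ) :
    ∫⁻ u in {u : ℝ | r ≤ |p - u|}, ENNReal.ofReal (|p - u| ^ (-(1+θ)))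
      ≤ ENNReal.ofReal (2 / θ * r ^ (-θ)) := by
  have hset : MeasurableSet {u : ℝ | r ≤ |p - u|} :=
    measurableSet_le measurable_const (measurable_const.sub measurable_id).abs
  rw [← lintegral_indicator hset]
  have hpt : ∀ u, {u : ℝ | r ≤ |p - u|}.indicator
      (fun u => ENNReal.ofReal (|p - u| ^ (-(1+θ)))) u
      = (Ici r).indicator (fun t => ENNReal.ofReal (t ^ (-(1+θ)))) |p - u| := by
    intro u; by_cases h : r ≤ |p - u| <;> simp [Set.indicator_apply, h]
  simp_rw [hpt]
  rw [lintegral_abs_sub (fun t => (Ici r).indicator (fun t => ENNReal.ofReal (t ^ (-(1+θ)))) t) p]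
  rw [lintegral_indicator measurableSet_Ici, Measure.restrict_restrict measurableSet_Ici]
  rw [show Ici r ∩ Ioi 0 = Ici r from inter_eq_left.2 (fun t ht => lt_of_lt_of_le hr ht)]
  rw [← Measure.restrict_congr_set Ioi_ae_eq_Ici]
  rw [lint_Ioi_rpow r θ hr hθ]
  rw [show (2:ℝ≥0∞) = ENNReal.ofReal 2 by simp]
  rw [← ENNReal.ofReal_mul (by norm_num)]
  apply ENNReal.ofReal_le_ofReal
  apply le_of_eq; ring

lemma near_bound (q r θ : ℝ) (hr : 0 < r) (hθ : 0 < θ) :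
    ∫⁻ v in {v : ℝ | |q - v| ≤ r}, ENNReal.ofReal (|q - v| ^ (θ-1))
      ≤ ENNReal.ofReal (2 / θ * r ^ θ) := by
  have hset : MeasurableSet {v : ℝ | |q - v| ≤ r} :=
    measurableSet_le (measurable_const.sub measurable_id).abs measurable_const
  rw [← lintegral_indicator hset]
  have hpt : ∀ u, {v : ℝ | |q - v| ≤ r}.indicator
      (fun v => ENNReal.ofReal (|q - v| ^ (θ-1))) u
      = (Iic r).indicator (fun t => ENNReal.ofReal (t ^ (θ-1))) |q - u| := by
    intro u; by_cases h : |q - u| ≤ r <;> simp [Set.indicator_apply, h]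
  simp_rw [hpt]
  rw [lintegral_abs_sub (fun t => (Iic r).indicator (fun t => ENNReal.ofReal (t ^ (θ-1))) t) q]
  rw [lintegral_indicator measurableSet_Iic, Measure.restrict_restrict measurableSet_Iic]
  rw [show Iic r ∩ Ioi 0 = Ioc 0 r from by ext t; simp [mem_Ioc, mem_Iic, mem_Ioi, and_comm]]
  rw [lint_Ioc_rpow r θ hr hθ]
  rw [show (2:ℝ≥0∞) = ENNReal.ofReal 2 by simp]
  rw [← ENNReal.ofReal_mul (by norm_num)]
  apply ENNReal.ofReal_le_ofReal
  apply le_of_eq; ring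


lemma pt_low {r θ t : ℝ} (hr : 0 < r) (hθ : 0 < θ) (ht : 0 < t) (htr : t ≤ r) :
    (r / t + t / r) ^ (-θ) * t⁻¹ ≤ r ^ (-θ) * t ^ (θ-1) := by
  have h1 : (r / t + t / r) ^ (-θ) ≤ (r / t) ^ (-θ) :=
    rpow_le_rpow_of_nonpos (div_pos hr ht) (le_add_of_nonneg_right (div_nonneg ht.le hr.le))
      (neg_nonpos.2 hθ.le)
  have h2 : (r / t) ^ (-θ) = r ^ (-θ) * t ^ θ := by
    rw [div_rpow hr.le ht.le, rpow_neg hr.le, rpow_neg ht.le, div_eq_mul_inv, inv_inv]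
  have h3 : t ^ (θ-1) = t ^ θ * t⁻¹ := by
    rw [rpow_sub ht, rpow_one, div_eq_mul_inv]
  rw [h3, ← mul_assoc]
  exact mul_le_mul_of_nonneg_right (h1.trans (le_of_eq h2)) (inv_nonneg.2 ht.le)

lemma pt_high {r θ t : ℝ} (hr : 0 < r) (hθ : 0 < θ) (ht : 0 < t) :
    (r / t + t / r) ^ (-θ) * t⁻¹ ≤ r ^ θ * t ^ (-(1+θ)) := by
  have h1 : (r / t + t / r) ^ (-θ) ≤ (t / r) ^ (-θ) :=
    rpow_le_rpow_of_nonpos (div_pos ht hr) (le_add_of_nonneg_left (div_nonneg hr.le ht.le))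
      (neg_nonpos.2 hθ.le)
  have h2 : (t / r) ^ (-θ) = r ^ θ * t ^ (-θ) := by
    rw [div_rpow ht.le hr.le, rpow_neg ht.le, rpow_neg hr.le]
    rw [div_eq_mul_inv, inv_inv, mul_comm]
  have h3 : t ^ (-(1+θ)) = t ^ (-θ) * t⁻¹ := by
    rw [show -(1+θ) = -θ - 1 by ring, rpow_sub ht, rpow_one, div_eq_mul_inv]
  rw [h3, ← mul_assoc]
  exact mul_le_mul_of_nonneg_right (h1.trans (le_of_eq h2)) (inv_nonneg.2 ht.le)

lemma D_bound (p r θ : ℝ) (hr : 0 < r) (hθ : 0 < θ) :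
    ∫⁻ u, ENNReal.ofReal ((r / |p - u| + |p - u| / r) ^ (-θ) * |p - u|⁻¹)
      ≤ ENNReal.ofReal (4 / θ) := by
  rw [lintegral_abs_sub (fun t => ENNReal.ofReal ((r / t + t / r) ^ (-θ) * t⁻¹)) p]
  have hsplit : Ioi (0:ℝ) = Ioc 0 r ∪ Ioi r := (Ioc_union_Ioi_eq_Ioi hr.le).symm
  rw [hsplit]
  calc 2 * ∫⁻ t in Ioc 0 r ∪ Ioi r, ENNReal.ofReal ((r / t + t / r) ^ (-θ) * t⁻¹)
      ≤ 2 * ((∫⁻ t in Ioc 0 r, ENNReal.ofReal ((r / t + t / r) ^ (-θ) * t⁻¹))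
          + ∫⁻ t in Ioi r, ENNReal.ofReal ((r / t + t / r) ^ (-θ) * t⁻¹)) := by
        gcongr
        exact lintegral_union_le _ _ _
    _ ≤ 2 * ((∫⁻ t in Ioc 0 r, ENNReal.ofReal (r ^ (-θ) * t ^ (θ-1)))
          + ∫⁻ t in Ioi r, ENNReal.ofReal (r ^ θ * t ^ (-(1+θ)))) := by
        apply mul_le_mul_right
        apply add_le_add
        · apply setLIntegral_mono_ae (by fun_prop)
          filter_upwards with t ht
          exact ENNReal.ofReal_le_ofReal (pt_low hr hθ ht.1 ht.2)
        · apply setLIntegral_mono_ae (by fun_prop)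
          filter_upwards with t ht
          exact ENNReal.ofReal_le_ofReal (pt_high hr hθ (hr.trans ht))
    _ ≤ ENNReal.ofReal (4 / θ) := by
        simp_rw [ENNReal.ofReal_mul (rpow_nonneg hr.le _)]
        rw [lintegral_const_mul' _ _ ENNReal.ofReal_ne_top,
          lintegral_const_mul' _ _ ENNReal.ofReal_ne_top,
          lint_Ioc_rpow r θ hr hθ, lint_Ioi_rpow r θ hr hθ,
          ← ENNReal.ofReal_mul (rpow_nonneg hr.le _),
          ← ENNReal.ofReal_mul (rpow_nonneg hr.le _)]
        have e1 : r ^ (-θ) * (r ^ θ / θ) = 1/θ := by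
          rw [rpow_neg hr.le]
          field_simp
        have e2 : r ^ θ * (r ^ (-θ) / θ) = 1/θ := by
          rw [rpow_neg hr.le]
          field_simp [(rpow_pos_of_pos hr θ).ne']
        rw [e1, e2, ← ENNReal.ofReal_add (by positivity) (by positivity),
          show (2:ℝ≥0∞) = ENNReal.ofReal 2 by simp,
          ← ENNReal.ofReal_mul (by norm_num)]
        apply ENNReal.ofReal_le_ofReal
        apply le_of_eq; ring


lemma M1 (p q ℓ θ₁ θ₂ : ℝ) (hℓ : 0 < ℓ) (hθ₁ : 0 < θ₁) (hθ₂ : 0 < θ₂) :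
    ∫⁻ y in {y : ℝ × ℝ | ℓ ≤ |p - y.1|},
      ENNReal.ofReal (|p - y.1| ^ (-(1+θ₁)) *
        ((|p - y.1| / |q - y.2| + |q - y.2| / |p - y.1|) ^ (-θ₂) * |q - y.2|⁻¹))
      ≤ ENNReal.ofReal (2/θ₁ * ℓ^(-θ₁) * (4/θ₂)) := by
  have hA : MeasurableSet {u : ℝ | ℓ ≤ |p - u|} :=
    measurableSet_le measurable_const (measurable_const.sub measurable_id).abs
  have hset : {y : ℝ × ℝ | ℓ ≤ |p - y.1|} = {u : ℝ | ℓ ≤ |p - u|} ×ˢ (univ : Set ℝ) := by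
    ext y; simp [Set.mem_prod]
  rw [hset, Measure.volume_eq_prod, ← Measure.prod_restrict, Measure.restrict_univ]
  rw [lintegral_prod _ (by fun_prop)]
  calc ∫⁻ u in {u : ℝ | ℓ ≤ |p - u|}, ∫⁻ v, ENNReal.ofReal (|p - u| ^ (-(1+θ₁)) *
        ((|p - u| / |q - v| + |q - v| / |p - u|) ^ (-θ₂) * |q - v|⁻¹))
      ≤ ∫⁻ u in {u : ℝ | ℓ ≤ |p - u|}, ENNReal.ofReal (4/θ₂ * |p - u| ^ (-(1+θ₁))) := by
        apply setLIntegral_mono_ae (by fun_prop)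
        filter_upwards with u hu
        have hs : 0 < |p - u| := lt_of_lt_of_le hℓ hu
        simp_rw [ENNReal.ofReal_mul (rpow_nonneg (abs_nonneg (p - u)) _)]
        rw [lintegral_const_mul' _ _ ENNReal.ofReal_ne_top]
        rw [ENNReal.ofReal_mul (by positivity), mul_comm (ENNReal.ofReal (4/θ₂))]
        exact mul_le_mul_right (D_bound q (|p - u|) θ₂ hs hθ₂) _
    _ ≤ ENNReal.ofReal (2/θ₁ * ℓ^(-θ₁) * (4/θ₂)) := by
        simp_rw [ENNReal.ofReal_mul (by positivity : (0:ℝ) ≤ 4/θ₂)]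
        rw [lintegral_const_mul' _ _ ENNReal.ofReal_ne_top]
        calc ENNReal.ofReal (4/θ₂) * ∫⁻ u in {u : ℝ | ℓ ≤ |p - u|},
              ENNReal.ofReal (|p - u| ^ (-(1+θ₁)))
            ≤ ENNReal.ofReal (4/θ₂) * ENNReal.ofReal (2/θ₁ * ℓ^(-θ₁)) :=
              mul_le_mul_right (far_bound p ℓ θ₁ hℓ hθ₁) _
          _ = ENNReal.ofReal (2/θ₁ * ℓ^(-θ₁) * (4/θ₂)) := by
              rw [← ENNReal.ofReal_mul (by positivity)]; ring_nf

lemma M1' (p q ℓ θ₁ θ₂ : ℝ) (hℓ : 0 < ℓ) (hθ₁ : 0 < θ₁) (hθ₂ : 0 < θ₂) :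
    ∫⁻ y in {y : ℝ × ℝ | ℓ ≤ |q - y.2|},
      ENNReal.ofReal (|q - y.2| ^ (-(1+θ₁)) *
        ((|p - y.1| / |q - y.2| + |q - y.2| / |p - y.1|) ^ (-θ₂) * |p - y.1|⁻¹))
      ≤ ENNReal.ofReal (2/θ₁ * ℓ^(-θ₁) * (4/θ₂)) := by
  have hB : MeasurableSet {v : ℝ | ℓ ≤ |q - v|} :=
    measurableSet_le measurable_const (measurable_const.sub measurable_id).abs
  have hset : {y : ℝ × ℝ | ℓ ≤ |q - y.2|} = (univ : Set ℝ) ×ˢ {v : ℝ | ℓ ≤ |q - v|} := by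
    ext y; simp [Set.mem_prod]
  rw [hset, Measure.volume_eq_prod, ← Measure.prod_restrict, Measure.restrict_univ]
  rw [lintegral_prod_symm _ (by fun_prop)]
  calc ∫⁻ v in {v : ℝ | ℓ ≤ |q - v|}, ∫⁻ u, ENNReal.ofReal (|q - v| ^ (-(1+θ₁)) *
        ((|p - u| / |q - v| + |q - v| / |p - u|) ^ (-θ₂) * |p - u|⁻¹))
      ≤ ∫⁻ v in {v : ℝ | ℓ ≤ |q - v|}, ENNReal.ofReal (4/θ₂ * |q - v| ^ (-(1+θ₁))) := by
        apply setLIntegral_mono_ae (by fun_prop)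
        filter_upwards with v hv
        have ht : 0 < |q - v| := lt_of_lt_of_le hℓ hv
        simp_rw [ENNReal.ofReal_mul (rpow_nonneg (abs_nonneg (q - v)) _),
          fun u => add_comm (|p - u| / |q - v|) (|q - v| / |p - u|)]
        rw [lintegral_const_mul' _ _ ENNReal.ofReal_ne_top]
        rw [ENNReal.ofReal_mul (by positivity), mul_comm (ENNReal.ofReal (4/θ₂))]
        exact mul_le_mul_right (D_bound p (|q - v|) θ₂ ht hθ₂) _
    _ ≤ ENNReal.ofReal (2/θ₁ * ℓ^(-θ₁) * (4/θ₂)) := by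
        simp_rw [ENNReal.ofReal_mul (by positivity : (0:ℝ) ≤ 4/θ₂)]
        rw [lintegral_const_mul' _ _ ENNReal.ofReal_ne_top]
        calc ENNReal.ofReal (4/θ₂) * ∫⁻ v in {v : ℝ | ℓ ≤ |q - v|},
              ENNReal.ofReal (|q - v| ^ (-(1+θ₁)))
            ≤ ENNReal.ofReal (4/θ₂) * ENNReal.ofReal (2/θ₁ * ℓ^(-θ₁)) :=
              mul_le_mul_right (far_bound q ℓ θ₁ hℓ hθ₁) _
          _ = ENNReal.ofReal (2/θ₁ * ℓ^(-θ₁) * (4/θ₂)) := by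
              rw [← ENNReal.ofReal_mul (by positivity)]; ring_nf


lemma M2 (p q a b θ : ℝ) (ha : 0 < a) (hb : 0 < b) (hθ : 0 < θ) :
    ∫⁻ y in {y : ℝ × ℝ | a ≤ |p - y.1|} ∩ {y : ℝ × ℝ | |q - y.2| ≤ b},
      ENNReal.ofReal (|p - y.1| ^ (-(1+θ)) * |q - y.2| ^ (θ-1))
      ≤ ENNReal.ofReal (2/θ * a^(-θ) * (2/θ * b^θ)) := by
  have hset : {y : ℝ × ℝ | a ≤ |p - y.1|} ∩ {y : ℝ × ℝ | |q - y.2| ≤ b}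
      = {u : ℝ | a ≤ |p - u|} ×ˢ {v : ℝ | |q - v| ≤ b} := by
    ext y; simp [Set.mem_prod]
  rw [hset, Measure.volume_eq_prod, ← Measure.prod_restrict]
  simp_rw [ENNReal.ofReal_mul (rpow_nonneg (abs_nonneg _) _)]
  rw [lintegral_prod_mul (f := fun u => ENNReal.ofReal (|p - u| ^ (-(1+θ))))
    (g := fun v => ENNReal.ofReal (|q - v| ^ (θ-1))) (by fun_prop) (by fun_prop)]
  rw [ENNReal.ofReal_mul (by positivity)]
  exact mul_le_mul' (far_bound p a θ ha hθ) (near_bound q b θ hb hθ)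

lemma M2' (p q a b θ : ℝ) (ha : 0 < a) (hb : 0 < b) (hθ : 0 < θ) :
    ∫⁻ y in {y : ℝ × ℝ | |p - y.1| ≤ b} ∩ {y : ℝ × ℝ | a ≤ |q - y.2|},
      ENNReal.ofReal (|p - y.1| ^ (θ-1) * |q - y.2| ^ (-(1+θ)))
      ≤ ENNReal.ofReal (2/θ * b^θ * (2/θ * a^(-θ))) := by
  have hset : {y : ℝ × ℝ | |p - y.1| ≤ b} ∩ {y : ℝ × ℝ | a ≤ |q - y.2|}
      = {u : ℝ | |p - u| ≤ b} ×ˢ {v : ℝ | a ≤ |q - v|} := by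
    ext y; simp [Set.mem_prod]
  rw [hset, Measure.volume_eq_prod, ← Measure.prod_restrict]
  simp_rw [ENNReal.ofReal_mul (rpow_nonneg (abs_nonneg _) _)]
  rw [lintegral_prod_mul (f := fun u => ENNReal.ofReal (|p - u| ^ (θ-1)))
    (g := fun v => ENNReal.ofReal (|q - v| ^ (-(1+θ)))) (by fun_prop) (by fun_prop)]
  rw [ENNReal.ofReal_mul (by positivity)]
  exact mul_le_mul' (near_bound p b θ hb hθ) (far_bound q a θ ha hθ)


lemma size_sep {s t θ : ℝ} (hs : 0 < s) (ht : 0 < t) (hθ : 0 < θ) :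
    (1/s) * (1/t) * ((s/t + t/s) ^ (-θ)) ≤ s^(θ-1) * t^(-(1+θ)) := by
  have h1 : (s/t + t/s) ^ (-θ) ≤ (t/s) ^ (-θ) :=
    rpow_le_rpow_of_nonpos (div_pos ht hs) (le_add_of_nonneg_left (div_nonneg hs.le ht.le))
      (neg_nonpos.2 hθ.le)
  have h2 : (t/s) ^ (-θ) = s^θ * t^(-θ) := by
    rw [div_rpow ht.le hs.le, rpow_neg ht.le, rpow_neg hs.le, div_eq_mul_inv, inv_inv, mul_comm]
  calc (1/s) * (1/t) * ((s/t + t/s) ^ (-θ))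
      ≤ (1/s) * (1/t) * (s^θ * t^(-θ)) :=
        mul_le_mul_of_nonneg_left (h1.trans h2.le) (by positivity)
    _ = s^(θ-1) * t^(-(1+θ)) := by
        rw [rpow_sub hs, rpow_one, show -(1+θ) = -1 + -θ by ring, rpow_add ht, rpow_neg_one]
        ring

lemma size_sep' {s t θ : ℝ} (hs : 0 < s) (ht : 0 < t) (hθ : 0 < θ) :
    (1/s) * (1/t) * ((s/t + t/s) ^ (-θ)) ≤ t^(θ-1) * s^(-(1+θ)) := by
  have := size_sep ht hs hθ
  rw [add_comm (t/s) (s/t)] at this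
  calc (1/s) * (1/t) * ((s/t + t/s) ^ (-θ))
      = (1/t) * (1/s) * ((s/t + t/s) ^ (-θ)) := by ring
    _ ≤ t^(θ-1) * s^(-(1+θ)) := this

lemma size_near_far {CK S T θ : ℝ} (hCK : 0 ≤ CK) (hS : 0 < S) (hT : 0 < T) (hθ : 0 < θ) :
    CK * (1/S) * (1/T) * ((S/T + T/S) ^ (-θ)) ≤ CK * (S^(θ-1) * T^(-(1+θ))) := by
  calc CK * (1/S) * (1/T) * ((S/T + T/S) ^ (-θ))
      = CK * ((1/S) * (1/T) * ((S/T + T/S) ^ (-θ))) := by ring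
    _ ≤ CK * (S^(θ-1) * T^(-(1+θ))) := mul_le_mul_of_nonneg_left (size_sep hS hT hθ) hCK

lemma size_far_near {CK S T θ : ℝ} (hCK : 0 ≤ CK) (hS : 0 < S) (hT : 0 < T) (hθ : 0 < θ) :
    CK * (1/S) * (1/T) * ((S/T + T/S) ^ (-θ)) ≤ CK * (S^(-(1+θ)) * T^(θ-1)) := by
  calc CK * (1/S) * (1/T) * ((S/T + T/S) ^ (-θ))
      = CK * ((1/S) * (1/T) * ((S/T + T/S) ^ (-θ))) := by ring
    _ ≤ CK * (T^(θ-1) * S^(-(1+θ))) := mul_le_mul_of_nonneg_left (size_sep' hS hT hθ) hCK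
    _ = CK * (S^(-(1+θ)) * T^(θ-1)) := by ring

lemma conv1 {CK A L S T W θ₁ : ℝ} (hCK : 0 ≤ CK) (hA : 0 ≤ A) (hAL : A ≤ L) (hθ : 0 ≤ θ₁)
    (hS : 0 ≤ S) (hT : 0 ≤ T) (hW : 0 ≤ W) :
    CK * (A ^ θ₁ / S ^ (1+θ₁)) * (1/T) * W ≤ CK * L ^ θ₁ * (S ^ (-(1+θ₁)) * (W * T⁻¹)) := by
  rw [rpow_neg hS]
  have e : ∀ B : ℝ, CK * (B / S ^ (1+θ₁)) * (1/T) * W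
      = (CK * B) * ((S ^ (1+θ₁))⁻¹ * (W * T⁻¹)) := by intro B; ring
  rw [e]
  have e2 : CK * L ^ θ₁ * ((S ^ (1+θ₁))⁻¹ * (W * T⁻¹))
      = (CK * L ^ θ₁) * ((S ^ (1+θ₁))⁻¹ * (W * T⁻¹)) := by ring
  rw [e2]
  apply mul_le_mul_of_nonneg_right
  · exact mul_le_mul_of_nonneg_left (rpow_le_rpow hA hAL hθ) hCK
  · exact mul_nonneg (inv_nonneg.2 (rpow_nonneg hS _))
      (mul_nonneg hW (inv_nonneg.2 hT))

lemma conv2 {CK A L S T W θ₁ : ℝ} (hCK : 0 ≤ CK) (hA : 0 ≤ A) (hAL : A ≤ L) (hθ : 0 ≤ θ₁)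
    (hS : 0 ≤ S) (hT : 0 ≤ T) (hW : 0 ≤ W) :
    CK * (1/S) * (A ^ θ₁ / T ^ (1+θ₁)) * W ≤ CK * L ^ θ₁ * (T ^ (-(1+θ₁)) * (W * S⁻¹)) := by
  rw [rpow_neg hT]
  have e : ∀ B : ℝ, CK * (1/S) * (B / T ^ (1+θ₁)) * W
      = (CK * B) * ((T ^ (1+θ₁))⁻¹ * (W * S⁻¹)) := by intro B; ring
  rw [e]
  have e2 : CK * L ^ θ₁ * ((T ^ (1+θ₁))⁻¹ * (W * S⁻¹))
      = (CK * L ^ θ₁) * ((T ^ (1+θ₁))⁻¹ * (W * S⁻¹)) := by ring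
  rw [e2]
  apply mul_le_mul_of_nonneg_right
  · exact mul_le_mul_of_nonneg_left (rpow_le_rpow hA hAL hθ) hCK
  · exact mul_nonneg (inv_nonneg.2 (rpow_nonneg hT _))
      (mul_nonneg hW (inv_nonneg.2 hS))

lemma const_bound {CK ℓ θ₁ θ₂ : ℝ} (hCK : 0 < CK) (hℓ : 0 < ℓ) (hθ₁0 : 0 < θ₁)
    (hθ₂0 : 0 < θ₂) :
    CK * (ℓ/2)^θ₁ * (2/θ₁ * ℓ^(-θ₁) * (4/θ₂)) ≤ 8*CK/(θ₁*θ₂) := by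
  have h1 : (ℓ/2)^θ₁ * ℓ^(-θ₁) ≤ 1 := by
    rw [rpow_neg hℓ.le, ← div_eq_mul_inv, div_le_one (rpow_pos_of_pos hℓ _)]
    exact rpow_le_rpow (by positivity) (by linarith) hθ₁0.le
  have e : CK * (ℓ/2)^θ₁ * (2/θ₁ * ℓ^(-θ₁) * (4/θ₂))
      = (8*CK/(θ₁*θ₂)) * ((ℓ/2)^θ₁ * ℓ^(-θ₁)) := by ring
  rw [e]
  calc (8*CK/(θ₁*θ₂)) * ((ℓ/2)^θ₁ * ℓ^(-θ₁)) ≤ (8*CK/(θ₁*θ₂)) * 1 :=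
        mul_le_mul_of_nonneg_left h1 (by positivity)
    _ = 8*CK/(θ₁*θ₂) := mul_one _

lemma const_bound2 {CK A B θ₂ : ℝ} (hCK : 0 < CK) (hA : 0 < A) (hB : 0 < B) (hBA : B ≤ 2*A)
    (hθ₂0 : 0 < θ₂) (hθ₂1 : θ₂ ≤ 1) :
    CK * (2/θ₂ * A^(-θ₂) * (2/θ₂ * B^θ₂)) ≤ 8*CK/(θ₂*θ₂) := by
  have h1 : A^(-θ₂) * B^θ₂ ≤ 2 := by
    have e : A^(-θ₂) * B^θ₂ = (B/A)^θ₂ := by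
      rw [div_rpow hB.le hA.le, rpow_neg hA.le, mul_comm, div_eq_mul_inv]
    rw [e]
    by_cases hba : B/A ≤ 1
    · exact (rpow_le_one (by positivity) hba hθ₂0.le).trans (by norm_num)
    · push_neg at hba
      calc (B/A)^θ₂ ≤ (B/A)^(1:ℝ) := rpow_le_rpow_of_exponent_le hba.le hθ₂1
        _ = B/A := rpow_one _
        _ ≤ 2 := by rw [div_le_iff₀ hA]; linarith
  have e : CK * (2/θ₂ * A^(-θ₂) * (2/θ₂ * B^θ₂))
      = (4*CK/(θ₂*θ₂)) * (A^(-θ₂) * B^θ₂) := by ring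
  rw [e]
  calc (4*CK/(θ₂*θ₂)) * (A^(-θ₂) * B^θ₂) ≤ (4*CK/(θ₂*θ₂)) * 2 :=
        mul_le_mul_of_nonneg_left h1 (by positivity)
    _ ≤ 8*CK/(θ₂*θ₂) := by
        rw [show (4*CK/(θ₂*θ₂)) * 2 = 8*CK/(θ₂*θ₂) by ring]


lemma Dfac_def (θ : ℝ) (x y : ℝ × ℝ) :
    Dfac θ x y = (|x.1 - y.1| / |x.2 - y.2| + |x.2 - y.2| / |x.1 - y.1|) ^ (-θ) := rfl

lemma line1_null (b : ℝ) : volume {y : ℝ × ℝ | y.1 = b} = 0 := by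
  have h : {y : ℝ × ℝ | y.1 = b} = ({b} : Set ℝ) ×ˢ (univ : Set ℝ) := by
    ext ⟨y1, y2⟩; simp [Set.mem_prod, eq_comm]
  rw [h, Measure.volume_eq_prod, Measure.prod_prod]
  simp

lemma line2_null (b : ℝ) : volume {y : ℝ × ℝ | y.2 = b} = 0 := by
  have h : {y : ℝ × ℝ | y.2 = b} = (univ : Set ℝ) ×ˢ ({b} : Set ℝ) := by
    ext ⟨y1, y2⟩; simp [Set.mem_prod, eq_comm]
  rw [h, Measure.volume_eq_prod, Measure.prod_prod]
  simp

lemma ae_good (x c : ℝ × ℝ) :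
    ∀ᵐ y : ℝ × ℝ, (y.1 ≠ x.1 ∧ y.1 ≠ c.1) ∧ (y.2 ≠ x.2 ∧ y.2 ≠ c.2) := by
  have h1 : ∀ᵐ y : ℝ × ℝ, y.1 ≠ x.1 := by
    rw [ae_iff]; simpa [not_not] using line1_null x.1
  have h2 : ∀ᵐ y : ℝ × ℝ, y.1 ≠ c.1 := by
    rw [ae_iff]; simpa [not_not] using line1_null c.1
  have h3 : ∀ᵐ y : ℝ × ℝ, y.2 ≠ x.2 := by
    rw [ae_iff]; simpa [not_not] using line2_null x.2
  have h4 : ∀ᵐ y : ℝ × ℝ, y.2 ≠ c.2 := by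
    rw [ae_iff]; simpa [not_not] using line2_null c.2
  exact (h1.and h2).and (h3.and h4)

lemma regionA {θ₁ θ₂ CK : ℝ} (hθ₁0 : 0 < θ₁) (hθ₂0 : 0 < θ₂) (hCK : 0 < CK)
    {K : ℝ × ℝ → ℝ × ℝ → ℂ} (hK : IsCZXKernel θ₁ θ₂ CK K) (c x : ℝ × ℝ) {ℓ : ℝ} (hℓ : 0 < ℓ)
    (hx1 : |x.1 - c.1| ≤ ℓ/2) (hx2 : |x.2 - c.2| ≤ ℓ/2) :
    ∫⁻ y in {y : ℝ × ℝ | 3*ℓ/2 < |c.1 - y.1|} ∩ {y : ℝ × ℝ | 3*ℓ/2 < |c.2 - y.2|},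
      (‖K x y - K c y‖₊ : ℝ≥0∞) ≤ ENNReal.ofReal (16*CK/(θ₁*θ₂)) := by
  set c0 : ℝ := CK * (ℓ/2)^θ₁ with hc0
  have hc0n : 0 ≤ c0 := by positivity
  set F1 : ℝ × ℝ → ℝ≥0∞ := fun y => ENNReal.ofReal (c0 * (|x.1 - y.1| ^ (-(1+θ₁)) *
      ((|x.1 - y.1| / |x.2 - y.2| + |x.2 - y.2| / |x.1 - y.1|) ^ (-θ₂) * |x.2 - y.2|⁻¹)))
    with hF1
  set F2 : ℝ × ℝ → ℝ≥0∞ := fun y => ENNReal.ofReal (c0 * (|x.2 - y.2| ^ (-(1+θ₁)) *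
      ((|c.1 - y.1| / |x.2 - y.2| + |x.2 - y.2| / |c.1 - y.1|) ^ (-θ₂) * |c.1 - y.1|⁻¹)))
    with hF2
  have key : ∫⁻ y in {y : ℝ × ℝ | 3*ℓ/2 < |c.1 - y.1|} ∩ {y : ℝ × ℝ | 3*ℓ/2 < |c.2 - y.2|},
      (‖K x y - K c y‖₊ : ℝ≥0∞)
      ≤ ∫⁻ y in {y : ℝ × ℝ | 3*ℓ/2 < |c.1 - y.1|} ∩ {y : ℝ × ℝ | 3*ℓ/2 < |c.2 - y.2|},
        (F1 y + F2 y) := by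
    apply setLIntegral_mono_ae (by fun_prop)
    filter_upwards [ae_good x c] with y hy hyS
    obtain ⟨⟨hyx1, hyc1⟩, hyx2, hyc2⟩ := hy
    have h1 : 3*ℓ/2 < |c.1 - y.1| := hyS.1
    have h2 : 3*ℓ/2 < |c.2 - y.2| := hyS.2
    have htri1 : |c.1 - y.1| ≤ |c.1 - x.1| + |x.1 - y.1| := abs_sub_le c.1 x.1 y.1
    have htri2 : |c.2 - y.2| ≤ |c.2 - x.2| + |x.2 - y.2| := abs_sub_le c.2 x.2 y.2
    have hcx1 : |c.1 - x.1| = |x.1 - c.1| := abs_sub_comm _ _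
    have hcx2 : |c.2 - x.2| = |x.2 - c.2| := abs_sub_comm _ _
    have hs : ℓ ≤ |x.1 - y.1| := by linarith
    have ht : ℓ ≤ |x.2 - y.2| := by linarith
    have hS0 : (0:ℝ) < |x.1 - y.1| := lt_of_lt_of_le hℓ hs
    have hT0 : (0:ℝ) < |x.2 - y.2| := lt_of_lt_of_le hℓ ht
    have hS'0 : (0:ℝ) < |c.1 - y.1| := by linarith
    have e1 := hK.holder_x1 x y c.1 (Ne.symm hyx1) (Ne.symm hyx2) (by linarith)
    have e2 := hK.holder_x2 (c.1, x.2) y c.2 (Ne.symm hyc1) (Ne.symm hyx2) (by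
      show |x.2 - c.2| ≤ |x.2 - y.2| / 2
      linarith)
    rw [Dfac_def] at e1 e2
    dsimp only at e2
    rw [Prod.mk.eta] at e2
    have b1 : ‖K x y - K (c.1, x.2) y‖ ≤ c0 * (|x.1 - y.1| ^ (-(1+θ₁)) *
        ((|x.1 - y.1| / |x.2 - y.2| + |x.2 - y.2| / |x.1 - y.1|) ^ (-θ₂) * |x.2 - y.2|⁻¹)) := by
      refine e1.trans ?_
      rw [hc0]
      exact conv1 hCK.le (abs_nonneg _) hx1 hθ₁0.le (abs_nonneg _) (abs_nonneg _)
        (rpow_nonneg (by positivity) _)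
    have b2 : ‖K (c.1, x.2) y - K c y‖ ≤ c0 * (|x.2 - y.2| ^ (-(1+θ₁)) *
        ((|c.1 - y.1| / |x.2 - y.2| + |x.2 - y.2| / |c.1 - y.1|) ^ (-θ₂) * |c.1 - y.1|⁻¹)) := by
      refine e2.trans ?_
      rw [hc0]
      exact conv2 hCK.le (abs_nonneg _) hx2 hθ₁0.le (abs_nonneg _) (abs_nonneg _)
        (rpow_nonneg (by positivity) _)
    have tri : ‖K x y - K c y‖ ≤ ‖K x y - K (c.1, x.2) y‖ + ‖K (c.1, x.2) y - K c y‖ :=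
      norm_sub_le_norm_sub_add_norm_sub _ _ _
    rw [← (show ENNReal.ofReal ‖K x y - K c y‖ = (‖K x y - K c y‖₊ : ℝ≥0∞) from ofReal_norm_eq_enorm _), hF1, hF2]
    calc ENNReal.ofReal ‖K x y - K c y‖
        ≤ ENNReal.ofReal (c0 * (|x.1 - y.1| ^ (-(1+θ₁)) *
            ((|x.1 - y.1| / |x.2 - y.2| + |x.2 - y.2| / |x.1 - y.1|) ^ (-θ₂) * |x.2 - y.2|⁻¹))
          + c0 * (|x.2 - y.2| ^ (-(1+θ₁)) *
            ((|c.1 - y.1| / |x.2 - y.2| + |x.2 - y.2| / |c.1 - y.1|) ^ (-θ₂) * |c.1 - y.1|⁻¹))) :=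
          ENNReal.ofReal_le_ofReal (by linarith)
      _ = _ := ENNReal.ofReal_add (by positivity) (by positivity)
  refine key.trans ?_
  rw [lintegral_add_left (by fun_prop)]
  have sub1 : {y : ℝ × ℝ | 3*ℓ/2 < |c.1 - y.1|} ∩ {y : ℝ × ℝ | 3*ℓ/2 < |c.2 - y.2|}
      ⊆ {y : ℝ × ℝ | ℓ ≤ |x.1 - y.1|} := by
    intro y hy
    have h1 : 3*ℓ/2 < |c.1 - y.1| := hy.1
    have htri1 : |c.1 - y.1| ≤ |c.1 - x.1| + |x.1 - y.1| := abs_sub_le c.1 x.1 y.1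
    have hcx1 : |c.1 - x.1| = |x.1 - c.1| := abs_sub_comm _ _
    show ℓ ≤ |x.1 - y.1|
    linarith
  have sub2 : {y : ℝ × ℝ | 3*ℓ/2 < |c.1 - y.1|} ∩ {y : ℝ × ℝ | 3*ℓ/2 < |c.2 - y.2|}
      ⊆ {y : ℝ × ℝ | ℓ ≤ |x.2 - y.2|} := by
    intro y hy
    have h2 : 3*ℓ/2 < |c.2 - y.2| := hy.2
    have htri2 : |c.2 - y.2| ≤ |c.2 - x.2| + |x.2 - y.2| := abs_sub_le c.2 x.2 y.2
    have hcx2 : |c.2 - x.2| = |x.2 - c.2| := abs_sub_comm _ _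
    show ℓ ≤ |x.2 - y.2|
    linarith
  have I1 : ∫⁻ y in {y : ℝ × ℝ | ℓ ≤ |x.1 - y.1|}, F1 y
      ≤ ENNReal.ofReal (c0 * (2/θ₁ * ℓ^(-θ₁) * (4/θ₂))) := by
    rw [hF1]
    simp_rw [ENNReal.ofReal_mul hc0n]
    rw [lintegral_const_mul' _ _ ENNReal.ofReal_ne_top]
    exact mul_le_mul_right (M1 x.1 x.2 ℓ θ₁ θ₂ hℓ hθ₁0 hθ₂0) _
  have I2 : ∫⁻ y in {y : ℝ × ℝ | ℓ ≤ |x.2 - y.2|}, F2 y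
      ≤ ENNReal.ofReal (c0 * (2/θ₁ * ℓ^(-θ₁) * (4/θ₂))) := by
    rw [hF2]
    simp_rw [ENNReal.ofReal_mul hc0n]
    rw [lintegral_const_mul' _ _ ENNReal.ofReal_ne_top]
    exact mul_le_mul_right (M1' c.1 x.2 ℓ θ₁ θ₂ hℓ hθ₁0 hθ₂0) _
  calc (∫⁻ y in {y : ℝ × ℝ | 3*ℓ/2 < |c.1 - y.1|} ∩ {y : ℝ × ℝ | 3*ℓ/2 < |c.2 - y.2|}, F1 y)
        + ∫⁻ y in {y : ℝ × ℝ | 3*ℓ/2 < |c.1 - y.1|} ∩ {y : ℝ × ℝ | 3*ℓ/2 < |c.2 - y.2|}, F2 y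
      ≤ (∫⁻ y in {y : ℝ × ℝ | ℓ ≤ |x.1 - y.1|}, F1 y)
        + ∫⁻ y in {y : ℝ × ℝ | ℓ ≤ |x.2 - y.2|}, F2 y :=
        add_le_add (lintegral_mono_set sub1) (lintegral_mono_set sub2)
    _ ≤ ENNReal.ofReal (c0 * (2/θ₁ * ℓ^(-θ₁) * (4/θ₂)))
        + ENNReal.ofReal (c0 * (2/θ₁ * ℓ^(-θ₁) * (4/θ₂))) := add_le_add I1 I2
    _ ≤ ENNReal.ofReal (16*CK/(θ₁*θ₂)) := by
        rw [← ENNReal.ofReal_add (by positivity) (by positivity)]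
        apply ENNReal.ofReal_le_ofReal
        have := const_bound hCK hℓ hθ₁0 hθ₂0
        rw [hc0]
        rw [show (16:ℝ)*CK/(θ₁*θ₂) = 8*CK/(θ₁*θ₂) + 8*CK/(θ₁*θ₂) by ring]
        rw [mul_assoc CK] at this ⊢
        linarith


lemma const_bound2' {CK A B θ₂ : ℝ} (hCK : 0 < CK) (hA : 0 < A) (hB : 0 < B) (hBA : B ≤ 2*A)
    (hθ₂0 : 0 < θ₂) (hθ₂1 : θ₂ ≤ 1) :
    CK * (2/θ₂ * B^θ₂ * (2/θ₂ * A^(-θ₂))) ≤ 8*CK/(θ₂*θ₂) := by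
  rw [show CK * (2/θ₂ * B^θ₂ * (2/θ₂ * A^(-θ₂))) = CK * (2/θ₂ * A^(-θ₂) * (2/θ₂ * B^θ₂)) by
    ring]
  exact const_bound2 hCK hA hB hBA hθ₂0 hθ₂1

lemma regionB {θ₁ θ₂ CK : ℝ} (hθ₁0 : 0 < θ₁) (hθ₂0 : 0 < θ₂) (hθ₂1 : θ₂ ≤ 1) (hCK : 0 < CK)
    {K : ℝ × ℝ → ℝ × ℝ → ℂ} (hK : IsCZXKernel θ₁ θ₂ CK K) (c x : ℝ × ℝ) {ℓ : ℝ} (hℓ : 0 < ℓ)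
    (hx1 : |x.1 - c.1| ≤ ℓ/2) (hx2 : |x.2 - c.2| ≤ ℓ/2) :
    ∫⁻ y in {y : ℝ × ℝ | 3*ℓ/2 < |c.1 - y.1|} \ {y : ℝ × ℝ | 3*ℓ/2 < |c.2 - y.2|},
      (‖K x y - K c y‖₊ : ℝ≥0∞)
      ≤ ENNReal.ofReal (8*CK/(θ₁*θ₂) + 16*CK/(θ₂*θ₂)) := by
  set c0 : ℝ := CK * (ℓ/2)^θ₁ with hc0
  have hc0n : 0 ≤ c0 := by positivity
  set F1 : ℝ × ℝ → ℝ≥0∞ := fun y => ENNReal.ofReal (c0 * (|x.1 - y.1| ^ (-(1+θ₁)) *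
      ((|x.1 - y.1| / |x.2 - y.2| + |x.2 - y.2| / |x.1 - y.1|) ^ (-θ₂) * |x.2 - y.2|⁻¹)))
    with hF1
  set F3 : ℝ × ℝ → ℝ≥0∞ := fun y =>
    ENNReal.ofReal (CK * (|c.1 - y.1| ^ (-(1+θ₂)) * |x.2 - y.2| ^ (θ₂-1))) with hF3
  set F4 : ℝ × ℝ → ℝ≥0∞ := fun y =>
    ENNReal.ofReal (CK * (|c.1 - y.1| ^ (-(1+θ₂)) * |c.2 - y.2| ^ (θ₂-1))) with hF4
  have key : ∫⁻ y in {y : ℝ × ℝ | 3*ℓ/2 < |c.1 - y.1|} \ {y : ℝ × ℝ | 3*ℓ/2 < |c.2 - y.2|},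
      (‖K x y - K c y‖₊ : ℝ≥0∞)
      ≤ ∫⁻ y in {y : ℝ × ℝ | 3*ℓ/2 < |c.1 - y.1|} \ {y : ℝ × ℝ | 3*ℓ/2 < |c.2 - y.2|},
        (F1 y + (F3 y + F4 y)) := by
    apply setLIntegral_mono_ae (by fun_prop)
    filter_upwards [ae_good x c] with y hy hyS
    obtain ⟨⟨hyx1, hyc1⟩, hyx2, hyc2⟩ := hy
    have h1 : 3*ℓ/2 < |c.1 - y.1| := hyS.1
    have h2 : |c.2 - y.2| ≤ 3*ℓ/2 := le_of_not_gt hyS.2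
    have htri1 : |c.1 - y.1| ≤ |c.1 - x.1| + |x.1 - y.1| := abs_sub_le c.1 x.1 y.1
    have htri2 : |x.2 - y.2| ≤ |x.2 - c.2| + |c.2 - y.2| := abs_sub_le x.2 c.2 y.2
    have hcx1 : |c.1 - x.1| = |x.1 - c.1| := abs_sub_comm _ _
    have hs : ℓ ≤ |x.1 - y.1| := by linarith
    have hS0 : (0:ℝ) < |x.1 - y.1| := lt_of_lt_of_le hℓ hs
    have hT0 : (0:ℝ) < |x.2 - y.2| := abs_pos.2 (sub_ne_zero.2 (Ne.symm hyx2))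
    have hT'0 : (0:ℝ) < |c.2 - y.2| := abs_pos.2 (sub_ne_zero.2 (Ne.symm hyc2))
    have hS'0 : (0:ℝ) < |c.1 - y.1| := by linarith
    have e1 := hK.holder_x1 x y c.1 (Ne.symm hyx1) (Ne.symm hyx2) (by linarith)
    rw [Dfac_def] at e1
    have b1 : ‖K x y - K (c.1, x.2) y‖ ≤ c0 * (|x.1 - y.1| ^ (-(1+θ₁)) *
        ((|x.1 - y.1| / |x.2 - y.2| + |x.2 - y.2| / |x.1 - y.1|) ^ (-θ₂) * |x.2 - y.2|⁻¹)) := by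
      refine e1.trans ?_
      rw [hc0]
      exact conv1 hCK.le (abs_nonneg _) hx1 hθ₁0.le (abs_nonneg _) (abs_nonneg _)
        (rpow_nonneg (by positivity) _)
    have s2 := hK.size (c.1, x.2) y (Ne.symm hyc1) (Ne.symm hyx2)
    rw [Dfac_def] at s2
    dsimp only at s2
    have b3 : ‖K (c.1, x.2) y‖ ≤ CK * (|c.1 - y.1| ^ (-(1+θ₂)) * |x.2 - y.2| ^ (θ₂-1)) :=
      s2.trans (size_far_near hCK.le hS'0 hT0 hθ₂0)
    have s3 := hK.size c y (Ne.symm hyc1) (Ne.symm hyc2)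
    rw [Dfac_def] at s3
    have b4 : ‖K c y‖ ≤ CK * (|c.1 - y.1| ^ (-(1+θ₂)) * |c.2 - y.2| ^ (θ₂-1)) :=
      s3.trans (size_far_near hCK.le hS'0 hT'0 hθ₂0)
    have tri : ‖K x y - K c y‖ ≤ ‖K x y - K (c.1, x.2) y‖ + ‖K (c.1, x.2) y - K c y‖ :=
      norm_sub_le_norm_sub_add_norm_sub _ _ _
    have tri2 : ‖K (c.1, x.2) y - K c y‖ ≤ ‖K (c.1, x.2) y‖ + ‖K c y‖ := norm_sub_le _ _
    rw [← (show ENNReal.ofReal ‖K x y - K c y‖ = (‖K x y - K c y‖₊ : ℝ≥0∞) from ofReal_norm_eq_enorm _), hF1, hF3, hF4]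
    calc ENNReal.ofReal ‖K x y - K c y‖
        ≤ ENNReal.ofReal (c0 * (|x.1 - y.1| ^ (-(1+θ₁)) *
            ((|x.1 - y.1| / |x.2 - y.2| + |x.2 - y.2| / |x.1 - y.1|) ^ (-θ₂) * |x.2 - y.2|⁻¹))
          + (CK * (|c.1 - y.1| ^ (-(1+θ₂)) * |x.2 - y.2| ^ (θ₂-1))
            + CK * (|c.1 - y.1| ^ (-(1+θ₂)) * |c.2 - y.2| ^ (θ₂-1)))) :=
          ENNReal.ofReal_le_ofReal (by linarith)
      _ = _ := by
          rw [ENNReal.ofReal_add (by positivity) (by positivity),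
            ENNReal.ofReal_add (by positivity) (by positivity)]
  refine key.trans ?_
  rw [lintegral_add_left (by fun_prop), lintegral_add_left (by fun_prop)]
  have sub1 : {y : ℝ × ℝ | 3*ℓ/2 < |c.1 - y.1|} \ {y : ℝ × ℝ | 3*ℓ/2 < |c.2 - y.2|}
      ⊆ {y : ℝ × ℝ | ℓ ≤ |x.1 - y.1|} := by
    intro y hy
    have h1 : 3*ℓ/2 < |c.1 - y.1| := hy.1
    have htri1 : |c.1 - y.1| ≤ |c.1 - x.1| + |x.1 - y.1| := abs_sub_le c.1 x.1 y.1
    have hcx1 : |c.1 - x.1| = |x.1 - c.1| := abs_sub_comm _ _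
    show ℓ ≤ |x.1 - y.1|
    linarith
  have sub3 : {y : ℝ × ℝ | 3*ℓ/2 < |c.1 - y.1|} \ {y : ℝ × ℝ | 3*ℓ/2 < |c.2 - y.2|}
      ⊆ {y : ℝ × ℝ | 3*ℓ/2 ≤ |c.1 - y.1|} ∩ {y : ℝ × ℝ | |x.2 - y.2| ≤ 2*ℓ} := by
    intro y hy
    have h1 : 3*ℓ/2 < |c.1 - y.1| := hy.1
    have h2 : |c.2 - y.2| ≤ 3*ℓ/2 := le_of_not_gt hy.2
    have htri2 : |x.2 - y.2| ≤ |x.2 - c.2| + |c.2 - y.2| := abs_sub_le x.2 c.2 y.2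
    constructor
    · show 3*ℓ/2 ≤ |c.1 - y.1|
      exact h1.le
    · show |x.2 - y.2| ≤ 2*ℓ
      linarith
  have sub4 : {y : ℝ × ℝ | 3*ℓ/2 < |c.1 - y.1|} \ {y : ℝ × ℝ | 3*ℓ/2 < |c.2 - y.2|}
      ⊆ {y : ℝ × ℝ | 3*ℓ/2 ≤ |c.1 - y.1|} ∩ {y : ℝ × ℝ | |c.2 - y.2| ≤ 3*ℓ/2} := by
    intro y hy
    constructor
    · show 3*ℓ/2 ≤ |c.1 - y.1|
      exact le_of_lt hy.1
    · show |c.2 - y.2| ≤ 3*ℓ/2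
      exact le_of_not_gt hy.2
  have I1 : ∫⁻ y in {y : ℝ × ℝ | ℓ ≤ |x.1 - y.1|}, F1 y
      ≤ ENNReal.ofReal (c0 * (2/θ₁ * ℓ^(-θ₁) * (4/θ₂))) := by
    rw [hF1]
    simp_rw [ENNReal.ofReal_mul hc0n]
    rw [lintegral_const_mul' _ _ ENNReal.ofReal_ne_top]
    exact mul_le_mul_right (M1 x.1 x.2 ℓ θ₁ θ₂ hℓ hθ₁0 hθ₂0) _
  have I3 : ∫⁻ y in {y : ℝ × ℝ | 3*ℓ/2 ≤ |c.1 - y.1|} ∩ {y : ℝ × ℝ | |x.2 - y.2| ≤ 2*ℓ}, F3 y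
      ≤ ENNReal.ofReal (CK * (2/θ₂ * (3*ℓ/2)^(-θ₂) * (2/θ₂ * (2*ℓ)^θ₂))) := by
    rw [hF3]
    simp_rw [ENNReal.ofReal_mul hCK.le]
    rw [lintegral_const_mul' _ _ ENNReal.ofReal_ne_top]
    exact mul_le_mul_right (M2 c.1 x.2 (3*ℓ/2) (2*ℓ) θ₂ (by linarith) (by linarith) hθ₂0) _
  have I4 : ∫⁻ y in {y : ℝ × ℝ | 3*ℓ/2 ≤ |c.1 - y.1|} ∩ {y : ℝ × ℝ | |c.2 - y.2| ≤ 3*ℓ/2}, F4 y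
      ≤ ENNReal.ofReal (CK * (2/θ₂ * (3*ℓ/2)^(-θ₂) * (2/θ₂ * (3*ℓ/2)^θ₂))) := by
    rw [hF4]
    simp_rw [ENNReal.ofReal_mul hCK.le]
    rw [lintegral_const_mul' _ _ ENNReal.ofReal_ne_top]
    exact mul_le_mul_right (M2 c.1 c.2 (3*ℓ/2) (3*ℓ/2) θ₂ (by linarith) (by linarith) hθ₂0) _
  calc (∫⁻ y in {y : ℝ × ℝ | 3*ℓ/2 < |c.1 - y.1|} \ {y : ℝ × ℝ | 3*ℓ/2 < |c.2 - y.2|}, F1 y)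
        + ((∫⁻ y in {y : ℝ × ℝ | 3*ℓ/2 < |c.1 - y.1|} \ {y : ℝ × ℝ | 3*ℓ/2 < |c.2 - y.2|}, F3 y)
        + ∫⁻ y in {y : ℝ × ℝ | 3*ℓ/2 < |c.1 - y.1|} \ {y : ℝ × ℝ | 3*ℓ/2 < |c.2 - y.2|}, F4 y)
      ≤ (∫⁻ y in {y : ℝ × ℝ | ℓ ≤ |x.1 - y.1|}, F1 y)
        + ((∫⁻ y in {y : ℝ × ℝ | 3*ℓ/2 ≤ |c.1 - y.1|} ∩ {y : ℝ × ℝ | |x.2 - y.2| ≤ 2*ℓ}, F3 y)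
        + ∫⁻ y in {y : ℝ × ℝ | 3*ℓ/2 ≤ |c.1 - y.1|} ∩ {y : ℝ × ℝ | |c.2 - y.2| ≤ 3*ℓ/2}, F4 y) :=
        add_le_add (lintegral_mono_set sub1)
          (add_le_add (lintegral_mono_set sub3) (lintegral_mono_set sub4))
    _ ≤ ENNReal.ofReal (c0 * (2/θ₁ * ℓ^(-θ₁) * (4/θ₂)))
        + (ENNReal.ofReal (CK * (2/θ₂ * (3*ℓ/2)^(-θ₂) * (2/θ₂ * (2*ℓ)^θ₂)))
        + ENNReal.ofReal (CK * (2/θ₂ * (3*ℓ/2)^(-θ₂) * (2/θ₂ * (3*ℓ/2)^θ₂)))) :=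
        add_le_add I1 (add_le_add I3 I4)
    _ ≤ ENNReal.ofReal (8*CK/(θ₁*θ₂) + 16*CK/(θ₂*θ₂)) := by
        rw [← ENNReal.ofReal_add (by positivity) (by positivity),
          ← ENNReal.ofReal_add (by positivity) (by positivity)]
        apply ENNReal.ofReal_le_ofReal
        have hb1 := const_bound hCK hℓ hθ₁0 hθ₂0
        have hb3 := const_bound2 (A := 3*ℓ/2) (B := 2*ℓ) hCK (by linarith) (by linarith)
          (by linarith) hθ₂0 hθ₂1
        have hb4 := const_bound2 (A := 3*ℓ/2) (B := 3*ℓ/2) hCK (by linarith) (by linarith)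
          (by linarith) hθ₂0 hθ₂1
        rw [hc0]
        rw [show (8:ℝ)*CK/(θ₁*θ₂) + 16*CK/(θ₂*θ₂)
          = 8*CK/(θ₁*θ₂) + (8*CK/(θ₂*θ₂) + 8*CK/(θ₂*θ₂)) by ring]
        have e := const_bound hCK hℓ hθ₁0 hθ₂0
        linarith


lemma regionC {θ₁ θ₂ CK : ℝ} (hθ₁0 : 0 < θ₁) (hθ₂0 : 0 < θ₂) (hθ₂1 : θ₂ ≤ 1) (hCK : 0 < CK)
    {K : ℝ × ℝ → ℝ × ℝ → ℂ} (hK : IsCZXKernel θ₁ θ₂ CK K) (c x : ℝ × ℝ) {ℓ : ℝ} (hℓ : 0 < ℓ)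
    (hx1 : |x.1 - c.1| ≤ ℓ/2) (hx2 : |x.2 - c.2| ≤ ℓ/2) :
    ∫⁻ y in {y : ℝ × ℝ | 3*ℓ/2 < |c.2 - y.2|} \ {y : ℝ × ℝ | 3*ℓ/2 < |c.1 - y.1|},
      (‖K x y - K c y‖₊ : ℝ≥0∞)
      ≤ ENNReal.ofReal (8*CK/(θ₁*θ₂) + 16*CK/(θ₂*θ₂)) := by
  set c0 : ℝ := CK * (ℓ/2)^θ₁ with hc0
  have hc0n : 0 ≤ c0 := by positivity
  set F1 : ℝ × ℝ → ℝ≥0∞ := fun y => ENNReal.ofReal (c0 * (|x.2 - y.2| ^ (-(1+θ₁)) *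
      ((|x.1 - y.1| / |x.2 - y.2| + |x.2 - y.2| / |x.1 - y.1|) ^ (-θ₂) * |x.1 - y.1|⁻¹)))
    with hF1
  set F3 : ℝ × ℝ → ℝ≥0∞ := fun y =>
    ENNReal.ofReal (CK * (|x.1 - y.1| ^ (θ₂-1) * |c.2 - y.2| ^ (-(1+θ₂)))) with hF3
  set F4 : ℝ × ℝ → ℝ≥0∞ := fun y =>
    ENNReal.ofReal (CK * (|c.1 - y.1| ^ (θ₂-1) * |c.2 - y.2| ^ (-(1+θ₂)))) with hF4
  have key : ∫⁻ y in {y : ℝ × ℝ | 3*ℓ/2 < |c.2 - y.2|} \ {y : ℝ × ℝ | 3*ℓ/2 < |c.1 - y.1|},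
      (‖K x y - K c y‖₊ : ℝ≥0∞)
      ≤ ∫⁻ y in {y : ℝ × ℝ | 3*ℓ/2 < |c.2 - y.2|} \ {y : ℝ × ℝ | 3*ℓ/2 < |c.1 - y.1|},
        (F1 y + (F3 y + F4 y)) := by
    apply setLIntegral_mono_ae (by fun_prop)
    filter_upwards [ae_good x c] with y hy hyS
    obtain ⟨⟨hyx1, hyc1⟩, hyx2, hyc2⟩ := hy
    have h2 : 3*ℓ/2 < |c.2 - y.2| := hyS.1
    have h1 : |c.1 - y.1| ≤ 3*ℓ/2 := le_of_not_gt hyS.2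
    have htri2 : |c.2 - y.2| ≤ |c.2 - x.2| + |x.2 - y.2| := abs_sub_le c.2 x.2 y.2
    have htri1 : |x.1 - y.1| ≤ |x.1 - c.1| + |c.1 - y.1| := abs_sub_le x.1 c.1 y.1
    have hcx2 : |c.2 - x.2| = |x.2 - c.2| := abs_sub_comm _ _
    have ht : ℓ ≤ |x.2 - y.2| := by linarith
    have hT0 : (0:ℝ) < |x.2 - y.2| := lt_of_lt_of_le hℓ ht
    have hS0 : (0:ℝ) < |x.1 - y.1| := abs_pos.2 (sub_ne_zero.2 (Ne.symm hyx1))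
    have hS'0 : (0:ℝ) < |c.1 - y.1| := abs_pos.2 (sub_ne_zero.2 (Ne.symm hyc1))
    have hT'0 : (0:ℝ) < |c.2 - y.2| := by linarith
    have e1 := hK.holder_x2 x y c.2 (Ne.symm hyx1) (Ne.symm hyx2) (by linarith)
    rw [Dfac_def] at e1
    have b1 : ‖K x y - K (x.1, c.2) y‖ ≤ c0 * (|x.2 - y.2| ^ (-(1+θ₁)) *
        ((|x.1 - y.1| / |x.2 - y.2| + |x.2 - y.2| / |x.1 - y.1|) ^ (-θ₂) * |x.1 - y.1|⁻¹)) := by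
      refine e1.trans ?_
      rw [hc0]
      exact conv2 hCK.le (abs_nonneg _) hx2 hθ₁0.le (abs_nonneg _) (abs_nonneg _)
        (rpow_nonneg (by positivity) _)
    have s2 := hK.size (x.1, c.2) y (Ne.symm hyx1) (Ne.symm hyc2)
    rw [Dfac_def] at s2
    dsimp only at s2
    have b3 : ‖K (x.1, c.2) y‖ ≤ CK * (|x.1 - y.1| ^ (θ₂-1) * |c.2 - y.2| ^ (-(1+θ₂))) :=
      s2.trans (size_near_far hCK.le hS0 hT'0 hθ₂0)
    have s3 := hK.size c y (Ne.symm hyc1) (Ne.symm hyc2)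
    rw [Dfac_def] at s3
    have b4 : ‖K c y‖ ≤ CK * (|c.1 - y.1| ^ (θ₂-1) * |c.2 - y.2| ^ (-(1+θ₂))) :=
      s3.trans (size_near_far hCK.le hS'0 hT'0 hθ₂0)
    have tri : ‖K x y - K c y‖ ≤ ‖K x y - K (x.1, c.2) y‖ + ‖K (x.1, c.2) y - K c y‖ :=
      norm_sub_le_norm_sub_add_norm_sub _ _ _
    have tri2 : ‖K (x.1, c.2) y - K c y‖ ≤ ‖K (x.1, c.2) y‖ + ‖K c y‖ := norm_sub_le _ _
    rw [← (show ENNReal.ofReal ‖K x y - K c y‖ = (‖K x y - K c y‖₊ : ℝ≥0∞) from ofReal_norm_eq_enorm _), hF1, hF3, hF4]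
    calc ENNReal.ofReal ‖K x y - K c y‖
        ≤ ENNReal.ofReal (c0 * (|x.2 - y.2| ^ (-(1+θ₁)) *
            ((|x.1 - y.1| / |x.2 - y.2| + |x.2 - y.2| / |x.1 - y.1|) ^ (-θ₂) * |x.1 - y.1|⁻¹))
          + (CK * (|x.1 - y.1| ^ (θ₂-1) * |c.2 - y.2| ^ (-(1+θ₂)))
            + CK * (|c.1 - y.1| ^ (θ₂-1) * |c.2 - y.2| ^ (-(1+θ₂))))) :=
          ENNReal.ofReal_le_ofReal (by linarith)
      _ = _ := by
          rw [ENNReal.ofReal_add (by positivity) (by positivity),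
            ENNReal.ofReal_add (by positivity) (by positivity)]
  refine key.trans ?_
  rw [lintegral_add_left (by fun_prop), lintegral_add_left (by fun_prop)]
  have sub1 : {y : ℝ × ℝ | 3*ℓ/2 < |c.2 - y.2|} \ {y : ℝ × ℝ | 3*ℓ/2 < |c.1 - y.1|}
      ⊆ {y : ℝ × ℝ | ℓ ≤ |x.2 - y.2|} := by
    intro y hy
    have h2 : 3*ℓ/2 < |c.2 - y.2| := hy.1
    have htri2 : |c.2 - y.2| ≤ |c.2 - x.2| + |x.2 - y.2| := abs_sub_le c.2 x.2 y.2
    have hcx2 : |c.2 - x.2| = |x.2 - c.2| := abs_sub_comm _ _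
    show ℓ ≤ |x.2 - y.2|
    linarith
  have sub3 : {y : ℝ × ℝ | 3*ℓ/2 < |c.2 - y.2|} \ {y : ℝ × ℝ | 3*ℓ/2 < |c.1 - y.1|}
      ⊆ {y : ℝ × ℝ | |x.1 - y.1| ≤ 2*ℓ} ∩ {y : ℝ × ℝ | 3*ℓ/2 ≤ |c.2 - y.2|} := by
    intro y hy
    have h1 : |c.1 - y.1| ≤ 3*ℓ/2 := le_of_not_gt hy.2
    have htri1 : |x.1 - y.1| ≤ |x.1 - c.1| + |c.1 - y.1| := abs_sub_le x.1 c.1 y.1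
    constructor
    · show |x.1 - y.1| ≤ 2*ℓ
      linarith
    · show 3*ℓ/2 ≤ |c.2 - y.2|
      exact le_of_lt hy.1
  have sub4 : {y : ℝ × ℝ | 3*ℓ/2 < |c.2 - y.2|} \ {y : ℝ × ℝ | 3*ℓ/2 < |c.1 - y.1|}
      ⊆ {y : ℝ × ℝ | |c.1 - y.1| ≤ 3*ℓ/2} ∩ {y : ℝ × ℝ | 3*ℓ/2 ≤ |c.2 - y.2|} := by
    intro y hy
    constructor
    · show |c.1 - y.1| ≤ 3*ℓ/2
      exact le_of_not_gt hy.2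
    · show 3*ℓ/2 ≤ |c.2 - y.2|
      exact le_of_lt hy.1
  have I1 : ∫⁻ y in {y : ℝ × ℝ | ℓ ≤ |x.2 - y.2|}, F1 y
      ≤ ENNReal.ofReal (c0 * (2/θ₁ * ℓ^(-θ₁) * (4/θ₂))) := by
    rw [hF1]
    simp_rw [ENNReal.ofReal_mul hc0n]
    rw [lintegral_const_mul' _ _ ENNReal.ofReal_ne_top]
    exact mul_le_mul_right (M1' x.1 x.2 ℓ θ₁ θ₂ hℓ hθ₁0 hθ₂0) _
  have I3 : ∫⁻ y in {y : ℝ × ℝ | |x.1 - y.1| ≤ 2*ℓ} ∩ {y : ℝ × ℝ | 3*ℓ/2 ≤ |c.2 - y.2|}, F3 y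
      ≤ ENNReal.ofReal (CK * (2/θ₂ * (2*ℓ)^θ₂ * (2/θ₂ * (3*ℓ/2)^(-θ₂)))) := by
    rw [hF3]
    simp_rw [ENNReal.ofReal_mul hCK.le]
    rw [lintegral_const_mul' _ _ ENNReal.ofReal_ne_top]
    exact mul_le_mul_right (M2' x.1 c.2 (3*ℓ/2) (2*ℓ) θ₂ (by linarith) (by linarith) hθ₂0) _
  have I4 : ∫⁻ y in {y : ℝ × ℝ | |c.1 - y.1| ≤ 3*ℓ/2} ∩ {y : ℝ × ℝ | 3*ℓ/2 ≤ |c.2 - y.2|}, F4 y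
      ≤ ENNReal.ofReal (CK * (2/θ₂ * (3*ℓ/2)^θ₂ * (2/θ₂ * (3*ℓ/2)^(-θ₂)))) := by
    rw [hF4]
    simp_rw [ENNReal.ofReal_mul hCK.le]
    rw [lintegral_const_mul' _ _ ENNReal.ofReal_ne_top]
    exact mul_le_mul_right (M2' c.1 c.2 (3*ℓ/2) (3*ℓ/2) θ₂ (by linarith) (by linarith) hθ₂0) _
  calc (∫⁻ y in {y : ℝ × ℝ | 3*ℓ/2 < |c.2 - y.2|} \ {y : ℝ × ℝ | 3*ℓ/2 < |c.1 - y.1|}, F1 y)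
        + ((∫⁻ y in {y : ℝ × ℝ | 3*ℓ/2 < |c.2 - y.2|} \ {y : ℝ × ℝ | 3*ℓ/2 < |c.1 - y.1|}, F3 y)
        + ∫⁻ y in {y : ℝ × ℝ | 3*ℓ/2 < |c.2 - y.2|} \ {y : ℝ × ℝ | 3*ℓ/2 < |c.1 - y.1|}, F4 y)
      ≤ (∫⁻ y in {y : ℝ × ℝ | ℓ ≤ |x.2 - y.2|}, F1 y)
        + ((∫⁻ y in {y : ℝ × ℝ | |x.1 - y.1| ≤ 2*ℓ} ∩ {y : ℝ × ℝ | 3*ℓ/2 ≤ |c.2 - y.2|}, F3 y)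
        + ∫⁻ y in {y : ℝ × ℝ | |c.1 - y.1| ≤ 3*ℓ/2} ∩ {y : ℝ × ℝ | 3*ℓ/2 ≤ |c.2 - y.2|}, F4 y) :=
        add_le_add (lintegral_mono_set sub1)
          (add_le_add (lintegral_mono_set sub3) (lintegral_mono_set sub4))
    _ ≤ ENNReal.ofReal (c0 * (2/θ₁ * ℓ^(-θ₁) * (4/θ₂)))
        + (ENNReal.ofReal (CK * (2/θ₂ * (2*ℓ)^θ₂ * (2/θ₂ * (3*ℓ/2)^(-θ₂))))
        + ENNReal.ofReal (CK * (2/θ₂ * (3*ℓ/2)^θ₂ * (2/θ₂ * (3*ℓ/2)^(-θ₂))))) :=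
        add_le_add I1 (add_le_add I3 I4)
    _ ≤ ENNReal.ofReal (8*CK/(θ₁*θ₂) + 16*CK/(θ₂*θ₂)) := by
        rw [← ENNReal.ofReal_add (by positivity) (by positivity),
          ← ENNReal.ofReal_add (by positivity) (by positivity)]
        apply ENNReal.ofReal_le_ofReal
        have hb1 := const_bound hCK hℓ hθ₁0 hθ₂0
        have hb3 := const_bound2' (A := 3*ℓ/2) (B := 2*ℓ) hCK (by linarith) (by linarith)
          (by linarith) hθ₂0 hθ₂1
        have hb4 := const_bound2' (A := 3*ℓ/2) (B := 3*ℓ/2) hCK (by linarith) (by linarith)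
          (by linarith) hθ₂0 hθ₂1
        rw [hc0]
        rw [show (8:ℝ)*CK/(θ₁*θ₂) + 16*CK/(θ₂*θ₂)
          = 8*CK/(θ₁*θ₂) + (8*CK/(θ₂*θ₂) + 8*CK/(θ₂*θ₂)) by ring]
        linarith


end CZX

open CZX in
/-- Lemma 2.4, the Hörmander integral condition for CZX kernels. -/
theorem statement3 (θ₁ θ₂ : ℝ) (hθ₁ : θ₁ ∈ Ioc (0:ℝ) 1) (hθ₂ : θ₂ ∈ Ioc (0:ℝ) 1)
    (CK : ℝ) (hCK : 0 < CK) :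
    ∃ C : ℝ, 0 < C ∧ ∀ K : ℝ × ℝ → ℝ × ℝ → ℂ, IsCZXKernel θ₁ θ₂ CK K →
      ∀ (c : ℝ × ℝ) (ℓ : ℝ), 0 < ℓ → ∀ x ∈ sqr c ℓ,
        ∫⁻ y in (sqr c (3 * ℓ))ᶜ, (‖K x y - K c y‖₊ : ℝ≥0∞) ≤ ENNReal.ofReal C := by
  obtain ⟨hθ₁0, hθ₁1⟩ := hθ₁
  obtain ⟨hθ₂0, hθ₂1⟩ := hθ₂
  refine ⟨16*CK/(θ₁*θ₂) + ((8*CK/(θ₁*θ₂) + 16*CK/(θ₂*θ₂)) + (8*CK/(θ₁*θ₂) + 16*CK/(θ₂*θ₂))),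
    by positivity, ?_⟩
  intro K hK c ℓ hℓ x hx
  obtain ⟨⟨ha1, ha2⟩, hb1, hb2⟩ := hx
  have hx1 : |x.1 - c.1| ≤ ℓ/2 := abs_le.2 ⟨by linarith, by linarith⟩
  have hx2 : |x.2 - c.2| ≤ ℓ/2 := abs_le.2 ⟨by linarith, by linarith⟩
  have hcover : (sqr c (3 * ℓ))ᶜ ⊆
      ({y : ℝ × ℝ | 3*ℓ/2 < |c.1 - y.1|} ∩ {y : ℝ × ℝ | 3*ℓ/2 < |c.2 - y.2|})
      ∪ (({y : ℝ × ℝ | 3*ℓ/2 < |c.1 - y.1|} \ {y : ℝ × ℝ | 3*ℓ/2 < |c.2 - y.2|})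
        ∪ ({y : ℝ × ℝ | 3*ℓ/2 < |c.2 - y.2|} \ {y : ℝ × ℝ | 3*ℓ/2 < |c.1 - y.1|})) := by
    intro y hy
    have k1 : (3*ℓ/2 < |c.1 - y.1|) ∨ (3*ℓ/2 < |c.2 - y.2|) := by
      rw [Set.mem_compl_iff, sqr, Set.mem_prod, not_and_or] at hy
      rcases hy with h | h
      · left
        rw [mem_Icc, not_and_or, not_le, not_le] at h
        have l1 := le_abs_self (c.1 - y.1)
        have l2 : y.1 - c.1 ≤ |c.1 - y.1| := by rw [abs_sub_comm]; exact le_abs_self _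
        rcases h with h | h <;> linarith
      · right
        rw [mem_Icc, not_and_or, not_le, not_le] at h
        have l1 := le_abs_self (c.2 - y.2)
        have l2 : y.2 - c.2 ≤ |c.2 - y.2| := by rw [abs_sub_comm]; exact le_abs_self _
        rcases h with h | h <;> linarith
    by_cases hA : 3*ℓ/2 < |c.1 - y.1|
    · by_cases hB : 3*ℓ/2 < |c.2 - y.2|
      · exact Or.inl ⟨hA, hB⟩
      · exact Or.inr (Or.inl ⟨hA, hB⟩)
    · have hB : 3*ℓ/2 < |c.2 - y.2| := k1.resolve_left hA
      exact Or.inr (Or.inr ⟨hB, hA⟩)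
  calc ∫⁻ y in (sqr c (3 * ℓ))ᶜ, (‖K x y - K c y‖₊ : ℝ≥0∞)
      ≤ ∫⁻ y in ({y : ℝ × ℝ | 3*ℓ/2 < |c.1 - y.1|} ∩ {y : ℝ × ℝ | 3*ℓ/2 < |c.2 - y.2|})
          ∪ (({y : ℝ × ℝ | 3*ℓ/2 < |c.1 - y.1|} \ {y : ℝ × ℝ | 3*ℓ/2 < |c.2 - y.2|})
          ∪ ({y : ℝ × ℝ | 3*ℓ/2 < |c.2 - y.2|} \ {y : ℝ × ℝ | 3*ℓ/2 < |c.1 - y.1|})),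
          (‖K x y - K c y‖₊ : ℝ≥0∞) := lintegral_mono_set hcover
    _ ≤ (∫⁻ y in {y : ℝ × ℝ | 3*ℓ/2 < |c.1 - y.1|} ∩ {y : ℝ × ℝ | 3*ℓ/2 < |c.2 - y.2|},
          (‖K x y - K c y‖₊ : ℝ≥0∞))
        + ∫⁻ y in ({y : ℝ × ℝ | 3*ℓ/2 < |c.1 - y.1|} \ {y : ℝ × ℝ | 3*ℓ/2 < |c.2 - y.2|})
          ∪ ({y : ℝ × ℝ | 3*ℓ/2 < |c.2 - y.2|} \ {y : ℝ × ℝ | 3*ℓ/2 < |c.1 - y.1|}),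
          (‖K x y - K c y‖₊ : ℝ≥0∞) := lintegral_union_le _ _ _
    _ ≤ (∫⁻ y in {y : ℝ × ℝ | 3*ℓ/2 < |c.1 - y.1|} ∩ {y : ℝ × ℝ | 3*ℓ/2 < |c.2 - y.2|},
          (‖K x y - K c y‖₊ : ℝ≥0∞))
        + ((∫⁻ y in {y : ℝ × ℝ | 3*ℓ/2 < |c.1 - y.1|} \ {y : ℝ × ℝ | 3*ℓ/2 < |c.2 - y.2|},
          (‖K x y - K c y‖₊ : ℝ≥0∞))
          + ∫⁻ y in {y : ℝ × ℝ | 3*ℓ/2 < |c.2 - y.2|} \ {y : ℝ × ℝ | 3*ℓ/2 < |c.1 - y.1|},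
          (‖K x y - K c y‖₊ : ℝ≥0∞)) := add_le_add_right (lintegral_union_le _ _ _) _
    _ ≤ ENNReal.ofReal (16*CK/(θ₁*θ₂))
        + (ENNReal.ofReal (8*CK/(θ₁*θ₂) + 16*CK/(θ₂*θ₂))
          + ENNReal.ofReal (8*CK/(θ₁*θ₂) + 16*CK/(θ₂*θ₂))) :=
        add_le_add (regionA hθ₁0 hθ₂0 hCK hK c x hℓ hx1 hx2)
          (add_le_add (regionB hθ₁0 hθ₂0 hθ₂1 hCK hK c x hℓ hx1 hx2)
            (regionC hθ₁0 hθ₂0 hθ₂1 hCK hK c x hℓ hx1 hx2))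
    _ = ENNReal.ofReal (16*CK/(θ₁*θ₂) + ((8*CK/(θ₁*θ₂) + 16*CK/(θ₂*θ₂))
          + (8*CK/(θ₁*θ₂) + 16*CK/(θ₂*θ₂)))) := by
        rw [ENNReal.ofReal_add (by positivity) (by positivity),
          ENNReal.ofReal_add (by positivity) (by positivity),
          ENNReal.ofReal_add (by positivity) (by positivity),
          ENNReal.ofReal_add (by positivity) (by positivity)]
end
end

section
/- Let p ∈ (1,∞), θ₂ ∈ (0,1], and let φ : ℝ → [0,∞) be measurable with φ(t) ≥ 1 for all t ∈ [−1,1]. For t₁, t₂ > 0 set K_{t₁,t₂,θ₂}(x) := (t₁/t₂ + t₂/t₁)^{−θ₂}(1/t₁)φ(x₁/t₁)(1/t₂)φ(x₂/t₂). Let w be a weight on ℝ² such that σ := w^{−1/(p−1)} is locally integrable, and suppose N < ∞ is such that ‖K_{t₁,t₂,θ₂} * f‖_{L^p(w)} ≤ N ‖f‖_{L^p(w)} for all t₁, t₂ > 0 and all nonnegative f ∈ L^p(w). Then there is an absolute constant C such that for every axes-parallel rectangle R ⊂ ℝ², ⟨w⟩_R^{1/p} ⟨σ⟩_R^{1/p'}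 ≤ C N · ecc(R)^{θ₂}, where 1/p + 1/p' = 1. -/
open MeasureTheory Real Set Filter
open scoped ENNReal NNReal

noncomputable section

/-- The axes-parallel rectangle with centre `c` and side lengths `t₁, t₂`. -/
def rect (c : ℝ × ℝ) (t₁ t₂ : ℝ) : Set (ℝ × ℝ) :=
  Icc (c.1 - t₁ / 2) (c.1 + t₁ / 2) ×ˢ Icc (c.2 - t₂ / 2) (c.2 + t₂ / 2)

/-- The real-valued kernel `K_{t₁,t₂,θ₂}` built from a nonnegative bump function `φ`. -/
def KphiR (θ₂ t₁ t₂ : ℝ) (φ : ℝ → ℝ) (x : ℝ × ℝ) : ℝ :=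
  (t₁ / t₂ + t₂ / t₁) ^ (-θ₂) * ((1 / t₁) * φ (x.1 / t₁)) * ((1 / t₂) * φ (x.2 / t₂))

lemma rect_meas (c : ℝ × ℝ) (t₁ t₂ : ℝ) : MeasurableSet (rect c t₁ t₂) :=
  measurableSet_Icc.prod measurableSet_Icc

lemma rect_cpt (c : ℝ × ℝ) (t₁ t₂ : ℝ) : IsCompact (rect c t₁ t₂) :=
  isCompact_Icc.prod isCompact_Icc

lemma rect_volume (c : ℝ × ℝ) {t₁ t₂ : ℝ} (h1 : 0 < t₁) (h2 : 0 < t₂) :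
    volume (rect c t₁ t₂) = ENNReal.ofReal (t₁ * t₂) := by
  rw [rect, MeasureTheory.Measure.volume_eq_prod, MeasureTheory.Measure.prod_prod,
    Real.volume_Icc, Real.volume_Icc, ← ENNReal.ofReal_mul (by linarith)]
  congr 1
  ring

lemma Klow {θ₂ t₁ t₂ : ℝ} (ht₁ : 0 < t₁) (ht₂ : 0 < t₂)
    {φ : ℝ → ℝ} (hφ0 : ∀ t, 0 ≤ φ t) (hφ1 : ∀ t ∈ Icc (-1:ℝ) 1, 1 ≤ φ t)
    {c x y : ℝ × ℝ} (hx : x ∈ rect c t₁ t₂) (hy : y ∈ rect c t₁ t₂) :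
    (t₁ / t₂ + t₂ / t₁) ^ (-θ₂) * (1 / t₁) * (1 / t₂) ≤ KphiR θ₂ t₁ t₂ φ (x - y) := by
  obtain ⟨⟨hx11, hx12⟩, hx21, hx22⟩ := hx
  obtain ⟨⟨hy11, hy12⟩, hy21, hy22⟩ := hy
  have h1 : (x - y).1 / t₁ ∈ Icc (-1:ℝ) 1 := by
    constructor
    · rw [le_div_iff₀ ht₁]; simp; linarith
    · rw [div_le_one ht₁]; simp; linarith
  have h2 : (x - y).2 / t₂ ∈ Icc (-1:ℝ) 1 := by
    constructor
    · rw [le_div_iff₀ ht₂]; simp; linarith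
    · rw [div_le_one ht₂]; simp; linarith
  have hD : 0 ≤ (t₁ / t₂ + t₂ / t₁) ^ (-θ₂) := by positivity
  calc (t₁ / t₂ + t₂ / t₁) ^ (-θ₂) * (1 / t₁) * (1 / t₂)
      = (t₁ / t₂ + t₂ / t₁) ^ (-θ₂) * ((1 / t₁) * 1) * ((1 / t₂) * 1) := by ring
    _ ≤ KphiR θ₂ t₁ t₂ φ (x - y) := by
        unfold KphiR
        gcongr <;>
        first
          | exact hφ1 _ h1
          | exact hφ1 _ h2
          | exact mul_nonneg hD (mul_nonneg (by positivity) (hφ0 _))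

/-- if all the operators `f ↦ K_{t₁,t₂,θ₂} * f` are uniformly bounded on
`L^p(w)` with constant `N`, then `⟨w⟩_R^{1/p} ⟨σ⟩_R^{1/p'} ≤ C·N·ecc(R)^{θ₂}` for every
axes-parallel rectangle `R`, where `σ = w^{-1/(p-1)}` and `C` is absolute. -/
theorem statement13 :
    ∃ C : ℝ, 0 < C ∧ ∀ p p' : ℝ, 1 < p → 1 / p + 1 / p' = 1 →
      ∀ θ₂ : ℝ, θ₂ ∈ Ioc (0:ℝ) 1 →
      ∀ φ : ℝ → ℝ, Measurable φ → (∀ t, 0 ≤ φ t) → (∀ t ∈ Icc (-1:ℝ) 1, 1 ≤ φ t) →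
      ∀ w : ℝ × ℝ → ℝ, Measurable w → (∀ x, 0 < w x) →
        LocallyIntegrable w volume →
        LocallyIntegrable (fun x => w x ^ (-1 / (p - 1))) volume →
      ∀ N : ℝ, 0 ≤ N →
      (∀ t₁ t₂ : ℝ, 0 < t₁ → 0 < t₂ →
        ∀ f : ℝ × ℝ → ℝ, Measurable f → (∀ x, 0 ≤ f x) →
          (∫⁻ x, (∫⁻ y, ENNReal.ofReal (KphiR θ₂ t₁ t₂ φ (x - y) * f y)) ^ p *
              ENNReal.ofReal (w x)) ^ (1 / p) ≤
            ENNReal.ofReal N *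
              (∫⁻ x, ENNReal.ofReal (f x) ^ p * ENNReal.ofReal (w x)) ^ (1 / p)) →
      ∀ (c : ℝ × ℝ) (t₁ t₂ : ℝ), 0 < t₁ → 0 < t₂ →
        ((∫⁻ x in rect c t₁ t₂, ENNReal.ofReal (w x)) / volume (rect c t₁ t₂)) ^ (1 / p) *
          ((∫⁻ x in rect c t₁ t₂, ENNReal.ofReal (w x ^ (-1 / (p - 1)))) /
              volume (rect c t₁ t₂)) ^ (1 / p') ≤
          ENNReal.ofReal (C * N * max (t₁ / t₂) (t₂ / t₁) ^ θ₂) := by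
  refine ⟨2, by norm_num, ?_⟩
  intro p p' hp hpp' θ₂ hθ φ hφm hφ0 hφ1 w hwm hw0 hwl hσl N hN hbound c t₁ t₂ ht₁ ht₂
  have hp0 : (0:ℝ) < p := lt_trans one_pos hp
  have hp1 : (0:ℝ) < p - 1 := by linarith
  have hip : (0:ℝ) ≤ 1 / p := by positivity
  have hip' : (0:ℝ) ≤ 1 / p' := by
    have h1 : 1 / p < 1 := by rw [div_lt_one hp0]; exact hp
    linarith
  set R := rect c t₁ t₂ with hRdef
  have hRm : MeasurableSet R := rect_meas c t₁ t₂
  have hV : volume R = ENNReal.ofReal (t₁ * t₂) := rect_volume c ht₁ ht₂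
  have hV0 : volume R ≠ 0 := by
    rw [hV, Ne, ENNReal.ofReal_eq_zero, not_le]; positivity
  have hVtop : volume R ≠ ⊤ := by rw [hV]; exact ENNReal.ofReal_ne_top
  have hσm : Measurable fun x => w x ^ (-1 / (p - 1)) := hwm.pow measurable_const
  have hσpos : ∀ x : ℝ × ℝ, 0 < w x ^ (-1 / (p - 1)) := fun x =>
    Real.rpow_pos_of_pos (hw0 x) _
  set A := ∫⁻ x in R, ENNReal.ofReal (w x) with hA
  set B := ∫⁻ x in R, ENNReal.ofReal (w x ^ (-1 / (p - 1))) with hB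
  have hAtop : A ≠ ⊤ :=
    (Integrable.lintegral_lt_top (hwl.integrableOn_isCompact (rect_cpt c t₁ t₂))).ne
  have hBtop : B ≠ ⊤ :=
    (Integrable.lintegral_lt_top (hσl.integrableOn_isCompact (rect_cpt c t₁ t₂))).ne
  have hA0 : A ≠ 0 := by
    intro h
    rw [hA, lintegral_eq_zero_iff hwm.ennreal_ofReal] at h
    rw [Filter.EventuallyEq, ae_iff] at h
    apply hV0
    rw [← Measure.restrict_apply_univ R]
    rw [← h]
    congr 1
    ext x
    simp [ENNReal.ofReal_eq_zero, not_le, hw0 x]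
  have hB0 : B ≠ 0 := by
    intro h
    rw [hB, lintegral_eq_zero_iff hσm.ennreal_ofReal] at h
    rw [Filter.EventuallyEq, ae_iff] at h
    apply hV0
    rw [← Measure.restrict_apply_univ R, ← h]
    congr 1
    ext x
    simp [ENNReal.ofReal_eq_zero, not_le, hσpos x]
  -- the test function
  set f : ℝ × ℝ → ℝ := R.indicator (fun x => w x ^ (-1 / (p - 1))) with hf
  have hfm : Measurable f := hσm.indicator hRm
  have hf0 : ∀ x, 0 ≤ f x := fun x =>
    Set.indicator_nonneg (fun y _ => (hσpos y).le) x
  have hkey := hbound t₁ t₂ ht₁ ht₂ f hfm hf0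
  -- rewrite the RHS of hkey
  have hwid : ∀ x : ℝ × ℝ, (w x ^ (-1 / (p - 1))) ^ p * w x = w x ^ (-1 / (p - 1)) := by
    intro x
    calc (w x ^ (-1 / (p - 1))) ^ p * w x
        = w x ^ (-1 / (p - 1) * p) * w x ^ (1:ℝ) := by
          rw [← Real.rpow_mul (hw0 x).le, Real.rpow_one]
      _ = w x ^ (-1 / (p - 1) * p + 1) := (Real.rpow_add (hw0 x) _ _).symm
      _ = w x ^ (-1 / (p - 1)) := by
          congr 1
          field_simp
          ring
  have hRHS : (∫⁻ x, ENNReal.ofReal (f x) ^ p * ENNReal.ofReal (w x)) = B := by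
    have hpt : ∀ x, ENNReal.ofReal (f x) ^ p * ENNReal.ofReal (w x)
        = R.indicator (fun x => ENNReal.ofReal (w x ^ (-1 / (p - 1)))) x := by
      intro x
      by_cases hx : x ∈ R
      · rw [Set.indicator_of_mem hx, hf, Set.indicator_of_mem hx,
          ENNReal.ofReal_rpow_of_nonneg (hσpos x).le hp0.le,
          ← ENNReal.ofReal_mul (Real.rpow_nonneg (hσpos x).le p), hwid x]
      · rw [Set.indicator_of_notMem hx, hf, Set.indicator_of_notMem hx,
          ENNReal.ofReal_zero, ENNReal.zero_rpow_of_pos hp0, zero_mul]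
    rw [lintegral_congr hpt, lintegral_indicator hRm]
  rw [hRHS] at hkey
  -- the lower bound constant
  set Dr : ℝ := (t₁ / t₂ + t₂ / t₁) ^ (-θ₂) * (1 / t₁) * (1 / t₂) with hDrdef
  have hDr : 0 < Dr := by rw [hDrdef]; positivity
  -- inner integral lower bound
  have hinner : ∀ x ∈ R, ENNReal.ofReal Dr * B ≤
      ∫⁻ y, ENNReal.ofReal (KphiR θ₂ t₁ t₂ φ (x - y) * f y) := by
    intro x hx
    have h1 : ENNReal.ofReal Dr * B
        = ∫⁻ y in R, ENNReal.ofReal (Dr * w y ^ (-1 / (p - 1))) := by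
      rw [hB, ← lintegral_const_mul' _ _ ENNReal.ofReal_ne_top]
      exact lintegral_congr fun y => (ENNReal.ofReal_mul hDr.le).symm
    rw [h1]
    refine le_trans (setLIntegral_mono' hRm ?_) (setLIntegral_le_lintegral _ _)
    intro y hy
    rw [hf, Set.indicator_of_mem hy]
    exact ENNReal.ofReal_le_ofReal
      (mul_le_mul_of_nonneg_right (Klow ht₁ ht₂ hφ0 hφ1 hx hy) (hσpos y).le)
  -- LHS lower bound
  have hconst_ne_top : (ENNReal.ofReal Dr * B) ^ p ≠ ⊤ :=
    ENNReal.rpow_ne_top_of_nonneg hp0.le (ENNReal.mul_ne_top ENNReal.ofReal_ne_top hBtop)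
  have h2 : (ENNReal.ofReal Dr * B) ^ p * A ≤
      ∫⁻ x, (∫⁻ y, ENNReal.ofReal (KphiR θ₂ t₁ t₂ φ (x - y) * f y)) ^ p
        * ENNReal.ofReal (w x) := by
    calc (ENNReal.ofReal Dr * B) ^ p * A
        = ∫⁻ x in R, (ENNReal.ofReal Dr * B) ^ p * ENNReal.ofReal (w x) := by
          rw [hA, ← lintegral_const_mul' _ _ hconst_ne_top]
      _ ≤ ∫⁻ x in R, (∫⁻ y, ENNReal.ofReal (KphiR θ₂ t₁ t₂ φ (x - y) * f y)) ^ p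
            * ENNReal.ofReal (w x) :=
          setLIntegral_mono' hRm fun x hx =>
            mul_le_mul_left (ENNReal.rpow_le_rpow (hinner x hx) hp0.le) _
      _ ≤ _ := setLIntegral_le_lintegral _ _
  have hLHS : ENNReal.ofReal Dr * B * A ^ (1 / p) ≤
      (∫⁻ x, (∫⁻ y, ENNReal.ofReal (KphiR θ₂ t₁ t₂ φ (x - y) * f y)) ^ p
        * ENNReal.ofReal (w x)) ^ (1 / p) := by
    calc ENNReal.ofReal Dr * B * A ^ (1 / p)
        = ((ENNReal.ofReal Dr * B) ^ p * A) ^ (1 / p) := by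
          rw [ENNReal.mul_rpow_of_nonneg _ _ hip, ← ENNReal.rpow_mul, mul_one_div,
            div_self hp0.ne', ENNReal.rpow_one]
      _ ≤ _ := ENNReal.rpow_le_rpow h2 hip
  have hmain : ENNReal.ofReal Dr * B * A ^ (1 / p) ≤ ENNReal.ofReal N * B ^ (1 / p) :=
    hLHS.trans hkey
  -- cancel B^(1/p)
  have hBpos : (0:ℝ≥0∞) < B := pos_iff_ne_zero.mpr hB0
  have hBp0 : B ^ (1 / p) ≠ 0 := (ENNReal.rpow_pos hBpos hBtop).ne'
  have hBptop : B ^ (1 / p) ≠ ⊤ := ENNReal.rpow_ne_top_of_nonneg hip hBtop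
  have hsplit : B ^ (1 / p) * B ^ (1 / p') = B := by
    rw [← ENNReal.rpow_add _ _ hB0 hBtop, hpp', ENNReal.rpow_one]
  have h4 : ENNReal.ofReal Dr * B ^ (1 / p') * A ^ (1 / p) ≤ ENNReal.ofReal N := by
    rw [← ENNReal.mul_le_mul_iff_left hBp0 hBptop]
    calc ENNReal.ofReal Dr * B ^ (1 / p') * A ^ (1 / p) * B ^ (1 / p)
        = ENNReal.ofReal Dr * (B ^ (1 / p) * B ^ (1 / p')) * A ^ (1 / p) := by ring
      _ = ENNReal.ofReal Dr * B * A ^ (1 / p) := by rw [hsplit]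
      _ ≤ ENNReal.ofReal N * B ^ (1 / p) := hmain
  -- final algebra
  have hgoal_eq : (A / volume R) ^ (1 / p) * (B / volume R) ^ (1 / p')
      = (A ^ (1 / p) * B ^ (1 / p')) / volume R := by
    have hinv : ((volume R)⁻¹) ^ (1 / p) * ((volume R)⁻¹) ^ (1 / p') = (volume R)⁻¹ := by
      rw [← ENNReal.rpow_add _ _ (ENNReal.inv_ne_zero.mpr hVtop)
        (ENNReal.inv_ne_top.mpr hV0), hpp', ENNReal.rpow_one]
    rw [div_eq_mul_inv A, div_eq_mul_inv B, ENNReal.mul_rpow_of_nonneg _ _ hip,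
      ENNReal.mul_rpow_of_nonneg _ _ hip', div_eq_mul_inv]
    calc A ^ (1 / p) * (volume R)⁻¹ ^ (1 / p) * (B ^ (1 / p') * (volume R)⁻¹ ^ (1 / p'))
        = A ^ (1 / p) * B ^ (1 / p')
            * ((volume R)⁻¹ ^ (1 / p) * (volume R)⁻¹ ^ (1 / p')) := by ring
      _ = A ^ (1 / p) * B ^ (1 / p') * (volume R)⁻¹ := by rw [hinv]
  rw [hgoal_eq, ENNReal.div_le_iff hV0 hVtop]
  have hcD0 : ENNReal.ofReal Dr ≠ 0 := (ENNReal.ofReal_pos.mpr hDr).ne'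
  have h5 : A ^ (1 / p) * B ^ (1 / p') ≤ ENNReal.ofReal N / ENNReal.ofReal Dr := by
    rw [ENNReal.le_div_iff_mul_le (Or.inl hcD0) (Or.inl ENNReal.ofReal_ne_top)]
    calc A ^ (1 / p) * B ^ (1 / p') * ENNReal.ofReal Dr
        = ENNReal.ofReal Dr * B ^ (1 / p') * A ^ (1 / p) := by ring
      _ ≤ ENNReal.ofReal N := h4
  refine h5.trans ?_
  have hmax0 : (0:ℝ) ≤ max (t₁ / t₂) (t₂ / t₁) :=
    le_trans (by positivity : (0:ℝ) ≤ t₁ / t₂) (le_max_left _ _)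
  have hT0 : (0:ℝ) ≤ 2 * N * max (t₁ / t₂) (t₂ / t₁) ^ θ₂ :=
    mul_nonneg (mul_nonneg (by norm_num) hN) (Real.rpow_nonneg hmax0 θ₂)
  rw [hV, ← ENNReal.ofReal_div_of_pos hDr, ← ENNReal.ofReal_mul hT0]
  apply ENNReal.ofReal_le_ofReal
  -- now a real inequality : N / Dr ≤ 2*N*m^θ₂ * (t₁*t₂)
  set m : ℝ := max (t₁ / t₂) (t₂ / t₁) with hm
  have hm0 : (0:ℝ) < m := lt_max_of_lt_left (by positivity)
  set s : ℝ := t₁ / t₂ + t₂ / t₁ with hs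
  have hs0 : (0:ℝ) < s := by positivity
  have hsm : s ≤ 2 * m := by
    have h1 := le_max_left (t₁ / t₂) (t₂ / t₁)
    have h2 := le_max_right (t₁ / t₂) (t₂ / t₁)
    rw [hs, hm]; linarith
  have hkey2 : s ^ θ₂ ≤ 2 * m ^ θ₂ := by
    calc s ^ θ₂ ≤ (2 * m) ^ θ₂ := Real.rpow_le_rpow hs0.le hsm hθ.1.le
      _ = 2 ^ θ₂ * m ^ θ₂ := Real.mul_rpow (by norm_num) hm0.le
      _ ≤ 2 * m ^ θ₂ := by
          have h2 : (2:ℝ) ^ θ₂ ≤ 2 := by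
            calc (2:ℝ) ^ θ₂ ≤ 2 ^ (1:ℝ) :=
              Real.rpow_le_rpow_of_exponent_le one_le_two hθ.2
            _ = 2 := Real.rpow_one 2
          exact mul_le_mul_of_nonneg_right h2 (Real.rpow_nonneg hm0.le θ₂)
  have hDiv : N / Dr = N * s ^ θ₂ * (t₁ * t₂) := by
    rw [hDrdef, Real.rpow_neg hs0.le]
    have hsθ : (0:ℝ) < s ^ θ₂ := Real.rpow_pos_of_pos hs0 θ₂
    field_simp
  rw [hDiv]
  calc N * s ^ θ₂ * (t₁ * t₂) ≤ N * (2 * m ^ θ₂) * (t₁ * t₂) := by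
        have := mul_le_mul_of_nonneg_left hkey2 hN
        nlinarith [mul_pos ht₁ ht₂]
    _ = 2 * N * m ^ θ₂ * (t₁ * t₂) := by ring
end
end

section
/- Let θ₁ ∈ (0,1] and let K be a CZX kernel on ℝ² with parameters θ₁, θ₂ = 1 and constant C_K. Then there is a constant C, depending only on C_K and θ₁, with the following property: for every axes-parallel square J ⊂ ℝ², every bounded compactly supported measurable f that vanishes on 3J, and all x, y, z ∈ J, the integrals ∫_{(3J)^c} K(y,u) f(u) du and ∫_{(3J)^c} K(z,u) f(u) du converge absolutely and | ∫_{(3J)^c} K(y,u) f(u) du − ∫_{(3J)^c} K(z,u) f(u) du | ≤ C · M_* f(x), where M_* is the strong maximal operator. -/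
open MeasureTheory Real Set Filter
open scoped ENNReal NNReal

noncomputable section

/-- The strong maximal operator on `ℝ²` (supremum of averages over all axes-parallel
rectangles containing `x`). -/
def strongMax (f : ℝ × ℝ → ℂ) (x : ℝ × ℝ) : ℝ≥0∞ :=
  ⨆ (c : ℝ × ℝ) (t₁ : ℝ) (t₂ : ℝ) (_ : 0 < t₁) (_ : 0 < t₂) (_ : x ∈ rect c t₁ t₂),
    (∫⁻ y in rect c t₁ t₂, (‖f y‖₊ : ℝ≥0∞)) / volume (rect c t₁ t₂)

set_option maxHeartbeats 1000000

lemma dfac_one (x y : ℝ × ℝ) (h1 : x.1 ≠ y.1) (h2 : x.2 ≠ y.2) :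
    Dfac 1 x y = |x.1 - y.1| * |x.2 - y.2| / ((x.1 - y.1)^2 + (x.2 - y.2)^2) := by
  have ha : 0 < |x.1 - y.1| := abs_pos.2 (sub_ne_zero.2 h1)
  have hb : 0 < |x.2 - y.2| := abs_pos.2 (sub_ne_zero.2 h2)
  have key : |x.1 - y.1| / |x.2 - y.2| + |x.2 - y.2| / |x.1 - y.1|
      = ((x.1-y.1)^2 + (x.2-y.2)^2) / (|x.1-y.1| * |x.2-y.2|) := by
    rw [div_add_div _ _ (ne_of_gt hb) (ne_of_gt ha), div_eq_div_iff (by positivity) (by positivity)]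
    rw [← sq_abs (x.1-y.1), ← sq_abs (x.2-y.2)]; ring
  rw [Dfac, key, Real.rpow_neg_one, inv_div]

variable {θ₁ CK : ℝ} {K : ℝ × ℝ → ℝ × ℝ → ℂ}

lemma size' (hK : IsCZXKernel θ₁ 1 CK K) (hCK : 0 ≤ CK) (x y : ℝ × ℝ)
    (h1 : x.1 ≠ y.1) (h2 : x.2 ≠ y.2) :
    ‖K x y‖ ≤ CK / ((x.1 - y.1)^2 + (x.2 - y.2)^2) := by
  have ha : 0 < |x.1 - y.1| := abs_pos.2 (sub_ne_zero.2 h1)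
  have hb : 0 < |x.2 - y.2| := abs_pos.2 (sub_ne_zero.2 h2)
  have hd : (0:ℝ) < (x.1-y.1)^2 + (x.2-y.2)^2 := by
    have := sub_ne_zero.2 h1; positivity
  refine (hK.size x y h1 h2).trans (le_of_eq ?_)
  rw [dfac_one x y h1 h2]; field_simp

lemma holder1' (hK : IsCZXKernel θ₁ 1 CK K) (hθ : 0 < θ₁) (x y : ℝ × ℝ) (w : ℝ)
    (h1 : x.1 ≠ y.1) (h2 : x.2 ≠ y.2) (hw : |x.1 - w| ≤ |x.1 - y.1| / 2) :
    ‖K x y - K (w, x.2) y‖ ≤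
      CK * |x.1 - w| ^ θ₁ / (|x.1 - y.1| ^ θ₁ * ((x.1 - y.1)^2 + (x.2 - y.2)^2)) := by
  have ha : 0 < |x.1 - y.1| := abs_pos.2 (sub_ne_zero.2 h1)
  have hb : 0 < |x.2 - y.2| := abs_pos.2 (sub_ne_zero.2 h2)
  have hd : (0:ℝ) < (x.1-y.1)^2 + (x.2-y.2)^2 := by
    have := sub_ne_zero.2 h1; positivity
  refine (hK.holder_x1 x y w h1 h2 hw).trans (le_of_eq ?_)
  rw [dfac_one x y h1 h2, Real.rpow_add ha, Real.rpow_one]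
  have hap : (0:ℝ) < |x.1-y.1| ^ θ₁ := Real.rpow_pos_of_pos ha θ₁
  field_simp

lemma holder2' (hK : IsCZXKernel θ₁ 1 CK K) (hθ : 0 < θ₁) (x y : ℝ × ℝ) (w : ℝ)
    (h1 : x.1 ≠ y.1) (h2 : x.2 ≠ y.2) (hw : |x.2 - w| ≤ |x.2 - y.2| / 2) :
    ‖K x y - K (x.1, w) y‖ ≤
      CK * |x.2 - w| ^ θ₁ / (|x.2 - y.2| ^ θ₁ * ((x.1 - y.1)^2 + (x.2 - y.2)^2)) := by
  have ha : 0 < |x.1 - y.1| := abs_pos.2 (sub_ne_zero.2 h1)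
  have hb : 0 < |x.2 - y.2| := abs_pos.2 (sub_ne_zero.2 h2)
  have hd : (0:ℝ) < (x.1-y.1)^2 + (x.2-y.2)^2 := by
    have := sub_ne_zero.2 h1; positivity
  refine (hK.holder_x2 x y w h1 h2 hw).trans (le_of_eq ?_)
  rw [dfac_one x y h1 h2, Real.rpow_add hb, Real.rpow_one]
  have hbp : (0:ℝ) < |x.2-y.2| ^ θ₁ := Real.rpow_pos_of_pos hb θ₁
  field_simp

lemma move1 (hK : IsCZXKernel θ₁ 1 CK K) (hθ : 0 < θ₁) (hCK : 0 ≤ CK)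
    {c1 ℓ A : ℝ} (hℓ : 0 < ℓ) (hℓA : ℓ ≤ A)
    {p1 q1 s : ℝ} (hp : p1 ∈ Icc (c1 - ℓ/2) (c1 + ℓ/2)) (hq : q1 ∈ Icc (c1 - ℓ/2) (c1 + ℓ/2))
    (u : ℝ × ℝ) (hA : ∀ t ∈ Icc (c1 - ℓ/2) (c1 + ℓ/2), A ≤ |t - u.1|) (hs : s ≠ u.2) :
    ‖K (p1, s) u - K (q1, s) u‖ ≤ 2 * CK * ℓ ^ θ₁ / (A ^ θ₁ * (A^2 + (s - u.2)^2)) := by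
  have hA0 : 0 < A := lt_of_lt_of_le hℓ hℓA
  set m := (p1 + q1) / 2 with hm
  have hmIcc : m ∈ Icc (c1 - ℓ/2) (c1 + ℓ/2) := by
    constructor <;> [skip; skip] <;>
      simp only [hm] <;> cases hp with | intro a b => cases hq with | intro a' b' => linarith
  have hpq : |p1 - q1| ≤ ℓ := by
    rw [abs_sub_le_iff]; cases hp with | intro a b => cases hq with | intro a' b' =>
      constructor <;> linarith
  have hpu : A ≤ |p1 - u.1| := hA p1 hp
  have hmu : A ≤ |m - u.1| := hA m hmIcc
  have hp1 : p1 ≠ u.1 := by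
    intro h; rw [h, sub_self, abs_zero] at hpu; linarith
  have hm1 : m ≠ u.1 := by
    intro h; rw [h, sub_self, abs_zero] at hmu; linarith
  have hpm : |p1 - m| ≤ ℓ / 2 := by
    have h : p1 - m = (p1 - q1) / 2 := by rw [hm]; ring
    rw [h, abs_div, abs_two]; linarith
  have hmq : |m - q1| ≤ ℓ / 2 := by
    have h : m - q1 = (p1 - q1) / 2 := by rw [hm]; ring
    rw [h, abs_div, abs_two]; linarith
  have key1 : ‖K (p1, s) u - K (m, s) u‖ ≤
      CK * ℓ ^ θ₁ / (A ^ θ₁ * (A^2 + (s - u.2)^2)) := by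
    have hb := holder1' hK hθ (p1, s) u m hp1 hs (by
      simp only []
      calc |p1 - m| ≤ ℓ / 2 := hpm
        _ ≤ |p1 - u.1| / 2 := by linarith [hℓA.trans hpu])
    refine hb.trans ?_
    have hnum : CK * |p1 - m| ^ θ₁ ≤ CK * ℓ ^ θ₁ := by
      apply mul_le_mul_of_nonneg_left _ hCK
      exact Real.rpow_le_rpow (abs_nonneg _) (hpm.trans (by linarith)) hθ.le
    have hden : A ^ θ₁ * (A^2 + (s - u.2)^2) ≤ |p1 - u.1| ^ θ₁ * (((p1,s).1 - u.1)^2 + ((p1,s).2 - u.2)^2) := by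
      apply mul_le_mul
      · exact Real.rpow_le_rpow hA0.le hpu hθ.le
      · simp only []
        have : A^2 ≤ (p1 - u.1)^2 := by
          rw [← sq_abs (p1 - u.1)]; exact pow_le_pow_left₀ hA0.le hpu 2
        linarith
      · positivity
      · positivity
    apply div_le_div₀ (by positivity) hnum (by positivity) hden
  have key2 : ‖K (m, s) u - K (q1, s) u‖ ≤
      CK * ℓ ^ θ₁ / (A ^ θ₁ * (A^2 + (s - u.2)^2)) := by
    have hb := holder1' hK hθ (m, s) u q1 hm1 hs (by
      simp only []
      calc |m - q1| ≤ ℓ / 2 := hmq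
        _ ≤ |m - u.1| / 2 := by linarith [hℓA.trans hmu])
    refine hb.trans ?_
    have hnum : CK * |m - q1| ^ θ₁ ≤ CK * ℓ ^ θ₁ := by
      apply mul_le_mul_of_nonneg_left _ hCK
      exact Real.rpow_le_rpow (abs_nonneg _) (hmq.trans (by linarith)) hθ.le
    have hden : A ^ θ₁ * (A^2 + (s - u.2)^2) ≤ |m - u.1| ^ θ₁ * (((m,s).1 - u.1)^2 + ((m,s).2 - u.2)^2) := by
      apply mul_le_mul
      · exact Real.rpow_le_rpow hA0.le hmu hθ.le
      · simp only []
        have : A^2 ≤ (m - u.1)^2 := by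
          rw [← sq_abs (m - u.1)]; exact pow_le_pow_left₀ hA0.le hmu 2
        linarith
      · positivity
      · positivity
    apply div_le_div₀ (by positivity) hnum (by positivity) hden
  calc ‖K (p1, s) u - K (q1, s) u‖
      ≤ ‖K (p1, s) u - K (m, s) u‖ + ‖K (m, s) u - K (q1, s) u‖ := by
        have h : K (p1, s) u - K (q1, s) u
            = (K (p1, s) u - K (m, s) u) + (K (m, s) u - K (q1, s) u) := by ring
        rw [h]; exact norm_add_le _ _
    _ ≤ 2 * CK * ℓ ^ θ₁ / (A ^ θ₁ * (A^2 + (s - u.2)^2)) := by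
        have := add_le_add key1 key2
        calc _ ≤ _ := this
          _ = 2 * CK * ℓ ^ θ₁ / (A ^ θ₁ * (A^2 + (s - u.2)^2)) := by ring


lemma move2 (hK : IsCZXKernel θ₁ 1 CK K) (hθ : 0 < θ₁) (hCK : 0 ≤ CK)
    {c2 ℓ A : ℝ} (hℓ : 0 < ℓ) (hℓA : ℓ ≤ A)
    {p2 q2 r : ℝ} (hp : p2 ∈ Icc (c2 - ℓ/2) (c2 + ℓ/2)) (hq : q2 ∈ Icc (c2 - ℓ/2) (c2 + ℓ/2))
    (u : ℝ × ℝ) (hA : ∀ t ∈ Icc (c2 - ℓ/2) (c2 + ℓ/2), A ≤ |t - u.2|) (hr : r ≠ u.1) :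
    ‖K (r, p2) u - K (r, q2) u‖ ≤ 2 * CK * ℓ ^ θ₁ / (A ^ θ₁ * ((r - u.1)^2 + A^2)) := by
  have hA0 : 0 < A := lt_of_lt_of_le hℓ hℓA
  set m := (p2 + q2) / 2 with hm
  have hmIcc : m ∈ Icc (c2 - ℓ/2) (c2 + ℓ/2) := by
    constructor <;> [skip; skip] <;>
      simp only [hm] <;> cases hp with | intro a b => cases hq with | intro a' b' => linarith
  have hpq : |p2 - q2| ≤ ℓ := by
    rw [abs_sub_le_iff]; cases hp with | intro a b => cases hq with | intro a' b' =>
      constructor <;> linarith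
  have hpu : A ≤ |p2 - u.2| := hA p2 hp
  have hmu : A ≤ |m - u.2| := hA m hmIcc
  have hp1 : p2 ≠ u.2 := by
    intro h; rw [h, sub_self, abs_zero] at hpu; linarith
  have hm1 : m ≠ u.2 := by
    intro h; rw [h, sub_self, abs_zero] at hmu; linarith
  have hpm : |p2 - m| ≤ ℓ / 2 := by
    have h : p2 - m = (p2 - q2) / 2 := by rw [hm]; ring
    rw [h, abs_div, abs_two]; linarith
  have hmq : |m - q2| ≤ ℓ / 2 := by
    have h : m - q2 = (p2 - q2) / 2 := by rw [hm]; ring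
    rw [h, abs_div, abs_two]; linarith
  have key1 : ‖K (r, p2) u - K (r, m) u‖ ≤
      CK * ℓ ^ θ₁ / (A ^ θ₁ * ((r - u.1)^2 + A^2)) := by
    have hb := holder2' hK hθ (r, p2) u m hr hp1 (by
      simp only []
      calc |p2 - m| ≤ ℓ / 2 := hpm
        _ ≤ |p2 - u.2| / 2 := by linarith [hℓA.trans hpu])
    refine hb.trans ?_
    have hnum : CK * |p2 - m| ^ θ₁ ≤ CK * ℓ ^ θ₁ := by
      apply mul_le_mul_of_nonneg_left _ hCK
      exact Real.rpow_le_rpow (abs_nonneg _) (hpm.trans (by linarith)) hθ.le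
    have hden : A ^ θ₁ * ((r - u.1)^2 + A^2) ≤
        |p2 - u.2| ^ θ₁ * (((r,p2).1 - u.1)^2 + ((r,p2).2 - u.2)^2) := by
      apply mul_le_mul
      · exact Real.rpow_le_rpow hA0.le hpu hθ.le
      · simp only []
        have : A^2 ≤ (p2 - u.2)^2 := by
          rw [← sq_abs (p2 - u.2)]; exact pow_le_pow_left₀ hA0.le hpu 2
        linarith
      · positivity
      · positivity
    apply div_le_div₀ (by positivity) hnum (by positivity) hden
  have key2 : ‖K (r, m) u - K (r, q2) u‖ ≤
      CK * ℓ ^ θ₁ / (A ^ θ₁ * ((r - u.1)^2 + A^2)) := by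
    have hb := holder2' hK hθ (r, m) u q2 hr hm1 (by
      simp only []
      calc |m - q2| ≤ ℓ / 2 := hmq
        _ ≤ |m - u.2| / 2 := by linarith [hℓA.trans hmu])
    refine hb.trans ?_
    have hnum : CK * |m - q2| ^ θ₁ ≤ CK * ℓ ^ θ₁ := by
      apply mul_le_mul_of_nonneg_left _ hCK
      exact Real.rpow_le_rpow (abs_nonneg _) (hmq.trans (by linarith)) hθ.le
    have hden : A ^ θ₁ * ((r - u.1)^2 + A^2) ≤
        |m - u.2| ^ θ₁ * (((r,m).1 - u.1)^2 + ((r,m).2 - u.2)^2) := by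
      apply mul_le_mul
      · exact Real.rpow_le_rpow hA0.le hmu hθ.le
      · simp only []
        have : A^2 ≤ (m - u.2)^2 := by
          rw [← sq_abs (m - u.2)]; exact pow_le_pow_left₀ hA0.le hmu 2
        linarith
      · positivity
      · positivity
    apply div_le_div₀ (by positivity) hnum (by positivity) hden
  calc ‖K (r, p2) u - K (r, q2) u‖
      ≤ ‖K (r, p2) u - K (r, m) u‖ + ‖K (r, m) u - K (r, q2) u‖ := by
        have h : K (r, p2) u - K (r, q2) u
            = (K (r, p2) u - K (r, m) u) + (K (r, m) u - K (r, q2) u) := by ring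
        rw [h]; exact norm_add_le _ _
    _ ≤ 2 * CK * ℓ ^ θ₁ / (A ^ θ₁ * ((r - u.1)^2 + A^2)) := by
        have h2 := add_le_add key1 key2
        calc _ ≤ _ := h2
          _ = 2 * CK * ℓ ^ θ₁ / (A ^ θ₁ * ((r - u.1)^2 + A^2)) := by ring

/-- Dyadic annuli on the line. -/
def ann (c h : ℝ) : ℕ → Set ℝ
  | 0 => {t | |t - c| ≤ h}
  | (j+1) => {t | h * 2^j < |t - c| ∧ |t - c| ≤ h * 2^(j+1)}

lemma ann_cover {h : ℝ} (hh : 0 < h) (c t : ℝ) : ∃ j, t ∈ ann c h j := by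
  obtain ⟨n, hn⟩ : ∃ n : ℕ, |t - c| ≤ h * 2^n := by
    obtain ⟨n, hn⟩ := pow_unbounded_of_one_lt (|t - c| / h) (one_lt_two (α := ℝ))
    exact ⟨n, by rw [div_lt_iff₀ hh] at hn; linarith [hn]⟩
  induction n with
  | zero => exact ⟨0, by simpa [ann] using hn⟩
  | succ n ih =>
    by_cases hc : |t - c| ≤ h * 2^n
    · exact ih hc
    · exact ⟨n+1, ⟨lt_of_not_ge hc, hn⟩⟩

lemma ann_subset (c h : ℝ) (j : ℕ) : ann c h j ⊆ {t | |t - c| ≤ h * 2^j} := by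
  cases j with
  | zero => intro t ht; simpa [ann] using ht
  | succ j => intro t ht; exact ht.2

/-- Points of the core interval are far from points in high annuli. -/
lemma annA {c ℓ v : ℝ} (hℓ : 0 < ℓ) (j' : ℕ) (hv : 3*ℓ/2 * 2^j' < |v - c|) :
    ∀ t ∈ Icc (c - ℓ/2) (c + ℓ/2), 2^j' * ℓ ≤ |t - v| := by
  intro t ht
  have h1 : |t - c| ≤ ℓ/2 := abs_le.2 ⟨by linarith [ht.1], by linarith [ht.2]⟩
  have h2 : |v - c| ≤ |v - t| + |t - c| := by
    calc |v - c| = |(v - t) + (t - c)| := by ring_nf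
      _ ≤ |v - t| + |t - c| := abs_add_le _ _
  have h3 : (1:ℝ) ≤ 2^j' := one_le_pow₀ (by norm_num)
  rw [abs_sub_comm t v]
  nlinarith [abs_nonneg (v - t)]

/-- Core arithmetic estimate on a dyadic shell, in base-2 `rpow` form. -/
lemma shell_arith {θ ℓ x y : ℝ} (hθ : 0 < θ) (hθ1 : θ ≤ 1) (hℓ : 0 < ℓ) :
    ℓ^θ / (((2:ℝ)^x*ℓ)^θ * (((2:ℝ)^x*ℓ)^2 + ((2:ℝ)^y*ℓ)^2)) ≤
      8 * ((2:ℝ) ^ (x+y+2)) ^ (-(1+θ/2)) / ℓ^2 := by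
  have h2 : (0:ℝ) < 2 := two_pos
  set A : ℝ := (2:ℝ)^x * ℓ with hA
  set B : ℝ := (2:ℝ)^y * ℓ with hB
  have hA0 : 0 < A := by positivity
  have hB0 : 0 < B := by positivity
  set M : ℝ := max A B with hM
  have hM0 : 0 < M := lt_of_lt_of_le hA0 (le_max_left _ _)
  have hs1 : (0:ℝ) ≤ 1 - θ/2 := by linarith
  have hs2 : (0:ℝ) ≤ 1 + θ/2 := by linarith
  have hgeom : A ^ (1 - θ/2) * B ^ (1 + θ/2) ≤ A^2 + B^2 := by
    calc A ^ (1 - θ/2) * B ^ (1 + θ/2)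
        ≤ M ^ (1 - θ/2) * M ^ (1 + θ/2) := by
          apply mul_le_mul (Real.rpow_le_rpow hA0.le (le_max_left _ _) hs1)
            (Real.rpow_le_rpow hB0.le (le_max_right _ _) hs2)
            (Real.rpow_nonneg hB0.le _) (Real.rpow_nonneg hM0.le _)
      _ = M ^ ((1 - θ/2) + (1 + θ/2)) := (Real.rpow_add hM0 _ _).symm
      _ = M ^ (2:ℝ) := by norm_num
      _ = M ^ 2 := by rw [show (2:ℝ) = ((2:ℕ):ℝ) by norm_num, Real.rpow_natCast]
      _ ≤ A^2 + B^2 := by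
          rcases max_choice A B with h | h <;> rw [hM, h] <;> nlinarith [sq_nonneg A, sq_nonneg B]
  have hden : A ^ (1 + θ/2) * B ^ (1 + θ/2) ≤ A^θ * (A^2 + B^2) := by
    have : A ^ (1 + θ/2) = A^θ * A ^ (1 - θ/2) := by
      rw [← Real.rpow_add hA0]; congr 1; ring
    rw [this, mul_assoc]
    exact mul_le_mul_of_nonneg_left hgeom (Real.rpow_nonneg hA0.le _)
  have step1 : ℓ^θ / (A^θ * (A^2 + B^2)) ≤ ℓ^θ / (A ^ (1 + θ/2) * B ^ (1 + θ/2)) := by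
    apply div_le_div_of_nonneg_left (Real.rpow_nonneg hℓ.le _) (by positivity) hden
  refine step1.trans ?_
  have hAe : A ^ (1 + θ/2) = (2:ℝ) ^ (x * (1 + θ/2)) * ℓ ^ (1 + θ/2) := by
    rw [hA, Real.mul_rpow (by positivity) hℓ.le, ← Real.rpow_mul h2.le]
  have hBe : B ^ (1 + θ/2) = (2:ℝ) ^ (y * (1 + θ/2)) * ℓ ^ (1 + θ/2) := by
    rw [hB, Real.mul_rpow (by positivity) hℓ.le, ← Real.rpow_mul h2.le]
  have hℓθ : (0:ℝ) < ℓ^θ := Real.rpow_pos_of_pos hℓ _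
  have hprod : A ^ (1 + θ/2) * B ^ (1 + θ/2) = (2:ℝ)^((x+y)*(1+θ/2)) * (ℓ^θ * ℓ^2) := by
    calc A ^ (1 + θ/2) * B ^ (1 + θ/2)
        = ((2:ℝ)^(x*(1+θ/2)) * (2:ℝ)^(y*(1+θ/2))) * (ℓ^(1+θ/2) * ℓ^(1+θ/2)) := by
          rw [hAe, hBe]; ring
      _ = (2:ℝ)^((x+y)*(1+θ/2)) * ℓ^(θ+2) := by
          rw [← Real.rpow_add h2, ← Real.rpow_add hℓ]; congr 1 <;> ring
      _ = (2:ℝ)^((x+y)*(1+θ/2)) * (ℓ^θ * ℓ^2) := by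
          rw [Real.rpow_add hℓ, show ((2:ℝ):ℝ) = ((2:ℕ):ℝ) by norm_num, Real.rpow_natCast]
  have hLHS : ℓ^θ / (A ^ (1 + θ/2) * B ^ (1 + θ/2))
      = (2:ℝ)^(-((x+y)*(1+θ/2))) / ℓ^2 := by
    rw [hprod, Real.rpow_neg h2.le]
    have h2p : (0:ℝ) < (2:ℝ)^((x+y)*(1+θ/2)) := Real.rpow_pos_of_pos h2 _
    field_simp
  rw [hLHS]
  have hRHS : ((2:ℝ) ^ (x+y+2)) ^ (-(1+θ/2))
      = (2:ℝ)^(-((x+y)*(1+θ/2))) * (2:ℝ)^(-(2*(1+θ/2))) := by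
    rw [← Real.rpow_mul h2.le, ← Real.rpow_add h2]; congr 1; ring
  rw [hRHS]
  have h8 : (1:ℝ) ≤ 8 * (2:ℝ)^(-(2*(1+θ/2))) := by
    have hmono : (2:ℝ)^(-(3:ℝ)) ≤ (2:ℝ)^(-(2*(1+θ/2))) :=
      Real.rpow_le_rpow_of_exponent_le one_le_two (by linarith)
    have h3v : (2:ℝ)^(-(3:ℝ)) = 1/8 := by
      rw [Real.rpow_neg h2.le, show (3:ℝ) = ((3:ℕ):ℝ) by norm_num, Real.rpow_natCast]; norm_num
    rw [h3v] at hmono; linarith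
  have h2p : (0:ℝ) < (2:ℝ)^(-((x+y)*(1+θ/2))) := Real.rpow_pos_of_pos h2 _
  apply div_le_div_of_nonneg_right ?_ (by positivity)
  nlinarith
lemma pow_neg_s_bound {θ w : ℝ} (hθ : 0 < θ) (hθ1 : θ ≤ 1) (hw : 0 ≤ w) :
    (4:ℝ) * (((2:ℝ)^w)^2)⁻¹ ≤ 32 * ((2:ℝ)^(w+1))^(-(1+θ/2)) := by
  have h2 : (0:ℝ) < 2 := two_pos
  have ha : (0:ℝ) < (2:ℝ)^w := Real.rpow_pos_of_pos h2 _
  have e1 : ((2:ℝ)^(w+1))^(-(1+θ/2)) = (2:ℝ)^((w+1)*(-(1+θ/2))) := by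
    rw [← Real.rpow_mul h2.le]
  have e2 : (2:ℝ)^((w+1)*(-(2:ℝ))) ≤ (2:ℝ)^((w+1)*(-(1+θ/2))) := by
    apply Real.rpow_le_rpow_of_exponent_le one_le_two
    nlinarith
  have e3 : (2:ℝ)^((w+1)*(-(2:ℝ))) = (((2:ℝ)^w)^2 * 4)⁻¹ := by
    rw [show (w+1)*(-(2:ℝ)) = -(w*2 + 2) by ring, Real.rpow_neg h2.le, Real.rpow_add h2,
      Real.rpow_mul h2.le, show ((2:ℝ):ℝ)^(2:ℝ) = 4 by
        rw [show (2:ℝ) = ((2:ℕ):ℝ) by norm_num, Real.rpow_natCast]; norm_num]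
    norm_num [Real.rpow_natCast]
  rw [e1]
  calc (4:ℝ) * (((2:ℝ)^w)^2)⁻¹ ≤ 32 * (((2:ℝ)^w)^2 * 4)⁻¹ := by
        rw [mul_inv]; have : (0:ℝ) < (((2:ℝ)^w)^2)⁻¹ := by positivity
        nlinarith
    _ = 32 * (2:ℝ)^((w+1)*(-(2:ℝ))) := by rw [e3]
    _ ≤ 32 * (2:ℝ)^((w+1)*(-(1+θ/2))) := by nlinarith [e2]


lemma shell_bound (hK : IsCZXKernel θ₁ 1 CK K) (hθ : 0 < θ₁) (hθ1 : θ₁ ≤ 1) (hCK : 0 ≤ CK)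
    {c : ℝ × ℝ} {ℓ : ℝ} (hℓ : 0 < ℓ) {y z : ℝ × ℝ}
    (hy : y ∈ sqr c ℓ) (hz : z ∈ sqr c ℓ) {j k : ℕ} (hjk : ¬(j = 0 ∧ k = 0))
    {u : ℝ × ℝ} (hu1 : u.1 ∈ ann c.1 (3*ℓ/2) j) (hu2 : u.2 ∈ ann c.2 (3*ℓ/2) k)
    (ne1y : u.1 ≠ y.1) (ne1z : u.1 ≠ z.1) (ne2y : u.2 ≠ y.2) (ne2z : u.2 ≠ z.2) :
    ‖K y u - K z u‖ ≤ 32 * CK * ((2:ℝ) ^ ((j:ℝ)+(k:ℝ))) ^ (-(1+θ₁/2)) / ℓ^2 := by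
  obtain ⟨hy1, hy2⟩ := Set.mem_prod.1 hy
  obtain ⟨hz1, hz2⟩ := Set.mem_prod.1 hz
  have h2 : (0:ℝ) < 2 := two_pos
  have hs2 : -(2:ℝ) ≤ -(1+θ₁/2) := by linarith
  -- the three cases
  rcases j with _ | j'
  · rcases k with _ | k'
    · exact absurd ⟨rfl, rfl⟩ hjk
    · -- j = 0, k = k'+1 : move coordinate 2 by Hölder, coordinate 1 by size
      set B : ℝ := 2^k' * ℓ with hBdef
      have hB0 : 0 < B := by positivity
      have hℓB : ℓ ≤ B := by
        have : (1:ℝ) ≤ 2^k' := one_le_pow₀ (by norm_num)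
        nlinarith
      have hBfar : ∀ t ∈ Icc (c.2 - ℓ/2) (c.2 + ℓ/2), B ≤ |t - u.2| := annA hℓ k' hu2.1
      have hy2u : B ≤ |y.2 - u.2| := hBfar y.2 hy2
      have hz2u : B ≤ |z.2 - u.2| := hBfar z.2 hz2
      have T1 : ‖K (y.1, y.2) u - K (y.1, z.2) u‖ ≤
          2 * CK * ℓ ^ θ₁ / (B ^ θ₁ * ((y.1 - u.1)^2 + B^2)) :=
        move2 hK hθ hCK hℓ hℓB hy2 hz2 u hBfar (Ne.symm ne1y)
      have T1' : ‖K (y.1, y.2) u - K (y.1, z.2) u‖ ≤ 2 * CK / B^2 := by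
        refine T1.trans ?_
        have hb1 : ℓ ^ θ₁ ≤ B ^ θ₁ := Real.rpow_le_rpow hℓ.le hℓB hθ.le
        have hb2 : B ^ θ₁ * B^2 ≤ B ^ θ₁ * ((y.1 - u.1)^2 + B^2) := by
          have : (0:ℝ) < B ^ θ₁ := Real.rpow_pos_of_pos hB0 _
          nlinarith [sq_nonneg (y.1 - u.1)]
        calc 2 * CK * ℓ ^ θ₁ / (B ^ θ₁ * ((y.1 - u.1)^2 + B^2))
            ≤ 2 * CK * B ^ θ₁ / (B ^ θ₁ * B^2) := by
              apply div_le_div₀ (by positivity)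
                (by nlinarith [Real.rpow_pos_of_pos hB0 θ₁]) (by positivity) hb2
          _ = 2 * CK / B^2 := by
              have : (0:ℝ) < B ^ θ₁ := Real.rpow_pos_of_pos hB0 _
              field_simp
      have S1 : ‖K (y.1, z.2) u‖ ≤ CK / B^2 := by
        refine (size' hK hCK (y.1, z.2) u (Ne.symm ne1y) (Ne.symm ne2z)).trans ?_
        apply div_le_div_of_nonneg_left hCK (by positivity)
        have : B^2 ≤ (z.2 - u.2)^2 := by
          rw [← sq_abs (z.2 - u.2)]; exact pow_le_pow_left₀ hB0.le hz2u 2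
        nlinarith [sq_nonneg ((y.1,z.2).1 - u.1)]
      have S2 : ‖K z u‖ ≤ CK / B^2 := by
        refine (size' hK hCK z u (Ne.symm ne1z) (Ne.symm ne2z)).trans ?_
        apply div_le_div_of_nonneg_left hCK (by positivity)
        have : B^2 ≤ (z.2 - u.2)^2 := by
          rw [← sq_abs (z.2 - u.2)]; exact pow_le_pow_left₀ hB0.le hz2u 2
        nlinarith [sq_nonneg (z.1 - u.1)]
      have total : ‖K y u - K z u‖ ≤ 4 * CK / B^2 := by
        have hsplit : K y u - K z u
            = (K (y.1, y.2) u - K (y.1, z.2) u) + (K (y.1, z.2) u - K z u) := by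
          simp only [Prod.mk.eta]; ring
        calc ‖K y u - K z u‖
            ≤ ‖K (y.1, y.2) u - K (y.1, z.2) u‖ + ‖K (y.1, z.2) u - K z u‖ := by
              rw [hsplit]; exact norm_add_le _ _
          _ ≤ 2 * CK / B^2 + (‖K (y.1, z.2) u‖ + ‖K z u‖) :=
              add_le_add T1' (norm_sub_le _ _)
          _ ≤ 2 * CK / B^2 + (CK / B^2 + CK / B^2) := by gcongr
          _ = 4 * CK / B^2 := by ring
      refine total.trans ?_
      have harith := pow_neg_s_bound (w := (k':ℝ)) hθ hθ1 (Nat.cast_nonneg k')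
      have hcast : ((2:ℝ)^((k':ℝ))) = 2^k' := Real.rpow_natCast 2 k'
      have hexp : ((0:ℕ):ℝ) + ((k'+1:ℕ):ℝ) = (k':ℝ) + 1 := by push_cast; ring
      rw [hexp]
      have hB2 : B^2 = (2^k':ℝ)^2 * ℓ^2 := by rw [hBdef]; ring
      rw [hB2]
      rw [← hcast] at *
      calc 4 * CK / (((2:ℝ)^((k':ℝ)))^2 * ℓ^2)
          = CK * (4 * (((2:ℝ)^((k':ℝ)))^2)⁻¹) / ℓ^2 := by
            field_simp
        _ ≤ CK * (32 * ((2:ℝ)^((k':ℝ)+1))^(-(1+θ₁/2))) / ℓ^2 := by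
            apply div_le_div_of_nonneg_right ?_ (by positivity)
            exact mul_le_mul_of_nonneg_left harith hCK
        _ = 32 * CK * ((2:ℝ)^((k':ℝ)+1))^(-(1+θ₁/2)) / ℓ^2 := by ring
  · rcases k with _ | k'
    · -- j = j'+1, k = 0 : coordinate 1 Hölder then coordinate 2 by size
      set A : ℝ := 2^j' * ℓ with hAdef
      have hA0 : 0 < A := by positivity
      have hℓA : ℓ ≤ A := by
        have : (1:ℝ) ≤ 2^j' := one_le_pow₀ (by norm_num)
        nlinarith
      have hAfar : ∀ t ∈ Icc (c.1 - ℓ/2) (c.1 + ℓ/2), A ≤ |t - u.1| := annA hℓ j' hu1.1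
      have hy1u : A ≤ |y.1 - u.1| := hAfar y.1 hy1
      have hz1u : A ≤ |z.1 - u.1| := hAfar z.1 hz1
      have T1 : ‖K (y.1, y.2) u - K (z.1, y.2) u‖ ≤
          2 * CK * ℓ ^ θ₁ / (A ^ θ₁ * (A^2 + (y.2 - u.2)^2)) :=
        move1 hK hθ hCK hℓ hℓA hy1 hz1 u hAfar (Ne.symm ne2y)
      have T1' : ‖K (y.1, y.2) u - K (z.1, y.2) u‖ ≤ 2 * CK / A^2 := by
        refine T1.trans ?_
        have hb1 : ℓ ^ θ₁ ≤ A ^ θ₁ := Real.rpow_le_rpow hℓ.le hℓA hθ.le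
        have hb2 : A ^ θ₁ * A^2 ≤ A ^ θ₁ * (A^2 + (y.2 - u.2)^2) := by
          have : (0:ℝ) < A ^ θ₁ := Real.rpow_pos_of_pos hA0 _
          nlinarith [sq_nonneg (y.2 - u.2)]
        calc 2 * CK * ℓ ^ θ₁ / (A ^ θ₁ * (A^2 + (y.2 - u.2)^2))
            ≤ 2 * CK * A ^ θ₁ / (A ^ θ₁ * A^2) := by
              apply div_le_div₀ (by positivity)
                (by nlinarith [Real.rpow_pos_of_pos hA0 θ₁]) (by positivity) hb2
          _ = 2 * CK / A^2 := by
              have : (0:ℝ) < A ^ θ₁ := Real.rpow_pos_of_pos hA0 _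
              field_simp
      have hA2z : A^2 ≤ (z.1 - u.1)^2 := by
        rw [← sq_abs (z.1 - u.1)]; exact pow_le_pow_left₀ hA0.le hz1u 2
      have S1 : ‖K (z.1, y.2) u‖ ≤ CK / A^2 := by
        refine (size' hK hCK (z.1, y.2) u (Ne.symm ne1z) (Ne.symm ne2y)).trans ?_
        apply div_le_div_of_nonneg_left hCK (by positivity)
        nlinarith [sq_nonneg ((z.1,y.2).2 - u.2)]
      have S2 : ‖K z u‖ ≤ CK / A^2 := by
        refine (size' hK hCK z u (Ne.symm ne1z) (Ne.symm ne2z)).trans ?_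
        apply div_le_div_of_nonneg_left hCK (by positivity)
        nlinarith [sq_nonneg (z.2 - u.2)]
      have total : ‖K y u - K z u‖ ≤ 4 * CK / A^2 := by
        have hsplit : K y u - K z u
            = (K (y.1, y.2) u - K (z.1, y.2) u) + (K (z.1, y.2) u - K z u) := by
          simp only [Prod.mk.eta]; ring
        calc ‖K y u - K z u‖
            ≤ ‖K (y.1, y.2) u - K (z.1, y.2) u‖ + ‖K (z.1, y.2) u - K z u‖ := by
              rw [hsplit]; exact norm_add_le _ _
          _ ≤ 2 * CK / A^2 + (‖K (z.1, y.2) u‖ + ‖K z u‖) :=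
              add_le_add T1' (norm_sub_le _ _)
          _ ≤ 2 * CK / A^2 + (CK / A^2 + CK / A^2) := by gcongr
          _ = 4 * CK / A^2 := by ring
      refine total.trans ?_
      have harith := pow_neg_s_bound (w := (j':ℝ)) hθ hθ1 (Nat.cast_nonneg j')
      have hcast : ((2:ℝ)^((j':ℝ))) = 2^j' := Real.rpow_natCast 2 j'
      have hexp : ((j'+1:ℕ):ℝ) + ((0:ℕ):ℝ) = (j':ℝ) + 1 := by push_cast; ring
      rw [hexp]
      have hA2 : A^2 = (2^j':ℝ)^2 * ℓ^2 := by rw [hAdef]; ring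
      rw [hA2]
      rw [← hcast] at *
      calc 4 * CK / (((2:ℝ)^((j':ℝ)))^2 * ℓ^2)
          = CK * (4 * (((2:ℝ)^((j':ℝ)))^2)⁻¹) / ℓ^2 := by
            field_simp
        _ ≤ CK * (32 * ((2:ℝ)^((j':ℝ)+1))^(-(1+θ₁/2))) / ℓ^2 := by
            apply div_le_div_of_nonneg_right ?_ (by positivity)
            exact mul_le_mul_of_nonneg_left harith hCK
        _ = 32 * CK * ((2:ℝ)^((j':ℝ)+1))^(-(1+θ₁/2)) / ℓ^2 := by ring
    · -- main case j = j'+1, k = k'+1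
      set A : ℝ := 2^j' * ℓ with hAdef
      set B : ℝ := 2^k' * ℓ with hBdef
      have hA0 : 0 < A := by positivity
      have hB0 : 0 < B := by positivity
      have hℓA : ℓ ≤ A := by
        have : (1:ℝ) ≤ 2^j' := one_le_pow₀ (by norm_num)
        nlinarith
      have hℓB : ℓ ≤ B := by
        have : (1:ℝ) ≤ 2^k' := one_le_pow₀ (by norm_num)
        nlinarith
      have hAfar : ∀ t ∈ Icc (c.1 - ℓ/2) (c.1 + ℓ/2), A ≤ |t - u.1| := annA hℓ j' hu1.1
      have hBfar : ∀ t ∈ Icc (c.2 - ℓ/2) (c.2 + ℓ/2), B ≤ |t - u.2| := annA hℓ k' hu2.1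
      have hy2u : B ≤ |y.2 - u.2| := hBfar y.2 hy2
      have hz1u : A ≤ |z.1 - u.1| := hAfar z.1 hz1
      have hB2y : B^2 ≤ (y.2 - u.2)^2 := by
        rw [← sq_abs (y.2 - u.2)]; exact pow_le_pow_left₀ hB0.le hy2u 2
      have hA2z : A^2 ≤ (z.1 - u.1)^2 := by
        rw [← sq_abs (z.1 - u.1)]; exact pow_le_pow_left₀ hA0.le hz1u 2
      have hAθ : (0:ℝ) < A ^ θ₁ := Real.rpow_pos_of_pos hA0 _
      have hBθ : (0:ℝ) < B ^ θ₁ := Real.rpow_pos_of_pos hB0 _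
      have hℓθ : (0:ℝ) < ℓ ^ θ₁ := Real.rpow_pos_of_pos hℓ _
      have T1 : ‖K (y.1, y.2) u - K (z.1, y.2) u‖ ≤
          2 * CK * ℓ ^ θ₁ / (A ^ θ₁ * (A^2 + (y.2 - u.2)^2)) :=
        move1 hK hθ hCK hℓ hℓA hy1 hz1 u hAfar (Ne.symm ne2y)
      have T1' : ‖K (y.1, y.2) u - K (z.1, y.2) u‖ ≤
          2 * CK * (ℓ ^ θ₁ / (A ^ θ₁ * (A^2 + B^2))) := by
        refine T1.trans ?_
        have hd : A ^ θ₁ * (A^2 + B^2) ≤ A ^ θ₁ * (A^2 + (y.2 - u.2)^2) :=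
          mul_le_mul_of_nonneg_left (by linarith [hB2y]) hAθ.le
        have h1 : (0:ℝ) < A ^ θ₁ * (A^2 + B^2) := by positivity
        rw [mul_div_assoc]
        exact mul_le_mul_of_nonneg_left (div_le_div_of_nonneg_left hℓθ.le h1 hd)
          (by linarith)
      have T2 : ‖K (z.1, y.2) u - K (z.1, z.2) u‖ ≤
          2 * CK * ℓ ^ θ₁ / (B ^ θ₁ * ((z.1 - u.1)^2 + B^2)) :=
        move2 hK hθ hCK hℓ hℓB hy2 hz2 u hBfar (Ne.symm ne1z)
      have T2' : ‖K (z.1, y.2) u - K (z.1, z.2) u‖ ≤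
          2 * CK * (ℓ ^ θ₁ / (B ^ θ₁ * (B^2 + A^2))) := by
        refine T2.trans ?_
        have hd : B ^ θ₁ * (B^2 + A^2) ≤ B ^ θ₁ * ((z.1 - u.1)^2 + B^2) :=
          mul_le_mul_of_nonneg_left (by linarith [hA2z]) hBθ.le
        have h1 : (0:ℝ) < B ^ θ₁ * (B^2 + A^2) := by positivity
        rw [mul_div_assoc]
        exact mul_le_mul_of_nonneg_left (div_le_div_of_nonneg_left hℓθ.le h1 hd)
          (by linarith)
      have hcastj : ((2:ℝ)^((j':ℝ))) = 2^j' := Real.rpow_natCast 2 j'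
      have hcastk : ((2:ℝ)^((k':ℝ))) = 2^k' := Real.rpow_natCast 2 k'
      have harith1 : ℓ ^ θ₁ / (A ^ θ₁ * (A^2 + B^2)) ≤
          8 * ((2:ℝ) ^ ((j':ℝ)+(k':ℝ)+2)) ^ (-(1+θ₁/2)) / ℓ^2 := by
        have := shell_arith (θ := θ₁) (ℓ := ℓ) (x := (j':ℝ)) (y := (k':ℝ)) hθ hθ1 hℓ
        rwa [hcastj, hcastk, ← hAdef, ← hBdef] at this
      have harith2 : ℓ ^ θ₁ / (B ^ θ₁ * (B^2 + A^2)) ≤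
          8 * ((2:ℝ) ^ ((j':ℝ)+(k':ℝ)+2)) ^ (-(1+θ₁/2)) / ℓ^2 := by
        have := shell_arith (θ := θ₁) (ℓ := ℓ) (x := (k':ℝ)) (y := (j':ℝ)) hθ hθ1 hℓ
        rw [hcastj, hcastk, ← hAdef, ← hBdef, show (k':ℝ)+(j':ℝ)+2 = (j':ℝ)+(k':ℝ)+2 by ring]
          at this
        exact this
      have hexp : ((j'+1:ℕ):ℝ) + ((k'+1:ℕ):ℝ) = (j':ℝ) + (k':ℝ) + 2 := by push_cast; ring
      rw [hexp]
      have hsplit : K y u - K z u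
          = (K (y.1, y.2) u - K (z.1, y.2) u) + (K (z.1, y.2) u - K (z.1, z.2) u) := by
        simp only [Prod.mk.eta]; ring
      calc ‖K y u - K z u‖
          ≤ ‖K (y.1, y.2) u - K (z.1, y.2) u‖ + ‖K (z.1, y.2) u - K (z.1, z.2) u‖ := by
            rw [hsplit]; exact norm_add_le _ _
        _ ≤ 2 * CK * (ℓ ^ θ₁ / (A ^ θ₁ * (A^2 + B^2)))
            + 2 * CK * (ℓ ^ θ₁ / (B ^ θ₁ * (B^2 + A^2))) := add_le_add T1' T2'
        _ ≤ 2 * CK * (8 * ((2:ℝ) ^ ((j':ℝ)+(k':ℝ)+2)) ^ (-(1+θ₁/2)) / ℓ^2)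
            + 2 * CK * (8 * ((2:ℝ) ^ ((j':ℝ)+(k':ℝ)+2)) ^ (-(1+θ₁/2)) / ℓ^2) := by
            apply add_le_add
            · exact mul_le_mul_of_nonneg_left harith1 (by positivity)
            · exact mul_le_mul_of_nonneg_left harith2 (by positivity)
        _ = 32 * CK * ((2:ℝ) ^ ((j':ℝ)+(k':ℝ)+2)) ^ (-(1+θ₁/2)) / ℓ^2 := by ring



lemma vol_rect (c : ℝ × ℝ) {t₁ t₂ : ℝ} (h1 : 0 ≤ t₁) (h2 : 0 ≤ t₂) :
    volume (rect c t₁ t₂) = ENNReal.ofReal t₁ * ENNReal.ofReal t₂ := by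
  rw [rect, Measure.volume_eq_prod, Measure.prod_prod, Real.volume_Icc, Real.volume_Icc]
  congr 1 <;> congr 1 <;> ring

lemma max_bound (f : ℝ × ℝ → ℂ) {x c' : ℝ × ℝ} {t₁ t₂ : ℝ} (h1 : 0 < t₁) (h2 : 0 < t₂)
    (hx : x ∈ rect c' t₁ t₂) :
    ∫⁻ u in rect c' t₁ t₂, (‖f u‖₊ : ℝ≥0∞) ≤
      ENNReal.ofReal t₁ * ENNReal.ofReal t₂ * strongMax f x := by
  have hvol := vol_rect c' h1.le h2.le
  have hle : (∫⁻ u in rect c' t₁ t₂, (‖f u‖₊ : ℝ≥0∞)) / volume (rect c' t₁ t₂)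
      ≤ strongMax f x := by
    rw [strongMax]
    exact le_iSup_of_le c' (le_iSup_of_le t₁ (le_iSup_of_le t₂ (le_iSup_of_le h1
      (le_iSup_of_le h2 (le_iSup_of_le hx le_rfl)))))
  have hv0 : volume (rect c' t₁ t₂) ≠ 0 := by
    rw [hvol]
    simp only [ne_eq, mul_eq_zero, ENNReal.ofReal_eq_zero, not_or, not_le]
    exact ⟨h1, h2⟩
  have hvt : volume (rect c' t₁ t₂) ≠ ⊤ := by
    rw [hvol]; exact ENNReal.mul_ne_top ENNReal.ofReal_ne_top ENNReal.ofReal_ne_top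
  calc ∫⁻ u in rect c' t₁ t₂, (‖f u‖₊ : ℝ≥0∞)
      = (∫⁻ u in rect c' t₁ t₂, (‖f u‖₊ : ℝ≥0∞)) / volume (rect c' t₁ t₂)
        * volume (rect c' t₁ t₂) := (ENNReal.div_mul_cancel hv0 hvt).symm
    _ ≤ strongMax f x * volume (rect c' t₁ t₂) := mul_le_mul_left hle _
    _ = ENNReal.ofReal t₁ * ENNReal.ofReal t₂ * strongMax f x := by rw [hvol, mul_comm]

lemma line1_null (a : ℝ) : volume {u : ℝ × ℝ | u.1 = a} = 0 := by
  have : {u : ℝ × ℝ | u.1 = a} ⊆ ({a} : Set ℝ) ×ˢ (univ : Set ℝ) := by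
    intro p hp; exact ⟨hp, trivial⟩
  refine measure_mono_null this ?_
  rw [Measure.volume_eq_prod, Measure.prod_prod]; simp

lemma line2_null (a : ℝ) : volume {u : ℝ × ℝ | u.2 = a} = 0 := by
  have : {u : ℝ × ℝ | u.2 = a} ⊆ (univ : Set ℝ) ×ˢ ({a} : Set ℝ) := by
    intro p hp; exact ⟨trivial, hp⟩
  refine measure_mono_null this ?_
  rw [Measure.volume_eq_prod, Measure.prod_prod]; simp

lemma integrable_of_bdd_cpt {f : ℝ × ℝ → ℂ} (hf : Measurable f) {M : ℝ}
    (hM : ∀ x, ‖f x‖ ≤ M) (hcs : HasCompactSupport f) : Integrable f := by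
  have h1 : IntegrableOn f (tsupport f) := by
    apply Measure.integrableOn_of_bounded hcs.isCompact.measure_lt_top.ne
      hf.aestronglyMeasurable
    exact Filter.Eventually.of_forall (fun x => hM x)
  have h2 : IntegrableOn f (tsupport f)ᶜ := by
    apply IntegrableOn.congr_fun (integrableOn_zero)
    · intro x hx; exact (image_eq_zero_of_notMem_tsupport hx).symm
    · exact (isClosed_tsupport f).measurableSet.compl
  have h3 := h1.union h2
  rw [Set.union_compl_self] at h3
  exact integrableOn_univ.1 h3

lemma measure_zero_ae_nmem {s : Set (ℝ × ℝ)} (h : volume s = 0) : ∀ᵐ u : ℝ × ℝ, u ∉ s := by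
  rw [ae_iff]; simpa using h

lemma integrableOn_T (hK : IsCZXKernel θ₁ 1 CK K) (hCK : 0 ≤ CK) {c : ℝ × ℝ} {ℓ : ℝ}
    (hℓ : 0 < ℓ) {y : ℝ × ℝ} (hy : y ∈ sqr c ℓ) {f : ℝ × ℝ → ℂ} (hf : Measurable f)
    (hfi : Integrable f) :
    IntegrableOn (fun u => K y u * f u) (sqr c (3 * ℓ))ᶜ volume := by
  obtain ⟨hy1, hy2⟩ := Set.mem_prod.1 hy
  have hKm : Measurable fun u => K y u :=
    hK.meas.comp (measurable_const.prodMk measurable_id)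
  have hTmeas : MeasurableSet (sqr c (3 * ℓ))ᶜ :=
    (measurableSet_Icc.prod measurableSet_Icc).compl
  have hN : ∀ᵐ u : ℝ × ℝ, u ∉ ({u : ℝ × ℝ | u.1 = y.1} ∪ {u : ℝ × ℝ | u.2 = y.2}) :=
    measure_zero_ae_nmem (measure_union_null (line1_null _) (line2_null _))
  have hbound : ∀ᵐ u ∂(volume.restrict (sqr c (3 * ℓ))ᶜ),
      ‖K y u * f u‖ ≤ CK / ℓ^2 * ‖f u‖ := by
    filter_upwards [ae_restrict_of_ae hN, ae_restrict_mem hTmeas] with u hu huT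
    simp only [Set.mem_union, Set.mem_setOf_eq, not_or] at hu
    have hfar : ℓ^2 ≤ (y.1 - u.1)^2 + (y.2 - u.2)^2 := by
      have hu' : u.1 ∉ Icc (c.1 - 3*ℓ/2) (c.1 + 3*ℓ/2) ∨
          u.2 ∉ Icc (c.2 - 3*ℓ/2) (c.2 + 3*ℓ/2) := by
        by_contra hcon
        push_neg at hcon
        exact huT ⟨hcon.1, hcon.2⟩
      rcases hu' with hu' | hu'
      · have habs : 3*ℓ/2 * 2^(0:ℕ) < |u.1 - c.1| := by
          rw [pow_zero, mul_one]
          rw [Set.mem_Icc, not_and_or, not_le, not_le] at hu'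
          rcases hu' with h | h
          · rw [abs_sub_comm, abs_of_pos (by linarith)]; linarith
          · rw [abs_of_pos (by linarith)]; linarith
        have := annA hℓ 0 habs y.1 hy1
        rw [pow_zero, one_mul] at this
        nlinarith [sq_nonneg (y.2 - u.2), sq_abs (y.1 - u.1), abs_nonneg (y.1 - u.1)]
      · have habs : 3*ℓ/2 * 2^(0:ℕ) < |u.2 - c.2| := by
          rw [pow_zero, mul_one]
          rw [Set.mem_Icc, not_and_or, not_le, not_le] at hu'
          rcases hu' with h | h
          · rw [abs_sub_comm, abs_of_pos (by linarith)]; linarith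
          · rw [abs_of_pos (by linarith)]; linarith
        have := annA hℓ 0 habs y.2 hy2
        rw [pow_zero, one_mul] at this
        nlinarith [sq_nonneg (y.1 - u.1), sq_abs (y.2 - u.2), abs_nonneg (y.2 - u.2)]
    have hsz := size' hK hCK y u (Ne.symm hu.1) (Ne.symm hu.2)
    calc ‖K y u * f u‖ = ‖K y u‖ * ‖f u‖ := norm_mul _ _
      _ ≤ (CK / ℓ^2) * ‖f u‖ := by
          apply mul_le_mul_of_nonneg_right ?_ (norm_nonneg _)
          refine hsz.trans ?_
          apply div_le_div_of_nonneg_left hCK (by positivity) hfar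
      _ = CK / ℓ^2 * ‖f u‖ := rfl
  exact Integrable.mono' ((hfi.norm.const_mul (CK / ℓ^2)).restrict)
    ((hKm.mul hf).aestronglyMeasurable) hbound

lemma gamma_calc {θ₁ ℓ : ℝ} (hℓ : 0 < ℓ) (CK : ℝ) (j k : ℕ) :
    32 * CK * ((2:ℝ) ^ ((j:ℝ)+(k:ℝ))) ^ (-(1+θ₁/2)) / ℓ^2 * (3*ℓ*2^j) * (3*ℓ*2^k)
      = 288 * CK * (((2:ℝ) ^ (-(θ₁/2)))^j * ((2:ℝ) ^ (-(θ₁/2)))^k) := by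
  have h2 : (0:ℝ) < 2 := two_pos
  have e1 : ((2:ℝ) ^ ((j:ℝ)+(k:ℝ))) ^ (-(1+θ₁/2)) = (2:ℝ)^(((j:ℝ)+(k:ℝ))*(-(1+θ₁/2))) :=
    (Real.rpow_mul h2.le _ _).symm
  have e2 : ((2:ℝ) ^ (-(θ₁/2)))^j = (2:ℝ)^(-(θ₁/2)*(j:ℝ)) := by
    rw [← Real.rpow_natCast ((2:ℝ)^(-(θ₁/2))) j, ← Real.rpow_mul h2.le]
  have e3 : ((2:ℝ) ^ (-(θ₁/2)))^k = (2:ℝ)^(-(θ₁/2)*(k:ℝ)) := by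
    rw [← Real.rpow_natCast ((2:ℝ)^(-(θ₁/2))) k, ← Real.rpow_mul h2.le]
  have e4 : ((2:ℝ))^j = (2:ℝ)^((j:ℝ)) := (Real.rpow_natCast 2 j).symm
  have e5 : ((2:ℝ))^k = (2:ℝ)^((k:ℝ)) := (Real.rpow_natCast 2 k).symm
  have key : (2:ℝ)^(((j:ℝ)+(k:ℝ))*(-(1+θ₁/2))) * ((2:ℝ)^((j:ℝ)) * (2:ℝ)^((k:ℝ)))
      = (2:ℝ)^(-(θ₁/2)*(j:ℝ)) * (2:ℝ)^(-(θ₁/2)*(k:ℝ)) := by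
    rw [← Real.rpow_add h2, ← Real.rpow_add h2, ← Real.rpow_add h2]
    congr 1; ring
  rw [e1, e2, e3, e4, e5]
  rw [div_mul_eq_mul_div, div_mul_eq_mul_div, div_eq_iff (by positivity : (ℓ:ℝ)^2 ≠ 0)]
  linear_combination (288 * CK * ℓ^2) * key

lemma geo_sum {θ₁ : ℝ} (hθ : 0 < θ₁) :
    ∑' j : ℕ, ENNReal.ofReal (((2:ℝ) ^ (-(θ₁/2)))^j)
      = ENNReal.ofReal ((1 - (2:ℝ) ^ (-(θ₁/2)))⁻¹) := by
  have hr0 : (0:ℝ) ≤ (2:ℝ) ^ (-(θ₁/2)) := (Real.rpow_pos_of_pos two_pos _).le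
  have hr1 : (2:ℝ) ^ (-(θ₁/2)) < 1 :=
    Real.rpow_lt_one_of_one_lt_of_neg one_lt_two (by linarith)
  rw [← ENNReal.ofReal_tsum_of_nonneg (fun n => pow_nonneg hr0 n)
    (summable_geometric_of_lt_one hr0 hr1), tsum_geometric_of_lt_one hr0 hr1]


/-- Lemma 6.3.  For a CZX kernel with `θ₂ = 1`, the grand maximal
truncation is controlled by the strong maximal function: for every square `J`, every
bounded compactly supported `f` vanishing on `3J` and all `x, y, z ∈ J`, the truncated
integrals converge absolutely and their difference is at most `C·M_*f(x)`. -/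
theorem statement15 (θ₁ : ℝ) (hθ₁ : θ₁ ∈ Ioc (0:ℝ) 1) (CK : ℝ) (hCK : 0 < CK) :
    ∃ C : ℝ, 0 < C ∧ ∀ K : ℝ × ℝ → ℝ × ℝ → ℂ, IsCZXKernel θ₁ 1 CK K →
      ∀ (c : ℝ × ℝ) (ℓ : ℝ), 0 < ℓ →
      ∀ f : ℝ × ℝ → ℂ, Measurable f → (∃ M, ∀ x, ‖f x‖ ≤ M) → HasCompactSupport f →
        (∀ u ∈ sqr c (3 * ℓ), f u = 0) →
      ∀ x ∈ sqr c ℓ, ∀ y ∈ sqr c ℓ, ∀ z ∈ sqr c ℓ,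
        IntegrableOn (fun u => K y u * f u) (sqr c (3 * ℓ))ᶜ volume ∧
        IntegrableOn (fun u => K z u * f u) (sqr c (3 * ℓ))ᶜ volume ∧
        ENNReal.ofReal
            ‖(∫ u in (sqr c (3 * ℓ))ᶜ, K y u * f u) - ∫ u in (sqr c (3 * ℓ))ᶜ, K z u * f u‖ ≤
          ENNReal.ofReal C * strongMax f x := by
  obtain ⟨hθ, hθ1⟩ := hθ₁
  set r : ℝ := (2:ℝ) ^ (-(θ₁/2)) with hrdef
  have hr0 : (0:ℝ) < r := Real.rpow_pos_of_pos two_pos _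
  have hr1 : r < 1 := Real.rpow_lt_one_of_one_lt_of_neg one_lt_two (by linarith)
  have hinv : (0:ℝ) < (1 - r)⁻¹ := inv_pos.2 (by linarith)
  refine ⟨288 * CK * ((1 - r)⁻¹ * (1 - r)⁻¹), by positivity, ?_⟩
  intro K hK c ℓ hℓ f hf hMf hcs _ x hx y hy z hz
  obtain ⟨M, hM⟩ := hMf
  have hfi : Integrable f := integrable_of_bdd_cpt hf hM hcs
  have hIy := integrableOn_T hK hCK.le hℓ hy hf hfi
  have hIz := integrableOn_T hK hCK.le hℓ hz hf hfi
  refine ⟨hIy, hIz, ?_⟩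
  have hTmeas : MeasurableSet (sqr c (3 * ℓ))ᶜ :=
    (measurableSet_Icc.prod measurableSet_Icc).compl
  have hh0 : (0:ℝ) < 3 * ℓ / 2 := by linarith
  have hsub : (∫ u in (sqr c (3 * ℓ))ᶜ, K y u * f u) - ∫ u in (sqr c (3 * ℓ))ᶜ, K z u * f u
      = ∫ u in (sqr c (3 * ℓ))ᶜ, (K y u * f u - K z u * f u) := (integral_sub hIy hIz).symm
  rw [hsub, ofReal_norm]
  refine le_trans (enorm_integral_le_lintegral_enorm _) ?_
  have hcover : (sqr c (3 * ℓ))ᶜ ⊆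
      ⋃ p : ℕ × ℕ, ((ann c.1 (3*ℓ/2) p.1 ×ˢ ann c.2 (3*ℓ/2) p.2) ∩ (sqr c (3 * ℓ))ᶜ) := by
    intro u hu
    obtain ⟨j, hj⟩ := ann_cover hh0 c.1 u.1
    obtain ⟨k, hk⟩ := ann_cover hh0 c.2 u.2
    exact Set.mem_iUnion.2 ⟨(j, k), ⟨⟨hj, hk⟩, hu⟩⟩
  refine le_trans (lintegral_mono_set hcover) ?_
  refine le_trans (lintegral_iUnion_le _ _) ?_
  have hterm : ∀ p : ℕ × ℕ,
      (∫⁻ u in (ann c.1 (3*ℓ/2) p.1 ×ˢ ann c.2 (3*ℓ/2) p.2) ∩ (sqr c (3 * ℓ))ᶜ,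
        (‖K y u * f u - K z u * f u‖₊ : ℝ≥0∞))
      ≤ ENNReal.ofReal (288 * CK * (r ^ p.1 * r ^ p.2)) * strongMax f x := by
    rintro ⟨j, k⟩
    by_cases hp0 : j = 0 ∧ k = 0
    · obtain ⟨rfl, rfl⟩ := hp0
      have hempty : (ann c.1 (3*ℓ/2) 0 ×ˢ ann c.2 (3*ℓ/2) 0) ∩ (sqr c (3 * ℓ))ᶜ = ∅ := by
        rw [Set.eq_empty_iff_forall_notMem]
        rintro u ⟨⟨hu1, hu2⟩, huT⟩
        apply huT
        have h1 : |u.1 - c.1| ≤ 3*ℓ/2 := hu1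
        have h2 : |u.2 - c.2| ≤ 3*ℓ/2 := hu2
        have e1 := abs_le.1 h1
        have e2 := abs_le.1 h2
        exact ⟨⟨by linarith [e1.1], by linarith [e1.2]⟩, ⟨by linarith [e2.1], by linarith [e2.2]⟩⟩
      rw [hempty]
      simp
    · have hβ0 : (0:ℝ) ≤ 32 * CK * ((2:ℝ) ^ ((j:ℝ)+(k:ℝ))) ^ (-(1+θ₁/2)) / ℓ^2 := by positivity
      have hae : ∀ᵐ u : ℝ × ℝ ∂volume,
          u ∈ (ann c.1 (3*ℓ/2) j ×ˢ ann c.2 (3*ℓ/2) k) ∩ (sqr c (3 * ℓ))ᶜ →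
          (‖K y u * f u - K z u * f u‖₊ : ℝ≥0∞) ≤
            ENNReal.ofReal (32 * CK * ((2:ℝ) ^ ((j:ℝ)+(k:ℝ))) ^ (-(1+θ₁/2)) / ℓ^2)
              * (‖f u‖₊ : ℝ≥0∞) := by
        have hN : ∀ᵐ u : ℝ × ℝ, u ∉ ({u : ℝ × ℝ | u.1 = y.1} ∪ {u : ℝ × ℝ | u.1 = z.1}
            ∪ {u : ℝ × ℝ | u.2 = y.2} ∪ {u : ℝ × ℝ | u.2 = z.2}) := by
          apply measure_zero_ae_nmem
          repeat' apply measure_union_null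
          all_goals first | exact line1_null _ | exact line2_null _
        refine hN.mono ?_
        intro u hu humem
        simp only [Set.mem_union, Set.mem_setOf_eq, not_or] at hu
        obtain ⟨⟨⟨hu1y, hu1z⟩, hu2y⟩, hu2z⟩ := hu
        obtain ⟨⟨hsj, hsk⟩, _⟩ := humem
        have hker := shell_bound hK hθ hθ1 hCK.le hℓ hy hz hp0 hsj hsk hu1y hu1z hu2y hu2z
        have heq : K y u * f u - K z u * f u = (K y u - K z u) * f u := by ring
        rw [heq, nnnorm_mul, ENNReal.coe_mul]
        apply mul_le_mul_left
        rw [← enorm_eq_nnnorm, ← ofReal_norm]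
        exact ENNReal.ofReal_le_ofReal hker
      have hxmem : x ∈ rect c (3*ℓ*2^j) (3*ℓ*2^k) := by
        obtain ⟨hx1, hx2⟩ := Set.mem_prod.1 hx
        have q1 : (1:ℝ) ≤ 2^j := one_le_pow₀ (by norm_num)
        have q2 : (1:ℝ) ≤ 2^k := one_le_pow₀ (by norm_num)
        refine ⟨⟨?_, ?_⟩, ⟨?_, ?_⟩⟩
        · have := hx1.1; nlinarith
        · have := hx1.2; nlinarith
        · have := hx2.1; nlinarith
        · have := hx2.2; nlinarith
      calc ∫⁻ u in (ann c.1 (3*ℓ/2) j ×ˢ ann c.2 (3*ℓ/2) k) ∩ (sqr c (3 * ℓ))ᶜ,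
            (‖K y u * f u - K z u * f u‖₊ : ℝ≥0∞)
          ≤ ∫⁻ u in (ann c.1 (3*ℓ/2) j ×ˢ ann c.2 (3*ℓ/2) k) ∩ (sqr c (3 * ℓ))ᶜ,
            ENNReal.ofReal (32 * CK * ((2:ℝ) ^ ((j:ℝ)+(k:ℝ))) ^ (-(1+θ₁/2)) / ℓ^2)
              * (‖f u‖₊ : ℝ≥0∞) :=
            setLIntegral_mono_ae (hf.enorm.const_mul _).aemeasurable hae
        _ = ENNReal.ofReal (32 * CK * ((2:ℝ) ^ ((j:ℝ)+(k:ℝ))) ^ (-(1+θ₁/2)) / ℓ^2)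
            * ∫⁻ u in (ann c.1 (3*ℓ/2) j ×ˢ ann c.2 (3*ℓ/2) k) ∩ (sqr c (3 * ℓ))ᶜ,
              (‖f u‖₊ : ℝ≥0∞) := lintegral_const_mul _ hf.enorm
        _ ≤ ENNReal.ofReal (32 * CK * ((2:ℝ) ^ ((j:ℝ)+(k:ℝ))) ^ (-(1+θ₁/2)) / ℓ^2)
            * ∫⁻ u in rect c (3*ℓ*2^j) (3*ℓ*2^k), (‖f u‖₊ : ℝ≥0∞) := by
            apply mul_le_mul_right
            apply lintegral_mono_set
            rintro u ⟨⟨hu1, hu2⟩, _⟩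
            have h1 := ann_subset _ _ _ hu1
            have h2 := ann_subset _ _ _ hu2
            simp only [Set.mem_setOf_eq] at h1 h2
            have e1 := abs_le.1 h1
            have e2 := abs_le.1 h2
            have q1 : 3*ℓ/2*2^j = 3*ℓ*2^j/2 := by ring
            have q2 : 3*ℓ/2*2^k = 3*ℓ*2^k/2 := by ring
            exact ⟨⟨by linarith [e1.1], by linarith [e1.2]⟩,
              ⟨by linarith [e2.1], by linarith [e2.2]⟩⟩
        _ ≤ ENNReal.ofReal (32 * CK * ((2:ℝ) ^ ((j:ℝ)+(k:ℝ))) ^ (-(1+θ₁/2)) / ℓ^2)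
            * (ENNReal.ofReal (3*ℓ*2^j) * ENNReal.ofReal (3*ℓ*2^k) * strongMax f x) :=
            mul_le_mul_right (max_bound f (by positivity) (by positivity) hxmem) _
        _ = ENNReal.ofReal (288 * CK * (r ^ j * r ^ k)) * strongMax f x := by
            rw [← ENNReal.ofReal_mul (by positivity : (0:ℝ) ≤ 3*ℓ*2^j), ← mul_assoc,
              ← ENNReal.ofReal_mul hβ0]
            congr 1
            rw [← gamma_calc (θ₁ := θ₁) hℓ CK j k]
            ring
  refine le_trans (ENNReal.tsum_le_tsum hterm) ?_
  have hsum : ∑' p : ℕ × ℕ, ENNReal.ofReal (288 * CK * (r ^ p.1 * r ^ p.2)) * strongMax f x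
      = ENNReal.ofReal (288 * CK * ((1 - r)⁻¹ * (1 - r)⁻¹)) * strongMax f x := by
    rw [ENNReal.tsum_mul_right]
    congr 1
    have hpt : ∀ p : ℕ × ℕ, ENNReal.ofReal (288 * CK * (r ^ p.1 * r ^ p.2))
        = ENNReal.ofReal (288 * CK) * (ENNReal.ofReal (r ^ p.1) * ENNReal.ofReal (r ^ p.2)) := by
      intro p
      rw [← ENNReal.ofReal_mul (by positivity), ← ENNReal.ofReal_mul (by positivity)]
    calc ∑' p : ℕ × ℕ, ENNReal.ofReal (288 * CK * (r ^ p.1 * r ^ p.2))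
        = ∑' p : ℕ × ℕ, ENNReal.ofReal (288 * CK)
            * (ENNReal.ofReal (r ^ p.1) * ENNReal.ofReal (r ^ p.2)) := by
          exact tsum_congr hpt
      _ = ∑' j : ℕ, ∑' k : ℕ, ENNReal.ofReal (288 * CK)
            * (ENNReal.ofReal (r ^ j) * ENNReal.ofReal (r ^ k)) :=
          ENNReal.tsum_prod (f := fun j k => ENNReal.ofReal (288 * CK)
            * (ENNReal.ofReal (r ^ j) * ENNReal.ofReal (r ^ k)))
      _ = ∑' j : ℕ, (ENNReal.ofReal (288 * CK) * ENNReal.ofReal (r ^ j))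
            * (∑' k : ℕ, ENNReal.ofReal (r ^ k)) := by
          apply tsum_congr
          intro j
          rw [← ENNReal.tsum_mul_left]
          apply tsum_congr
          intro k
          ring
      _ = ENNReal.ofReal (288 * CK)
            * ((∑' j : ℕ, ENNReal.ofReal (r ^ j)) * (∑' k : ℕ, ENNReal.ofReal (r ^ k))) := by
          rw [ENNReal.tsum_mul_right, ENNReal.tsum_mul_left, mul_assoc]
      _ = ENNReal.ofReal (288 * CK)
            * (ENNReal.ofReal ((1 - r)⁻¹) * ENNReal.ofReal ((1 - r)⁻¹)) := by
          rw [geo_sum hθ]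
      _ = ENNReal.ofReal (288 * CK * ((1 - r)⁻¹ * (1 - r)⁻¹)) := by
          rw [← ENNReal.ofReal_mul (by positivity), ← ENNReal.ofReal_mul (by positivity)]
  rw [hsum]
end
end
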